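/- arXiv:2105.00536 — 10 statements merged into one kernel-verified Lean document; each statement's English description precedes it below -/
import Mathlib

section
/- Let n = 2l ≥ 4 be even and let G be the n-dimensional real Lie algebra with basis {X1,…,Xn} and nonzero brackets [X3,X1]=X1 and [X_{3+2i},X_{4+2i}]=X2 for 0 ≤ i ≤ (n−4)/2 (this is G_{4,1} when n=4 and G_{6+2k,1} when n=6+2k). Then G admits a faithful representation of degree (3/2)n+1, i.e. there exists an injective Lie algebra homomorphism from G into the Lie algebra of ((3/2)n+1)×((3/2)n+1) real matrices; hence μ(G) ≤ (3/2)n+1. -/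
open Matrix

namespace Stmt3Aux

variable (m : ℕ)

/-- index into `Fin (3*m+7)` -/
def x (a : ℕ) : Fin (3*m+7) := ⟨a % (3*m+7), Nat.mod_lt _ (by omega)⟩

/-- elementary matrix -/
def E (a c : ℕ) : Matrix (Fin (3*m+7)) (Fin (3*m+7)) ℝ :=
  Matrix.single (x m a) (x m c) 1

lemma E_mul_eq (a c c' : ℕ) : E m a c * E m c c' = E m a c' := by
  rw [E, E, E, Matrix.single_mul_single_same, one_mul]

lemma E_mul_ne' (a c a' c' : ℕ) (h : c < 3*m+7) (h' : a' < 3*m+7) (hne : c ≠ a') :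
    E m a c * E m a' c' = 0 := by
  rw [E, E]
  have hx : x m c ≠ x m a' := by
    simp only [x, ne_eq, Fin.mk.injEq, Nat.mod_eq_of_lt h, Nat.mod_eq_of_lt h']
    exact hne
  exact Matrix.single_mul_single_of_ne _ _ _ _ hx 1

lemma E_apply (a c a' c' : ℕ) :
    E m a c (x m a') (x m c') =
      if a % (3*m+7) = a' % (3*m+7) ∧ c % (3*m+7) = c' % (3*m+7) then (1:ℝ) else 0 := by
  simp only [E, Matrix.single, Matrix.of_apply, x, Fin.mk.injEq]

/-- the representing matrices -/
def M (k : ℕ) : Matrix (Fin (3*m+7)) (Fin (3*m+7)) ℝ :=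
  if k = 0 then E m (m+3) (m+4)
  else if k = 1 then E m 0 (m+2)
  else if k = 2 then E m 0 1 + E m (m+3) (m+3)
  else if k % 2 = 0 then E m 0 (k/2)
  else E m (k/2) (m+2)

lemma M_zero : M m 0 = E m (m+3) (m+4) := by simp [M]
lemma M_one : M m 1 = E m 0 (m+2) := by simp [M]
lemma M_two : M m 2 = E m 0 1 + E m (m+3) (m+3) := by simp [M]
lemma M_even (k : ℕ) (h4 : 4 ≤ k) (he : k % 2 = 0) : M m k = E m 0 (k/2) := by
  rw [M, if_neg (by omega), if_neg (by omega), if_neg (by omega), if_pos he]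
lemma M_odd (k : ℕ) (h3 : 3 ≤ k) (ho : k % 2 = 1) : M m k = E m (k/2) (m+2) := by
  rw [M, if_neg (by omega), if_neg (by omega), if_neg (by omega), if_neg (by omega)]

lemma M_mul (i j : ℕ) (hi : i < 2*m+4) (hj : j < 2*m+4) :
    M m i * M m j =
      (if i = 2 ∧ j = 0 then M m 0 else 0) +
      (if 2 ≤ i ∧ i % 2 = 0 ∧ j = i + 1 then M m 1 else 0) +
      (if i = 2 ∧ j = 2 then E m (m+3) (m+3) else 0) := by
  obtain rfl | rfl | rfl | ⟨hi4, hie⟩ | ⟨hi3, hio⟩ :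
      i = 0 ∨ i = 1 ∨ i = 2 ∨ (4 ≤ i ∧ i % 2 = 0) ∨ (3 ≤ i ∧ i % 2 = 1) := by omega
  · obtain rfl | rfl | rfl | ⟨hj4, hje⟩ | ⟨hj3, hjo⟩ :
        j = 0 ∨ j = 1 ∨ j = 2 ∨ (4 ≤ j ∧ j % 2 = 0) ∨ (3 ≤ j ∧ j % 2 = 1) := by omega
    · rw [M_zero, E_mul_ne' m _ _ _ _ (by omega) (by omega) (by omega),
        if_neg (by omega), if_neg (by omega), if_neg (by omega)]; simp
    · rw [M_zero, M_one, E_mul_ne' m _ _ _ _ (by omega) (by omega) (by omega),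
        if_neg (by omega), if_neg (by omega), if_neg (by omega)]; simp
    · rw [M_zero, M_two, mul_add,
        E_mul_ne' m _ _ _ _ (by omega) (by omega) (by omega),
        E_mul_ne' m _ _ _ _ (by omega) (by omega) (by omega),
        if_neg (by omega), if_neg (by omega), if_neg (by omega)]; simp
    · rw [M_zero, M_even m j hj4 hje, E_mul_ne' m _ _ _ _ (by omega) (by omega) (by omega),
        if_neg (by omega), if_neg (by omega), if_neg (by omega)]; simp
    · rw [M_zero, M_odd m j hj3 hjo, E_mul_ne' m _ _ _ _ (by omega) (by omega) (by omega),
        if_neg (by omega), if_neg (by omega), if_neg (by omega)]; simp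
  · obtain rfl | rfl | rfl | ⟨hj4, hje⟩ | ⟨hj3, hjo⟩ :
        j = 0 ∨ j = 1 ∨ j = 2 ∨ (4 ≤ j ∧ j % 2 = 0) ∨ (3 ≤ j ∧ j % 2 = 1) := by omega
    · rw [M_one, M_zero, E_mul_ne' m _ _ _ _ (by omega) (by omega) (by omega),
        if_neg (by omega), if_neg (by omega), if_neg (by omega)]; simp
    · rw [M_one, E_mul_ne' m _ _ _ _ (by omega) (by omega) (by omega),
        if_neg (by omega), if_neg (by omega), if_neg (by omega)]; simp
    · rw [M_one, M_two, mul_add,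
        E_mul_ne' m _ _ _ _ (by omega) (by omega) (by omega),
        E_mul_ne' m _ _ _ _ (by omega) (by omega) (by omega),
        if_neg (by omega), if_neg (by omega), if_neg (by omega)]; simp
    · rw [M_one, M_even m j hj4 hje, E_mul_ne' m _ _ _ _ (by omega) (by omega) (by omega),
        if_neg (by omega), if_neg (by omega), if_neg (by omega)]; simp
    · rw [M_one, M_odd m j hj3 hjo, E_mul_ne' m _ _ _ _ (by omega) (by omega) (by omega),
        if_neg (by omega), if_neg (by omega), if_neg (by omega)]; simp
  · obtain rfl | rfl | rfl | ⟨hj4, hje⟩ | ⟨hj3, hjo⟩ :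
        j = 0 ∨ j = 1 ∨ j = 2 ∨ (4 ≤ j ∧ j % 2 = 0) ∨ (3 ≤ j ∧ j % 2 = 1) := by omega
    · rw [M_two, M_zero, add_mul,
        E_mul_ne' m _ _ _ _ (by omega) (by omega) (by omega),
        E_mul_eq, if_pos (by omega : (2:ℕ) = 2 ∧ (0:ℕ) = 0), if_neg (by omega),
        if_neg (by omega)]; simp
    · rw [M_two, M_one, add_mul,
        E_mul_ne' m _ _ _ _ (by omega) (by omega) (by omega),
        E_mul_ne' m _ _ _ _ (by omega) (by omega) (by omega),
        if_neg (by omega), if_neg (by omega), if_neg (by omega)]; simp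
    · rw [M_two, add_mul, mul_add, mul_add,
        E_mul_ne' m _ _ _ _ (by omega) (by omega) (by omega),
        E_mul_ne' m _ _ _ _ (by omega) (by omega) (by omega),
        E_mul_ne' m _ _ _ _ (by omega) (by omega) (by omega),
        E_mul_eq, if_neg (by omega), if_neg (by omega),
        if_pos (by omega : (2:ℕ) = 2 ∧ (2:ℕ) = 2)]; simp
    · rw [M_two, M_even m j hj4 hje, add_mul,
        E_mul_ne' m _ _ _ _ (by omega) (by omega) (by omega),
        E_mul_ne' m _ _ _ _ (by omega) (by omega) (by omega),
        if_neg (by omega), if_neg (by omega), if_neg (by omega)]; simp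
    · rw [M_two, M_odd m j hj3 hjo, add_mul]
      by_cases hj3' : j = 3
      · subst hj3'
        have h2 : (3:ℕ)/2 = 1 := by norm_num
        rw [h2, E_mul_eq, E_mul_ne' m _ _ _ _ (by omega) (by omega) (by omega),
          if_neg (by omega), if_pos (by omega : 2 ≤ 2 ∧ 2 % 2 = 0 ∧ (3:ℕ) = 2 + 1),
          if_neg (by omega), M_one]; simp
      · rw [E_mul_ne' m _ _ _ _ (by omega) (by omega) (by omega),
          E_mul_ne' m _ _ _ _ (by omega) (by omega) (by omega),
          if_neg (by omega), if_neg (by omega), if_neg (by omega)]; simp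
  · obtain rfl | rfl | rfl | ⟨hj4, hje⟩ | ⟨hj3, hjo⟩ :
        j = 0 ∨ j = 1 ∨ j = 2 ∨ (4 ≤ j ∧ j % 2 = 0) ∨ (3 ≤ j ∧ j % 2 = 1) := by omega
    · rw [M_even m i hi4 hie, M_zero, E_mul_ne' m _ _ _ _ (by omega) (by omega) (by omega),
        if_neg (by omega), if_neg (by omega), if_neg (by omega)]; simp
    · rw [M_even m i hi4 hie, M_one, E_mul_ne' m _ _ _ _ (by omega) (by omega) (by omega),
        if_neg (by omega), if_neg (by omega), if_neg (by omega)]; simp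
    · rw [M_even m i hi4 hie, M_two, mul_add,
        E_mul_ne' m _ _ _ _ (by omega) (by omega) (by omega),
        E_mul_ne' m _ _ _ _ (by omega) (by omega) (by omega),
        if_neg (by omega), if_neg (by omega), if_neg (by omega)]; simp
    · rw [M_even m i hi4 hie, M_even m j hj4 hje,
        E_mul_ne' m _ _ _ _ (by omega) (by omega) (by omega),
        if_neg (by omega), if_neg (by omega), if_neg (by omega)]; simp
    · rw [M_even m i hi4 hie, M_odd m j hj3 hjo]
      by_cases hij : j = i + 1
      · subst hij
        have h2 : (i+1)/2 = i/2 := by omega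
        rw [h2, E_mul_eq, if_neg (by omega),
          if_pos (⟨by omega, hie, rfl⟩ : 2 ≤ i ∧ i % 2 = 0 ∧ i + 1 = i + 1),
          if_neg (by omega), M_one]; simp
      · rw [E_mul_ne' m _ _ _ _ (by omega) (by omega) (by omega),
          if_neg (by omega), if_neg (by omega), if_neg (by omega)]; simp
  · obtain rfl | rfl | rfl | ⟨hj4, hje⟩ | ⟨hj3, hjo⟩ :
        j = 0 ∨ j = 1 ∨ j = 2 ∨ (4 ≤ j ∧ j % 2 = 0) ∨ (3 ≤ j ∧ j % 2 = 1) := by omega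
    · rw [M_odd m i hi3 hio, M_zero, E_mul_ne' m _ _ _ _ (by omega) (by omega) (by omega),
        if_neg (by omega), if_neg (by omega), if_neg (by omega)]; simp
    · rw [M_odd m i hi3 hio, M_one, E_mul_ne' m _ _ _ _ (by omega) (by omega) (by omega),
        if_neg (by omega), if_neg (by omega), if_neg (by omega)]; simp
    · rw [M_odd m i hi3 hio, M_two, mul_add,
        E_mul_ne' m _ _ _ _ (by omega) (by omega) (by omega),
        E_mul_ne' m _ _ _ _ (by omega) (by omega) (by omega),
        if_neg (by omega), if_neg (by omega), if_neg (by omega)]; simp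
    · rw [M_odd m i hi3 hio, M_even m j hj4 hje,
        E_mul_ne' m _ _ _ _ (by omega) (by omega) (by omega),
        if_neg (by omega), if_neg (by omega), if_neg (by omega)]; simp
    · rw [M_odd m i hi3 hio, M_odd m j hj3 hjo,
        E_mul_ne' m _ _ _ _ (by omega) (by omega) (by omega),
        if_neg (by omega), if_neg (by omega), if_neg (by omega)]; simp

lemma key (i j : ℕ) (hi : i < 2*m+4) (hj : j < 2*m+4) :
    M m i * M m j - M m j * M m i =
      (if i = 2 ∧ j = 0 then (1:ℝ) else if i = 0 ∧ j = 2 then -1 else 0) • M m 0 +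
      (if 2 ≤ i ∧ i % 2 = 0 ∧ j = i + 1 then (1:ℝ) else
       if 2 ≤ j ∧ j % 2 = 0 ∧ i = j + 1 then -1 else 0) • M m 1 := by
  rw [M_mul m i j hi hj, M_mul m j i hj hi]
  split_ifs <;> first
    | omega
    | simp
    | (exfalso; omega)

lemma E_apply' (a c a' c' : ℕ) (ha : a < 3*m+7) (hc : c < 3*m+7)
    (ha' : a' < 3*m+7) (hc' : c' < 3*m+7) :
    E m a c (x m a') (x m c') = if a = a' ∧ c = c' then (1:ℝ) else 0 := by
  rw [E_apply, Nat.mod_eq_of_lt ha, Nat.mod_eq_of_lt hc,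
    Nat.mod_eq_of_lt ha', Nat.mod_eq_of_lt hc']

lemma M_entry0 (k' : ℕ) (hk' : k' < 2*m+4) :
    M m k' (x m (m+3)) (x m (m+4)) = if k' = 0 then (1:ℝ) else 0 := by
  obtain rfl | rfl | rfl | ⟨h4, he⟩ | ⟨h3, ho⟩ :
      k' = 0 ∨ k' = 1 ∨ k' = 2 ∨ (4 ≤ k' ∧ k' % 2 = 0) ∨ (3 ≤ k' ∧ k' % 2 = 1) := by omega
  · rw [M_zero, E_apply' m _ _ _ _ (by omega) (by omega) (by omega) (by omega)]
    split_ifs <;> first | rfl | omega | simp_all | norm_num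
  · rw [M_one, E_apply' m _ _ _ _ (by omega) (by omega) (by omega) (by omega)]
    split_ifs <;> first | rfl | omega | simp_all | norm_num
  · rw [M_two, Matrix.add_apply,
      E_apply' m _ _ _ _ (by omega) (by omega) (by omega) (by omega),
      E_apply' m _ _ _ _ (by omega) (by omega) (by omega) (by omega)]
    split_ifs <;> first | rfl | omega | simp_all | norm_num
  · rw [M_even m k' h4 he, E_apply' m _ _ _ _ (by omega) (by omega) (by omega) (by omega)]
    split_ifs <;> first | rfl | omega | simp_all | norm_num
  · rw [M_odd m k' h3 ho, E_apply' m _ _ _ _ (by omega) (by omega) (by omega) (by omega)]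
    split_ifs <;> first | rfl | omega | simp_all | norm_num

lemma M_entry1 (k' : ℕ) (hk' : k' < 2*m+4) :
    M m k' (x m 0) (x m (m+2)) = if k' = 1 then (1:ℝ) else 0 := by
  obtain rfl | rfl | rfl | ⟨h4, he⟩ | ⟨h3, ho⟩ :
      k' = 0 ∨ k' = 1 ∨ k' = 2 ∨ (4 ≤ k' ∧ k' % 2 = 0) ∨ (3 ≤ k' ∧ k' % 2 = 1) := by omega
  · rw [M_zero, E_apply' m _ _ _ _ (by omega) (by omega) (by omega) (by omega)]
    split_ifs <;> first | rfl | omega | simp_all | norm_num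
  · rw [M_one, E_apply' m _ _ _ _ (by omega) (by omega) (by omega) (by omega)]
    split_ifs <;> first | rfl | omega | simp_all | norm_num
  · rw [M_two, Matrix.add_apply,
      E_apply' m _ _ _ _ (by omega) (by omega) (by omega) (by omega),
      E_apply' m _ _ _ _ (by omega) (by omega) (by omega) (by omega)]
    split_ifs <;> first | rfl | omega | simp_all | norm_num
  · rw [M_even m k' h4 he, E_apply' m _ _ _ _ (by omega) (by omega) (by omega) (by omega)]
    split_ifs <;> first | rfl | omega | simp_all | norm_num
  · rw [M_odd m k' h3 ho, E_apply' m _ _ _ _ (by omega) (by omega) (by omega) (by omega)]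
    split_ifs <;> first | rfl | omega | simp_all | norm_num

lemma M_entry2 (k' : ℕ) (hk' : k' < 2*m+4) :
    M m k' (x m (m+3)) (x m (m+3)) = if k' = 2 then (1:ℝ) else 0 := by
  obtain rfl | rfl | rfl | ⟨h4, he⟩ | ⟨h3, ho⟩ :
      k' = 0 ∨ k' = 1 ∨ k' = 2 ∨ (4 ≤ k' ∧ k' % 2 = 0) ∨ (3 ≤ k' ∧ k' % 2 = 1) := by omega
  · rw [M_zero, E_apply' m _ _ _ _ (by omega) (by omega) (by omega) (by omega)]
    split_ifs <;> first | rfl | omega | simp_all | norm_num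
  · rw [M_one, E_apply' m _ _ _ _ (by omega) (by omega) (by omega) (by omega)]
    split_ifs <;> first | rfl | omega | simp_all | norm_num
  · rw [M_two, Matrix.add_apply,
      E_apply' m _ _ _ _ (by omega) (by omega) (by omega) (by omega),
      E_apply' m _ _ _ _ (by omega) (by omega) (by omega) (by omega)]
    split_ifs <;> first | rfl | omega | simp_all | norm_num
  · rw [M_even m k' h4 he, E_apply' m _ _ _ _ (by omega) (by omega) (by omega) (by omega)]
    split_ifs <;> first | rfl | omega | simp_all | norm_num
  · rw [M_odd m k' h3 ho, E_apply' m _ _ _ _ (by omega) (by omega) (by omega) (by omega)]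
    split_ifs <;> first | rfl | omega | simp_all | norm_num

lemma M_entry_even (k k' : ℕ) (hk : k < 2*m+4) (hk4 : 4 ≤ k) (hke : k % 2 = 0)
    (hk' : k' < 2*m+4) :
    M m k' (x m 0) (x m (k/2)) = if k' = k then (1:ℝ) else 0 := by
  obtain rfl | rfl | rfl | ⟨h4, he⟩ | ⟨h3, ho⟩ :
      k' = 0 ∨ k' = 1 ∨ k' = 2 ∨ (4 ≤ k' ∧ k' % 2 = 0) ∨ (3 ≤ k' ∧ k' % 2 = 1) := by omega
  · rw [M_zero, E_apply' m _ _ _ _ (by omega) (by omega) (by omega) (by omega)]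
    split_ifs <;> first | rfl | omega | simp_all | norm_num
  · rw [M_one, E_apply' m _ _ _ _ (by omega) (by omega) (by omega) (by omega)]
    split_ifs <;> first | rfl | omega | simp_all | norm_num
  · rw [M_two, Matrix.add_apply,
      E_apply' m _ _ _ _ (by omega) (by omega) (by omega) (by omega),
      E_apply' m _ _ _ _ (by omega) (by omega) (by omega) (by omega)]
    split_ifs <;> first | rfl | omega | simp_all | norm_num
  · rw [M_even m k' h4 he, E_apply' m _ _ _ _ (by omega) (by omega) (by omega) (by omega)]
    split_ifs <;> first | rfl | omega | simp_all | norm_num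
  · rw [M_odd m k' h3 ho, E_apply' m _ _ _ _ (by omega) (by omega) (by omega) (by omega)]
    split_ifs <;> first | rfl | omega | simp_all | norm_num

lemma M_entry_odd (k k' : ℕ) (hk : k < 2*m+4) (hk3 : 3 ≤ k) (hko : k % 2 = 1)
    (hk' : k' < 2*m+4) :
    M m k' (x m (k/2)) (x m (m+2)) = if k' = k then (1:ℝ) else 0 := by
  obtain rfl | rfl | rfl | ⟨h4, he⟩ | ⟨h3, ho⟩ :
      k' = 0 ∨ k' = 1 ∨ k' = 2 ∨ (4 ≤ k' ∧ k' % 2 = 0) ∨ (3 ≤ k' ∧ k' % 2 = 1) := by omega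
  · rw [M_zero, E_apply' m _ _ _ _ (by omega) (by omega) (by omega) (by omega)]
    split_ifs <;> first | rfl | omega | simp_all | norm_num
  · rw [M_one, E_apply' m _ _ _ _ (by omega) (by omega) (by omega) (by omega)]
    split_ifs <;> first | rfl | omega | simp_all | norm_num
  · rw [M_two, Matrix.add_apply,
      E_apply' m _ _ _ _ (by omega) (by omega) (by omega) (by omega),
      E_apply' m _ _ _ _ (by omega) (by omega) (by omega) (by omega)]
    split_ifs <;> first | rfl | omega | simp_all | norm_num
  · rw [M_even m k' h4 he, E_apply' m _ _ _ _ (by omega) (by omega) (by omega) (by omega)]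
    split_ifs <;> first | rfl | omega | simp_all | norm_num
  · rw [M_odd m k' h3 ho, E_apply' m _ _ _ _ (by omega) (by omega) (by omega) (by omega)]
    split_ifs <;> first | rfl | omega | simp_all | norm_num

/-- position whose entry extracts coefficient `k` -/
def P (k : ℕ) : ℕ × ℕ :=
  if k = 0 then (m+3, m+4) else if k = 1 then (0, m+2) else if k = 2 then (m+3, m+3)
  else if k % 2 = 0 then (0, k/2) else (k/2, m+2)

lemma M_entry (k k' : ℕ) (hk : k < 2*m+4) (hk' : k' < 2*m+4) :
    M m k' (x m (P m k).1) (x m (P m k).2) = if k' = k then (1:ℝ) else 0 := by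
  obtain rfl | rfl | rfl | ⟨h4, he⟩ | ⟨h3, ho⟩ :
      k = 0 ∨ k = 1 ∨ k = 2 ∨ (4 ≤ k ∧ k % 2 = 0) ∨ (3 ≤ k ∧ k % 2 = 1) := by omega
  · have hP : P m 0 = (m+3, m+4) := by simp [P]
    rw [hP]; exact M_entry0 m k' hk'
  · have hP : P m 1 = (0, m+2) := by simp [P]
    rw [hP]; exact M_entry1 m k' hk'
  · have hP : P m 2 = (m+3, m+3) := by simp [P]
    rw [hP]; exact M_entry2 m k' hk'
  · have hP : P m k = (0, k/2) := by
      rw [P, if_neg (by omega), if_neg (by omega), if_neg (by omega), if_pos he]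
    rw [hP]; exact M_entry_even m k k' hk h4 he hk'
  · have hP : P m k = (k/2, m+2) := by
      rw [P, if_neg (by omega), if_neg (by omega), if_neg (by omega), if_neg (by omega)]
    rw [hP]; exact M_entry_odd m k k' hk h3 ho hk'

lemma sum_entry_zero (c : Fin (2*m+4) → ℝ)
    (h : ∑ k' : Fin (2*m+4), c k' • M m k'.val = 0) (k : Fin (2*m+4)) : c k = 0 := by
  have h' := congrArg (fun A => A (x m (P m k.val).1) (x m (P m k.val).2)) h
  simp only [Matrix.sum_apply, Matrix.smul_apply, Matrix.zero_apply] at h'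
  have heq : ∀ k' : Fin (2*m+4),
      c k' • (M m k'.val) (x m (P m k.val).1) (x m (P m k.val).2)
        = if k' = k then c k' else 0 := by
    intro k'
    rw [M_entry m k.val k'.val k.isLt k'.isLt]
    simp only [smul_eq_mul, mul_ite, mul_one, mul_zero, Fin.val_inj]
  rw [Finset.sum_congr rfl (fun k' _ => heq k')] at h'
  simpa using h'

end Stmt3Aux


attribute [local instance] LieRing.ofAssociativeRing LieAlgebra.ofAssociativeAlgebra

/-- for even `n = 2l ≥ 4` (here written `n = 2m+4`, `l = m+2`), the
`n`-dimensional real Lie algebra `G` with basis `X1,…,Xn` and nonzero brackets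
`[X3,X1]=X1`, `[X_{3+2i},X_{4+2i}]=X2` (`0 ≤ i ≤ (n−4)/2`) admits a faithful
representation of degree `(3/2)n+1 = 3m+7`; hence `μ(G) ≤ (3/2)n+1`. -/
theorem stmt_3 (m : ℕ) (L : Type) [LieRing L] [LieAlgebra ℝ L]
    (b : Module.Basis (Fin (2*m+4)) ℝ L)
    (hbracket : ∀ i j : Fin (2*m+4), ⁅b i, b j⁆ =
      (if i.val = 2 ∧ j.val = 0 then (1:ℝ) else
       if i.val = 0 ∧ j.val = 2 then -1 else 0) • b 0 +
      (if 2 ≤ i.val ∧ i.val % 2 = 0 ∧ j.val = i.val + 1 then (1:ℝ) else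
       if 2 ≤ j.val ∧ j.val % 2 = 0 ∧ i.val = j.val + 1 then -1 else 0) • b 1) :
    ∃ ρ : L →ₗ⁅ℝ⁆ Module.End ℝ (Fin (3*m+7) → ℝ), Function.Injective ρ := by
  classical
  have h0 : ((0 : Fin (2*m+4)) : ℕ) = 0 := by
    simp [Fin.val_zero]
  have h1 : ((1 : Fin (2*m+4)) : ℕ) = 1 := by
    simp [Fin.val_one']
  let f : L →ₗ[ℝ] Matrix (Fin (3*m+7)) (Fin (3*m+7)) ℝ :=
    b.constr ℝ (fun k => Stmt3Aux.M m k.val)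
  let g : L →ₗ[ℝ] Module.End ℝ (Fin (3*m+7) → ℝ) :=
    (Matrix.toLinAlgEquiv' (n := Fin (3*m+7)) (R := ℝ)).toLinearMap.comp f
  have hval : ∀ i : Fin (2*m+4), f (b i) = Stmt3Aux.M m i.val :=
    fun i => b.constr_basis ℝ _ i
  have hbasis : ∀ i j : Fin (2*m+4),
      f ⁅b i, b j⁆ = f (b i) * f (b j) - f (b j) * f (b i) := by
    intro i j
    rw [hbracket i j, map_add, _root_.map_smul, _root_.map_smul, hval, hval, hval, hval, h0, h1,
      Stmt3Aux.key m i.val j.val i.isLt j.isLt]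
  have hgb : ∀ i j : Fin (2*m+4), g ⁅b i, b j⁆ = ⁅g (b i), g (b j)⁆ := by
    intro i j
    show Matrix.toLinAlgEquiv' (f ⁅b i, b j⁆) = _
    rw [hbasis, Ring.lie_def, map_sub, _root_.map_mul, _root_.map_mul]
    rfl
  -- bilinearity: upgrade to all x y
  let B1 : L →ₗ[ℝ] L →ₗ[ℝ] Module.End ℝ (Fin (3*m+7) → ℝ) :=
    LinearMap.mk₂ ℝ (fun x y => g ⁅x, y⁆)
      (fun x x' y => by simp only [add_lie, map_add])
      (fun t x y => by simp only [smul_lie, _root_.map_smul])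
      (fun x y y' => by simp only [lie_add, map_add])
      (fun t x y => by simp only [lie_smul, _root_.map_smul])
  let B2 : L →ₗ[ℝ] L →ₗ[ℝ] Module.End ℝ (Fin (3*m+7) → ℝ) :=
    LinearMap.mk₂ ℝ (fun x y => ⁅g x, g y⁆)
      (fun x x' y => by simp only [map_add, add_lie])
      (fun t x y => by simp only [_root_.map_smul, Ring.lie_def, smul_sub, smul_mul_assoc, mul_smul_comm])
      (fun x y y' => by simp only [map_add, lie_add])
      (fun t x y => by simp only [_root_.map_smul, Ring.lie_def, smul_sub, smul_mul_assoc, mul_smul_comm])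
  have hB : B1 = B2 := by
    apply b.ext; intro i
    apply b.ext; intro j
    exact hgb i j
  have hg : ∀ x y : L, g ⁅x, y⁆ = ⁅g x, g y⁆ := by
    intro x y
    have := congrArg (fun F => F x y) hB
    simpa [B1, B2] using this
  refine ⟨{ toLinearMap := g, map_lie' := fun {x y} => hg x y }, ?_⟩
  -- injectivity
  have hker : ∀ w : L, g w = 0 → w = 0 := by
    intro w hw
    have hf : f w = 0 := by
      apply Matrix.toLinAlgEquiv'.injective
      rw [map_zero]; exact hw
    have hFw : (∑ k' : Fin (2*m+4), b.repr w k' • Stmt3Aux.M m k'.val) = 0 := by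
      rw [← hf]
      rw [show f w = _ from b.constr_apply_fintype ℝ _ w]
      simp [Module.Basis.equivFun_apply]
    have hrepr : ∀ k : Fin (2*m+4), b.repr w k = 0 :=
      Stmt3Aux.sum_entry_zero m _ hFw
    have : b.repr w = 0 := by ext k; simpa using hrepr k
    simpa using b.repr.map_eq_zero_iff.mp this
  intro u v huv
  have : g (u - v) = 0 := by
    rw [map_sub, sub_eq_zero]
    exact huv
  exact sub_eq_zero.mp (hker _ this)
end

section
/- For each of the following real Lie algebras G and for every X ∈ G, the operator ad_X : G → G has no nonzero purely imaginary complex eigenvalue; that is, no root of the characteristic polynomial of ad_X (over ℂ) has the form iy with y a nonzero real number. The algebras are: G_{3,1(λ)} ([X3,X1]=X1, [X3,X2]=λX2, 0<|λ|≤1); G_{3,2} ([X3,X1]=X1, [X3,X2]=X1+X2); G_{3,3(λ)} with λ>0 ([X3,X1]=λX1−X2, [X3,X2]=X1+λX2); G_{4,1} ([X3,X1]=X1, [X3,X4]=X2); G_{4,2} ([X3,X2]=X1, [X3,X4]=X2); G_{4,3} ([X3,X2]=X1, [X4,X1]=X1, [X4,X2]=X2); G_{5+2k} ([X3,X4]=X1,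 [X3,X1]=[X4,X5]=⋯=[X_{4+2k},X_{5+2k}]=X2); G_{6+2k,1} ([X3,X1]=X1, [X3,X4]=[X5,X6]=⋯=[X_{5+2k},X_{6+2k}]=X2); G_{6+2k,2} ([X3,X4]=X1, [X3,X1]=[X5,X6]=⋯=[X_{5+2k},X_{6+2k}]=X2), with k≥0. -/
/-- For a real Lie algebra `L` with basis `b`, no `ad_X` has a nonzero purely imaginary
complex eigenvalue: no root of the characteristic polynomial (over `ℂ`) of the matrix of
`ad_X` in the basis `b` has the form `i·y` with `y` a nonzero real number. -/
def NoPurelyImaginaryEigenvalues {n : ℕ} (L : Type) [LieRing L] [LieAlgebra ℝ L]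
    (b : Module.Basis (Fin n) ℝ L) : Prop :=
  ∀ X : L, ∀ y : ℝ, y ≠ 0 →
    ¬ ((((LinearMap.toMatrix b b) (LieAlgebra.ad ℝ L X)).map
        (algebraMap ℝ ℂ)).charpoly.IsRoot (Complex.I * y))


section AuxStmt7

open Polynomial Matrix

private lemma aux7_eval_charpoly_det {n : ℕ} (M : Matrix (Fin n) (Fin n) ℂ) (z : ℂ) :
    M.charpoly.eval z = (Matrix.diagonal (fun _ => z) - M).det := by
  rw [Matrix.charpoly, ← Polynomial.coe_evalRingHom, RingHom.map_det]
  congr 1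
  ext i j
  by_cases h : i = j <;>
    simp [h, charmatrix_apply_eq, charmatrix_apply_ne, Matrix.map_apply, Matrix.diagonal]

private lemma aux7_key {n : ℕ} [NeZero n] (hn : 2 ≤ n)
    (M : Matrix (Fin n) (Fin n) ℂ)
    (h2 : ∀ i j : Fin n, 2 ≤ (i : ℕ) → M i j = 0)
    (z : ℂ) (hz : z ≠ 0) (hroot : M.charpoly.IsRoot z) :
    (z - M 0 0) * (z - M 1 1) = M 0 1 * M 1 0 := by
  have h0v : ((0 : Fin n) : ℕ) = 0 := Fin.val_zero n
  have h1v : ((1 : Fin n) : ℕ) = 1 := by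
    rw [Fin.val_one']; exact Nat.mod_eq_of_lt (by omega)
  have h01 : (0 : Fin n) ≠ 1 := by
    intro h; rw [Fin.ext_iff, h0v, h1v] at h; omega
  rw [Polynomial.IsRoot, aux7_eval_charpoly_det] at hroot
  obtain ⟨v, hv, hMv⟩ := Matrix.exists_mulVec_eq_zero_iff.mpr hroot
  have row : ∀ i, z * v i = ∑ j, M i j * v j := by
    intro i
    have := congrFun hMv i
    rw [Pi.zero_apply, Matrix.sub_mulVec, Pi.sub_apply, sub_eq_zero,
      Matrix.mulVec_diagonal] at this
    rw [this]
    simp [Matrix.mulVec, dotProduct]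
  have hvi : ∀ i : Fin n, 2 ≤ (i : ℕ) → v i = 0 := by
    intro i hi
    have hr := row i
    rw [Finset.sum_eq_zero (fun j _ => by rw [h2 i j hi, zero_mul])] at hr
    exact (mul_eq_zero.mp hr).resolve_left hz
  have hsum : ∀ i : Fin n, ∑ j, M i j * v j = M i 0 * v 0 + M i 1 * v 1 := by
    intro i
    rw [← Finset.sum_subset (Finset.subset_univ {0, 1})]
    · rw [Finset.sum_pair h01]
    · intro j _ hj
      simp only [Finset.mem_insert, Finset.mem_singleton, not_or] at hj
      have hj2 : 2 ≤ (j : ℕ) := by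
        rcases hj with ⟨hj0, hj1⟩
        have e0 : (j : ℕ) ≠ 0 := fun h => hj0 (Fin.ext (by rw [h, h0v]))
        have e1 : (j : ℕ) ≠ 1 := fun h => hj1 (Fin.ext (by rw [h, h1v]))
        omega
      rw [hvi j hj2, mul_zero]
  have e0 : (z - M 0 0) * v 0 = M 0 1 * v 1 := by
    have hr := row 0; rw [hsum 0] at hr; linear_combination hr
  have e1 : (z - M 1 1) * v 1 = M 1 0 * v 0 := by
    have hr := row 1; rw [hsum 1] at hr; linear_combination hr
  have hv01 : v 0 ≠ 0 ∨ v 1 ≠ 0 := by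
    by_contra hc
    push_neg at hc
    apply hv
    funext i
    rcases Nat.lt_or_ge (i : ℕ) 2 with hi | hi
    · have : i = 0 ∨ i = 1 := by
        rcases (by omega : (i : ℕ) = 0 ∨ (i : ℕ) = 1) with h | h
        · exact Or.inl (Fin.ext (by rw [h, h0v]))
        · exact Or.inr (Fin.ext (by rw [h, h1v]))
      rcases this with h | h <;> rw [h] <;> [exact hc.1; exact hc.2]
    · exact hvi i hi
  by_cases hv0 : v 0 = 0
  · have hv1 : v 1 ≠ 0 := hv01.resolve_left (fun h => h hv0)
    rw [hv0, mul_zero] at e0 e1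
    have hM01 : M 0 1 = 0 := ((mul_eq_zero.mp e0.symm).resolve_right hv1)
    have hz1 : z - M 1 1 = 0 := ((mul_eq_zero.mp e1).resolve_right hv1)
    rw [hM01, hz1, mul_zero, zero_mul]
  · by_cases hv1 : v 1 = 0
    · rw [hv1, mul_zero] at e0 e1
      have hM10 : M 1 0 = 0 := ((mul_eq_zero.mp e1.symm).resolve_right hv0)
      have hz0 : z - M 0 0 = 0 := ((mul_eq_zero.mp e0).resolve_right hv0)
      rw [hM10, hz0, zero_mul, mul_zero]
    · have hmul : ((z - M 0 0) * (z - M 1 1)) * (v 0 * v 1)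
          = (M 0 1 * M 1 0) * (v 0 * v 1) := by
        calc ((z - M 0 0) * (z - M 1 1)) * (v 0 * v 1)
            = ((z - M 0 0) * v 0) * ((z - M 1 1) * v 1) := by ring
          _ = (M 0 1 * v 1) * (M 1 0 * v 0) := by rw [e0, e1]
          _ = (M 0 1 * M 1 0) * (v 0 * v 1) := by ring
      exact mul_right_cancel₀ (mul_ne_zero hv0 hv1) hmul

attribute [local instance] LieRing.ofAssociativeRing
attribute [local instance] LieAlgebra.ofAssociativeAlgebra

private lemma aux7_lie_decomp {n : ℕ} {L : Type} [LieRing L] [LieAlgebra ℝ L]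
    (b : Module.Basis (Fin n) ℝ L) (X Y : L) :
    ⁅X, Y⁆ = ∑ i, b.repr X i • ⁅b i, Y⁆ := by
  calc ⁅X, Y⁆ = ((LieAlgebra.ad ℝ L).toLinearMap X) Y := by
        rw [LieHom.coe_toLinearMap, LieAlgebra.ad_apply]
    _ = ((LieAlgebra.ad ℝ L).toLinearMap (∑ i, b.repr X i • b i)) Y := by
        rw [b.sum_repr X]
    _ = ∑ i, b.repr X i • ⁅b i, Y⁆ := by
        rw [map_sum]
        simp [LinearMap.sum_apply, LieAlgebra.ad_apply]

private lemma aux7_bridge {n : ℕ} [NeZero n] (hn : 2 ≤ n) {L : Type} [LieRing L]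
    [LieAlgebra ℝ L] (b : Module.Basis (Fin n) ℝ L) (X : L) (p q : Fin n → ℝ)
    (hcol : ∀ j, ⁅X, b j⁆ = p j • b 0 + q j • b 1)
    (y : ℝ) (hy : y ≠ 0)
    (hroot : (((LinearMap.toMatrix b b) (LieAlgebra.ad ℝ L X)).map
        (algebraMap ℝ ℂ)).charpoly.IsRoot (Complex.I * y)) :
    (Complex.I * y - (p 0 : ℂ)) * (Complex.I * y - (q 1 : ℂ)) = (p 1 : ℂ) * (q 0 : ℂ) := by
  have h0v : ((0 : Fin n) : ℕ) = 0 := Fin.val_zero n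
  have h1v : ((1 : Fin n) : ℕ) = 1 := by
    rw [Fin.val_one']; exact Nat.mod_eq_of_lt (by omega)
  have h01 : (0 : Fin n) ≠ 1 := by
    intro h; rw [Fin.ext_iff, h0v, h1v] at h; omega
  have hM : ∀ i j : Fin n, (LinearMap.toMatrix b b) (LieAlgebra.ad ℝ L X) i j
      = (if 0 = i then p j else 0) + (if 1 = i then q j else 0) := by
    intro i j
    rw [LinearMap.toMatrix_apply, LieAlgebra.ad_apply, hcol j]
    simp [Finsupp.single_apply]
  set M := (((LinearMap.toMatrix b b) (LieAlgebra.ad ℝ L X)).map (algebraMap ℝ ℂ)) with hMdef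
  have h2 : ∀ i j : Fin n, 2 ≤ (i : ℕ) → M i j = 0 := by
    intro i j hi
    have hi0 : (0 : Fin n) ≠ i := fun h => by rw [← h, h0v] at hi; omega
    have hi1 : (1 : Fin n) ≠ i := fun h => by rw [← h, h1v] at hi; omega
    simp [hMdef, Matrix.map_apply, hM, hi0, hi1]
  have hM00 : M 0 0 = (p 0 : ℂ) := by
    simp [hMdef, Matrix.map_apply, hM, h01.symm]
  have hM01 : M 0 1 = (p 1 : ℂ) := by
    simp [hMdef, Matrix.map_apply, hM, h01.symm]
  have hM10 : M 1 0 = (q 0 : ℂ) := by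
    simp [hMdef, Matrix.map_apply, hM, h01]
  have hM11 : M 1 1 = (q 1 : ℂ) := by
    simp [hMdef, Matrix.map_apply, hM, h01]
  have hz : Complex.I * y ≠ 0 :=
    mul_ne_zero Complex.I_ne_zero (by exact_mod_cast hy)
  have hk := aux7_key hn M h2 _ hz hroot
  rwa [hM00, hM01, hM10, hM11] at hk

private lemma aux7_imaginary_ne_real (y : ℝ) (hy : y ≠ 0) (r : ℝ) :
    Complex.I * y ≠ (r : ℂ) := by
  intro h
  have := congrArg Complex.im h
  simp at this
  exact hy this

private lemma aux7_no_im_prod {y : ℝ} (hy : y ≠ 0) {r s : ℝ}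
    (h : (Complex.I * y - (r : ℂ)) * (Complex.I * y - (s : ℂ)) = 0) : False := by
  rcases mul_eq_zero.mp h with h | h <;>
    exact aux7_imaginary_ne_real y hy _ (sub_eq_zero.mp h)

private lemma aux7_g33_contra (y c lam : ℝ) (hy : y ≠ 0) (hlam : 0 < lam)
    (h : (Complex.I * y - ((c * lam : ℝ) : ℂ)) * (Complex.I * y - ((c * lam : ℝ) : ℂ))
      = (c : ℂ) * ((-c : ℝ) : ℂ)) : False := by
  have him := congrArg Complex.im h
  have hre := congrArg Complex.re h
  simp only [Complex.mul_im, Complex.mul_re, Complex.sub_re, Complex.sub_im,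
    Complex.ofReal_re, Complex.ofReal_im, Complex.I_re, Complex.I_im,
    Complex.ofReal_neg, Complex.neg_re, Complex.neg_im] at him hre
  ring_nf at him hre
  have h1 : y * c * lam = 0 := by linarith
  have h2 : y * c = 0 := (mul_eq_zero.mp h1).resolve_right (ne_of_gt hlam)
  have hc : c = 0 := (mul_eq_zero.mp h2).resolve_left hy
  rw [hc] at hre
  exact hy (by nlinarith)

end AuxStmt7

/-- for each of the Lie algebras `G_{3,1(λ)}` (`0<|λ|≤1`), `G_{3,2}`,
`G_{3,3(λ)}` (`λ>0`), `G_{4,1}`, `G_{4,2}`, `G_{4,3}`, `G_{5+2k}`, `G_{6+2k,1}`,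
`G_{6+2k,2}` (`k≥0`) and every element `X`, the operator `ad_X` has no nonzero purely
imaginary complex eigenvalue. -/
theorem stmt_7 :
    -- G_{3,1(λ)}: [X3,X1]=X1, [X3,X2]=λX2, 0<|λ|≤1
    (∀ (lam : ℝ), 0 < |lam| → |lam| ≤ 1 →
      ∀ (L : Type) [LieRing L] [LieAlgebra ℝ L] (b : Module.Basis (Fin 3) ℝ L),
        ⁅b 2, b 0⁆ = b 0 → ⁅b 2, b 1⁆ = lam • b 1 → ⁅b 0, b 1⁆ = 0 →
          NoPurelyImaginaryEigenvalues L b) ∧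
    -- G_{3,2}: [X3,X1]=X1, [X3,X2]=X1+X2
    (∀ (L : Type) [LieRing L] [LieAlgebra ℝ L] (b : Module.Basis (Fin 3) ℝ L),
        ⁅b 2, b 0⁆ = b 0 → ⁅b 2, b 1⁆ = b 0 + b 1 → ⁅b 0, b 1⁆ = 0 →
          NoPurelyImaginaryEigenvalues L b) ∧
    -- G_{3,3(λ)} with λ>0: [X3,X1]=λX1−X2, [X3,X2]=X1+λX2
    (∀ (lam : ℝ), 0 < lam →
      ∀ (L : Type) [LieRing L] [LieAlgebra ℝ L] (b : Module.Basis (Fin 3) ℝ L),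
        ⁅b 2, b 0⁆ = lam • b 0 - b 1 → ⁅b 2, b 1⁆ = b 0 + lam • b 1 → ⁅b 0, b 1⁆ = 0 →
          NoPurelyImaginaryEigenvalues L b) ∧
    -- G_{4,1}: [X3,X1]=X1, [X3,X4]=X2
    (∀ (L : Type) [LieRing L] [LieAlgebra ℝ L] (b : Module.Basis (Fin 4) ℝ L),
        ⁅b 2, b 0⁆ = b 0 → ⁅b 2, b 3⁆ = b 1 → ⁅b 2, b 1⁆ = 0 →
        ⁅b 0, b 1⁆ = 0 → ⁅b 0, b 3⁆ = 0 → ⁅b 1, b 3⁆ = 0 →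
          NoPurelyImaginaryEigenvalues L b) ∧
    -- G_{4,2}: [X3,X2]=X1, [X3,X4]=X2
    (∀ (L : Type) [LieRing L] [LieAlgebra ℝ L] (b : Module.Basis (Fin 4) ℝ L),
        ⁅b 2, b 1⁆ = b 0 → ⁅b 2, b 3⁆ = b 1 → ⁅b 2, b 0⁆ = 0 →
        ⁅b 0, b 1⁆ = 0 → ⁅b 0, b 3⁆ = 0 → ⁅b 1, b 3⁆ = 0 →
          NoPurelyImaginaryEigenvalues L b) ∧
    -- G_{4,3}: [X3,X2]=X1, [X4,X1]=X1, [X4,X2]=X2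
    (∀ (L : Type) [LieRing L] [LieAlgebra ℝ L] (b : Module.Basis (Fin 4) ℝ L),
        ⁅b 2, b 1⁆ = b 0 → ⁅b 3, b 0⁆ = b 0 → ⁅b 3, b 1⁆ = b 1 →
        ⁅b 0, b 1⁆ = 0 → ⁅b 2, b 0⁆ = 0 → ⁅b 2, b 3⁆ = 0 →
          NoPurelyImaginaryEigenvalues L b) ∧
    -- G_{5+2k}: [X3,X4]=X1, [X3,X1]=[X4,X5]=⋯=[X_{4+2k},X_{5+2k}]=X2
    (∀ (k : ℕ) (L : Type) [LieRing L] [LieAlgebra ℝ L] (b : Module.Basis (Fin (2*k+5)) ℝ L),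
        (∀ i j : Fin (2*k+5), ⁅b i, b j⁆ =
          (if i.val = 2 ∧ j.val = 3 then (1:ℝ) else
           if i.val = 3 ∧ j.val = 2 then -1 else 0) • b 0 +
          (if i.val = 2 ∧ j.val = 0 then (1:ℝ) else
           if i.val = 0 ∧ j.val = 2 then -1 else
           if 3 ≤ i.val ∧ i.val % 2 = 1 ∧ j.val = i.val + 1 then 1 else
           if 3 ≤ j.val ∧ j.val % 2 = 1 ∧ i.val = j.val + 1 then -1 else 0) • b 1) →
          NoPurelyImaginaryEigenvalues L b) ∧
    -- G_{6+2k,1}: [X3,X1]=X1, [X3,X4]=[X5,X6]=⋯=[X_{5+2k},X_{6+2k}]=X2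
    (∀ (k : ℕ) (L : Type) [LieRing L] [LieAlgebra ℝ L] (b : Module.Basis (Fin (2*k+6)) ℝ L),
        (∀ i j : Fin (2*k+6), ⁅b i, b j⁆ =
          (if i.val = 2 ∧ j.val = 0 then (1:ℝ) else
           if i.val = 0 ∧ j.val = 2 then -1 else 0) • b 0 +
          (if 2 ≤ i.val ∧ i.val % 2 = 0 ∧ j.val = i.val + 1 then (1:ℝ) else
           if 2 ≤ j.val ∧ j.val % 2 = 0 ∧ i.val = j.val + 1 then -1 else 0) • b 1) →
          NoPurelyImaginaryEigenvalues L b) ∧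
    -- G_{6+2k,2}: [X3,X4]=X1, [X3,X1]=[X5,X6]=⋯=[X_{5+2k},X_{6+2k}]=X2
    (∀ (k : ℕ) (L : Type) [LieRing L] [LieAlgebra ℝ L] (b : Module.Basis (Fin (2*k+6)) ℝ L),
        (∀ i j : Fin (2*k+6), ⁅b i, b j⁆ =
          (if i.val = 2 ∧ j.val = 3 then (1:ℝ) else
           if i.val = 3 ∧ j.val = 2 then -1 else 0) • b 0 +
          (if i.val = 2 ∧ j.val = 0 then (1:ℝ) else
           if i.val = 0 ∧ j.val = 2 then -1 else
           if 4 ≤ i.val ∧ i.val % 2 = 0 ∧ j.val = i.val + 1 then 1 else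
           if 4 ≤ j.val ∧ j.val % 2 = 0 ∧ i.val = j.val + 1 then -1 else 0) • b 1) →
          NoPurelyImaginaryEigenvalues L b) := by
  refine ⟨?_, ?_, ?_, ?_, ?_, ?_, ?_, ?_, ?_⟩
  -- G_{3,1(λ)}
  · intro lam _ _ L _ _ b hb20 hb21 hb01 X y hy hroot
    have h10 : ⁅b 1, b 0⁆ = (0 : L) := by rw [← lie_skew, hb01, neg_zero]
    have h02 : ⁅b 0, b 2⁆ = -(b 0 : L) := by rw [← lie_skew, hb20]
    have h12 : ⁅b 1, b 2⁆ = -(lam • b 1 : L) := by rw [← lie_skew, hb21]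
    have hc0 : ⁅X, b 0⁆ = b.repr X 2 • b 0 := by
      rw [aux7_lie_decomp b X (b 0), Fin.sum_univ_three, hb20, h10]
      simp
    have hc1 : ⁅X, b 1⁆ = (b.repr X 2 * lam) • b 1 := by
      rw [aux7_lie_decomp b X (b 1), Fin.sum_univ_three, hb21, hb01]
      simp [smul_smul]
    have hc2 : ⁅X, b 2⁆ = (-(b.repr X 0)) • b 0 + (-(b.repr X 1 * lam)) • b 1 := by
      rw [aux7_lie_decomp b X (b 2), Fin.sum_univ_three, h02, h12, lie_self]
      module
    have hcol : ∀ j : Fin 3, ⁅X, b j⁆ =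
        ![b.repr X 2, 0, -(b.repr X 0)] j • b 0 +
        ![0, b.repr X 2 * lam, -(b.repr X 1 * lam)] j • b 1 := by
      intro j
      fin_cases j
      · simpa using hc0
      · simpa using hc1
      · simpa using hc2
    have heq := aux7_bridge (by omega) b X _ _ hcol y hy hroot
    simp only [Matrix.cons_val_zero, Matrix.cons_val_one, Matrix.head_cons,
      Complex.ofReal_zero, zero_mul, mul_zero] at heq
    exact aux7_no_im_prod hy heq
  -- G_{3,2}
  · intro L _ _ b hb20 hb21 hb01 X y hy hroot
    have h10 : ⁅b 1, b 0⁆ = (0 : L) := by rw [← lie_skew, hb01, neg_zero]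
    have h02 : ⁅b 0, b 2⁆ = -(b 0 : L) := by rw [← lie_skew, hb20]
    have h12 : ⁅b 1, b 2⁆ = -(b 0 + b 1 : L) := by rw [← lie_skew, hb21]
    have hc0 : ⁅X, b 0⁆ = b.repr X 2 • b 0 := by
      rw [aux7_lie_decomp b X (b 0), Fin.sum_univ_three, hb20, h10]
      simp
    have hc1 : ⁅X, b 1⁆ = b.repr X 2 • b 0 + b.repr X 2 • b 1 := by
      rw [aux7_lie_decomp b X (b 1), Fin.sum_univ_three, hb21, hb01, lie_self]
      module
    have hc2 : ⁅X, b 2⁆ = (-(b.repr X 0) - b.repr X 1) • b 0 + (-(b.repr X 1)) • b 1 := by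
      rw [aux7_lie_decomp b X (b 2), Fin.sum_univ_three, h02, h12, lie_self]
      module
    have hcol : ∀ j : Fin 3, ⁅X, b j⁆ =
        ![b.repr X 2, b.repr X 2, -(b.repr X 0) - b.repr X 1] j • b 0 +
        ![0, b.repr X 2, -(b.repr X 1)] j • b 1 := by
      intro j
      fin_cases j
      · simpa using hc0
      · simpa using hc1
      · simpa using hc2
    have heq := aux7_bridge (by omega) b X _ _ hcol y hy hroot
    simp only [Matrix.cons_val_zero, Matrix.cons_val_one, Matrix.head_cons,
      Complex.ofReal_zero, zero_mul, mul_zero] at heq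
    exact aux7_no_im_prod hy heq
  -- G_{3,3(λ)}
  · intro lam hlam L _ _ b hb20 hb21 hb01 X y hy hroot
    have h10 : ⁅b 1, b 0⁆ = (0 : L) := by rw [← lie_skew, hb01, neg_zero]
    have h02 : ⁅b 0, b 2⁆ = -(lam • b 0 - b 1 : L) := by rw [← lie_skew, hb20]
    have h12 : ⁅b 1, b 2⁆ = -(b 0 + lam • b 1 : L) := by rw [← lie_skew, hb21]
    have hc0 : ⁅X, b 0⁆ = (b.repr X 2 * lam) • b 0 + (-(b.repr X 2)) • b 1 := by
      rw [aux7_lie_decomp b X (b 0), Fin.sum_univ_three, hb20, h10, lie_self]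
      module
    have hc1 : ⁅X, b 1⁆ = b.repr X 2 • b 0 + (b.repr X 2 * lam) • b 1 := by
      rw [aux7_lie_decomp b X (b 1), Fin.sum_univ_three, hb21, hb01, lie_self]
      module
    have hc2 : ⁅X, b 2⁆ = (-(b.repr X 0 * lam) - b.repr X 1) • b 0 +
        (b.repr X 0 - b.repr X 1 * lam) • b 1 := by
      rw [aux7_lie_decomp b X (b 2), Fin.sum_univ_three, h02, h12, lie_self]
      module
    have hcol : ∀ j : Fin 3, ⁅X, b j⁆ =
        ![b.repr X 2 * lam, b.repr X 2, -(b.repr X 0 * lam) - b.repr X 1] j • b 0 +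
        ![-(b.repr X 2), b.repr X 2 * lam, b.repr X 0 - b.repr X 1 * lam] j • b 1 := by
      intro j
      fin_cases j
      · simpa using hc0
      · simpa using hc1
      · simpa using hc2
    have heq := aux7_bridge (by omega) b X _ _ hcol y hy hroot
    simp only [Matrix.cons_val_zero, Matrix.cons_val_one, Matrix.head_cons] at heq
    exact aux7_g33_contra y (b.repr X 2) lam hy hlam (by convert heq using 3)
  -- G_{4,1}
  · intro L _ _ b hb20 hb23 hb21 hb01 hb03 hb13 X y hy hroot
    have h10 : ⁅b 1, b 0⁆ = (0 : L) := by rw [← lie_skew, hb01, neg_zero]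
    have h02 : ⁅b 0, b 2⁆ = -(b 0 : L) := by rw [← lie_skew, hb20]
    have h12 : ⁅b 1, b 2⁆ = (0 : L) := by rw [← lie_skew, hb21, neg_zero]
    have h30 : ⁅b 3, b 0⁆ = (0 : L) := by rw [← lie_skew, hb03, neg_zero]
    have h31 : ⁅b 3, b 1⁆ = (0 : L) := by rw [← lie_skew, hb13, neg_zero]
    have h32 : ⁅b 3, b 2⁆ = -(b 1 : L) := by rw [← lie_skew, hb23]
    have hc0 : ⁅X, b 0⁆ = b.repr X 2 • b 0 := by
      rw [aux7_lie_decomp b X (b 0), Fin.sum_univ_four, hb20, h10, h30]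
      simp
    have hc1 : ⁅X, b 1⁆ = 0 := by
      rw [aux7_lie_decomp b X (b 1), Fin.sum_univ_four, hb21, hb01, h31, lie_self]
      simp
    have hc2 : ⁅X, b 2⁆ = (-(b.repr X 0)) • b 0 + (-(b.repr X 3)) • b 1 := by
      rw [aux7_lie_decomp b X (b 2), Fin.sum_univ_four, h02, h12, h32, lie_self]
      module
    have hc3 : ⁅X, b 3⁆ = b.repr X 2 • b 1 := by
      rw [aux7_lie_decomp b X (b 3), Fin.sum_univ_four, hb03, hb13, hb23, lie_self]
      simp
    have hcol : ∀ j : Fin 4, ⁅X, b j⁆ =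
        ![b.repr X 2, 0, -(b.repr X 0), 0] j • b 0 +
        ![0, 0, -(b.repr X 3), b.repr X 2] j • b 1 := by
      intro j
      fin_cases j
      · simpa using hc0
      · simpa using hc1
      · simpa using hc2
      · simpa using hc3
    have heq := aux7_bridge (by omega) b X _ _ hcol y hy hroot
    simp only [Matrix.cons_val_zero, Matrix.cons_val_one, Matrix.head_cons,
      Complex.ofReal_zero, zero_mul, mul_zero] at heq
    exact aux7_no_im_prod hy heq
  -- G_{4,2}
  · intro L _ _ b hb21 hb23 hb20 hb01 hb03 hb13 X y hy hroot
    have h10 : ⁅b 1, b 0⁆ = (0 : L) := by rw [← lie_skew, hb01, neg_zero]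
    have h02 : ⁅b 0, b 2⁆ = (0 : L) := by rw [← lie_skew, hb20, neg_zero]
    have h12 : ⁅b 1, b 2⁆ = -(b 0 : L) := by rw [← lie_skew, hb21]
    have h30 : ⁅b 3, b 0⁆ = (0 : L) := by rw [← lie_skew, hb03, neg_zero]
    have h31 : ⁅b 3, b 1⁆ = (0 : L) := by rw [← lie_skew, hb13, neg_zero]
    have h32 : ⁅b 3, b 2⁆ = -(b 1 : L) := by rw [← lie_skew, hb23]
    have hc0 : ⁅X, b 0⁆ = 0 := by
      rw [aux7_lie_decomp b X (b 0), Fin.sum_univ_four, hb20, h10, h30, lie_self]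
      simp
    have hc1 : ⁅X, b 1⁆ = b.repr X 2 • b 0 := by
      rw [aux7_lie_decomp b X (b 1), Fin.sum_univ_four, hb21, hb01, h31, lie_self]
      simp
    have hc2 : ⁅X, b 2⁆ = (-(b.repr X 1)) • b 0 + (-(b.repr X 3)) • b 1 := by
      rw [aux7_lie_decomp b X (b 2), Fin.sum_univ_four, h02, h12, h32, lie_self]
      module
    have hc3 : ⁅X, b 3⁆ = b.repr X 2 • b 1 := by
      rw [aux7_lie_decomp b X (b 3), Fin.sum_univ_four, hb03, hb13, hb23, lie_self]
      simp
    have hcol : ∀ j : Fin 4, ⁅X, b j⁆ =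
        ![0, b.repr X 2, -(b.repr X 1), 0] j • b 0 +
        ![0, 0, -(b.repr X 3), b.repr X 2] j • b 1 := by
      intro j
      fin_cases j
      · simpa using hc0
      · simpa using hc1
      · simpa using hc2
      · simpa using hc3
    have heq := aux7_bridge (by omega) b X _ _ hcol y hy hroot
    simp only [Matrix.cons_val_zero, Matrix.cons_val_one, Matrix.head_cons,
      Complex.ofReal_zero, zero_mul, mul_zero] at heq
    exact aux7_no_im_prod hy heq
  -- G_{4,3}
  · intro L _ _ b hb21 hb30 hb31 hb01 hb20 hb23 X y hy hroot
    have h10 : ⁅b 1, b 0⁆ = (0 : L) := by rw [← lie_skew, hb01, neg_zero]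
    have h02 : ⁅b 0, b 2⁆ = (0 : L) := by rw [← lie_skew, hb20, neg_zero]
    have h12 : ⁅b 1, b 2⁆ = -(b 0 : L) := by rw [← lie_skew, hb21]
    have h03 : ⁅b 0, b 3⁆ = -(b 0 : L) := by rw [← lie_skew, hb30]
    have h13 : ⁅b 1, b 3⁆ = -(b 1 : L) := by rw [← lie_skew, hb31]
    have h32 : ⁅b 3, b 2⁆ = (0 : L) := by rw [← lie_skew, hb23, neg_zero]
    have hc0 : ⁅X, b 0⁆ = b.repr X 3 • b 0 := by
      rw [aux7_lie_decomp b X (b 0), Fin.sum_univ_four, hb20, h10, hb30, lie_self]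
      simp
    have hc1 : ⁅X, b 1⁆ = b.repr X 2 • b 0 + b.repr X 3 • b 1 := by
      rw [aux7_lie_decomp b X (b 1), Fin.sum_univ_four, hb21, hb01, hb31, lie_self]
      module
    have hc2 : ⁅X, b 2⁆ = (-(b.repr X 1)) • b 0 := by
      rw [aux7_lie_decomp b X (b 2), Fin.sum_univ_four, h02, h12, h32, lie_self]
      module
    have hc3 : ⁅X, b 3⁆ = (-(b.repr X 0)) • b 0 + (-(b.repr X 1)) • b 1 := by
      rw [aux7_lie_decomp b X (b 3), Fin.sum_univ_four, h03, h13, hb23, lie_self]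
      module
    have hcol : ∀ j : Fin 4, ⁅X, b j⁆ =
        ![b.repr X 3, b.repr X 2, -(b.repr X 1), -(b.repr X 0)] j • b 0 +
        ![0, b.repr X 3, 0, -(b.repr X 1)] j • b 1 := by
      intro j
      fin_cases j
      · simpa using hc0
      · simpa using hc1
      · simpa using hc2
      · simpa using hc3
    have heq := aux7_bridge (by omega) b X _ _ hcol y hy hroot
    simp only [Matrix.cons_val_zero, Matrix.cons_val_one, Matrix.head_cons,
      Complex.ofReal_zero, zero_mul, mul_zero] at heq
    exact aux7_no_im_prod hy heq
  -- G_{5+2k}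
  · intro k L _ _ b h X y hy hroot
    haveI : NeZero (2*k+5) := ⟨by omega⟩
    have hcol : ∀ j : Fin (2*k+5), ⁅X, b j⁆ =
        (∑ i, b.repr X i * (if i.val = 2 ∧ j.val = 3 then (1:ℝ) else
             if i.val = 3 ∧ j.val = 2 then -1 else 0)) • b 0 +
        (∑ i, b.repr X i * (if i.val = 2 ∧ j.val = 0 then (1:ℝ) else
             if i.val = 0 ∧ j.val = 2 then -1 else
             if 3 ≤ i.val ∧ i.val % 2 = 1 ∧ j.val = i.val + 1 then 1 else
             if 3 ≤ j.val ∧ j.val % 2 = 1 ∧ i.val = j.val + 1 then -1 else 0)) • b 1 := by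
      intro j
      rw [aux7_lie_decomp b X (b j)]
      simp only [h, smul_add, smul_smul]
      rw [Finset.sum_add_distrib, ← Finset.sum_smul, ← Finset.sum_smul]
    have heq := aux7_bridge (by omega) b X _ _ hcol y hy hroot
    have h1v : ((1 : Fin (2*k+5)) : ℕ) = 1 := by
      rw [Fin.val_one']; exact Nat.mod_eq_of_lt (by omega)
    have hp1 : (∑ i : Fin (2*k+5), b.repr X i *
        (if i.val = 2 ∧ ((1 : Fin (2*k+5)) : ℕ) = 3 then (1:ℝ) else
         if i.val = 3 ∧ ((1 : Fin (2*k+5)) : ℕ) = 2 then -1 else 0)) = 0 := by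
      refine Finset.sum_eq_zero fun i _ => ?_
      rw [if_neg (by rw [h1v]; omega), if_neg (by rw [h1v]; omega), mul_zero]
    rw [hp1] at heq
    simp only [Complex.ofReal_zero, zero_mul] at heq
    exact aux7_no_im_prod hy heq
  -- G_{6+2k,1}
  · intro k L _ _ b h X y hy hroot
    haveI : NeZero (2*k+6) := ⟨by omega⟩
    have hcol : ∀ j : Fin (2*k+6), ⁅X, b j⁆ =
        (∑ i, b.repr X i * (if i.val = 2 ∧ j.val = 0 then (1:ℝ) else
             if i.val = 0 ∧ j.val = 2 then -1 else 0)) • b 0 +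
        (∑ i, b.repr X i * (if 2 ≤ i.val ∧ i.val % 2 = 0 ∧ j.val = i.val + 1 then (1:ℝ) else
             if 2 ≤ j.val ∧ j.val % 2 = 0 ∧ i.val = j.val + 1 then -1 else 0)) • b 1 := by
      intro j
      rw [aux7_lie_decomp b X (b j)]
      simp only [h, smul_add, smul_smul]
      rw [Finset.sum_add_distrib, ← Finset.sum_smul, ← Finset.sum_smul]
    have heq := aux7_bridge (by omega) b X _ _ hcol y hy hroot
    have h1v : ((1 : Fin (2*k+6)) : ℕ) = 1 := by
      rw [Fin.val_one']; exact Nat.mod_eq_of_lt (by omega)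
    have hp1 : (∑ i : Fin (2*k+6), b.repr X i *
        (if i.val = 2 ∧ ((1 : Fin (2*k+6)) : ℕ) = 0 then (1:ℝ) else
         if i.val = 0 ∧ ((1 : Fin (2*k+6)) : ℕ) = 2 then -1 else 0)) = 0 := by
      refine Finset.sum_eq_zero fun i _ => ?_
      rw [if_neg (by rw [h1v]; omega), if_neg (by rw [h1v]; omega), mul_zero]
    rw [hp1] at heq
    simp only [Complex.ofReal_zero, zero_mul] at heq
    exact aux7_no_im_prod hy heq
  -- G_{6+2k,2}
  · intro k L _ _ b h X y hy hroot
    haveI : NeZero (2*k+6) := ⟨by omega⟩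
    have hcol : ∀ j : Fin (2*k+6), ⁅X, b j⁆ =
        (∑ i, b.repr X i * (if i.val = 2 ∧ j.val = 3 then (1:ℝ) else
             if i.val = 3 ∧ j.val = 2 then -1 else 0)) • b 0 +
        (∑ i, b.repr X i * (if i.val = 2 ∧ j.val = 0 then (1:ℝ) else
             if i.val = 0 ∧ j.val = 2 then -1 else
             if 4 ≤ i.val ∧ i.val % 2 = 0 ∧ j.val = i.val + 1 then 1 else
             if 4 ≤ j.val ∧ j.val % 2 = 0 ∧ i.val = j.val + 1 then -1 else 0)) • b 1 := by
      intro j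
      rw [aux7_lie_decomp b X (b j)]
      simp only [h, smul_add, smul_smul]
      rw [Finset.sum_add_distrib, ← Finset.sum_smul, ← Finset.sum_smul]
    have heq := aux7_bridge (by omega) b X _ _ hcol y hy hroot
    have h1v : ((1 : Fin (2*k+6)) : ℕ) = 1 := by
      rw [Fin.val_one']; exact Nat.mod_eq_of_lt (by omega)
    have hp1 : (∑ i : Fin (2*k+6), b.repr X i *
        (if i.val = 2 ∧ ((1 : Fin (2*k+6)) : ℕ) = 3 then (1:ℝ) else
         if i.val = 3 ∧ ((1 : Fin (2*k+6)) : ℕ) = 2 then -1 else 0)) = 0 := by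
      refine Finset.sum_eq_zero fun i _ => ?_
      rw [if_neg (by rw [h1v]; omega), if_neg (by rw [h1v]; omega), mul_zero]
    rw [hp1] at heq
    simp only [Complex.ofReal_zero, zero_mul] at heq
    exact aux7_no_im_prod hy heq
end

section
/- Let G = G_{3,1(λ)} (0<|λ|≤1) and let F = (f1,f2,f3) ∈ G* ≅ ℝ³. If f1 = f2 = 0 then Ω_F(G) = {F}. If (f1,f2) ≠ (0,0) then Ω_F(G) = { (f1·s, f2·s^λ, t) : s,t ∈ ℝ, s > 0 }, where s^λ := exp(λ ln s). -/
open Matrix NormedSpace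

noncomputable def phi (c : ℝ) : ℝ := if c = 0 then 1 else (Real.exp c - 1) / c

lemma phi_pos (c : ℝ) : 0 < phi c := by
  unfold phi
  split_ifs with h
  · norm_num
  · rcases lt_or_gt_of_ne h with hc | hc
    · apply div_pos_of_neg_of_neg _ hc
      simpa using Real.exp_lt_one_iff.mpr hc
    · exact div_pos (by simpa using Real.one_lt_exp_iff.mpr hc) hc

lemma sq_zero_exp {A : Matrix (Fin 3) (Fin 3) ℝ} (h : A * A = 0) :
    exp A = 1 + A := by
  have : exp A = ∑' n : ℕ, ((n.factorial : ℝ)⁻¹) • A ^ n := by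
    rw [exp_eq_tsum ℝ]
  rw [this, tsum_eq_sum (s := Finset.range 2)]
  · simp [Finset.sum_range_succ]
  · intro n hn
    have h2 : 2 ≤ n := by simp at hn; omega
    have : A ^ n = 0 := by
      calc A ^ n = A^2 * A^(n-2) := by rw [← pow_add]; congr 1; omega
      _ = 0 := by rw [pow_two, h, zero_mul]
    simp [this]

noncomputable def Mm (lam x0 x1 x2 : ℝ) : Matrix (Fin 3) (Fin 3) ℝ :=
  !![x2, 0, -x0; 0, lam*x2, -(lam*x1); 0, 0, 0]

noncomputable def Em (lam x0 x1 x2 : ℝ) : Matrix (Fin 3) (Fin 3) ℝ :=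
  !![Real.exp x2, 0, -(x0 * phi x2); 0, Real.exp (lam*x2), -(lam * x1 * phi (lam*x2)); 0, 0, 1]

lemma exp_Mm (lam x0 x1 x2 : ℝ) (hlam : lam ≠ 0) :
    exp (Mm lam x0 x1 x2) = Em lam x0 x1 x2 := by
  rcases eq_or_ne x2 0 with h2 | h2
  · subst h2
    have hsq : Mm lam x0 x1 0 * Mm lam x0 x1 0 = 0 := by
      ext i j
      fin_cases i <;> fin_cases j <;>
        simp [Mm, Matrix.mul_apply, Fin.sum_univ_three, Matrix.vecHead, Matrix.vecTail]
    rw [sq_zero_exp hsq]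
    ext i j
    fin_cases i <;> fin_cases j <;>
      simp [Mm, Em, phi, Matrix.one_apply, Matrix.vecHead, Matrix.vecTail]
  · have hl2 : lam * x2 ≠ 0 := mul_ne_zero hlam h2
    set P : Matrix (Fin 3) (Fin 3) ℝ := !![1,0,x0/x2; 0,1,x1/x2; 0,0,1] with hP
    set Q : Matrix (Fin 3) (Fin 3) ℝ := !![1,0,-(x0/x2); 0,1,-(x1/x2); 0,0,1] with hQ
    have hPQ : P * Q = 1 := by
      ext i j
      fin_cases i <;> fin_cases j <;>
        simp [hP, hQ, Matrix.mul_apply, Fin.sum_univ_three, Matrix.one_apply,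
          Matrix.vecHead, Matrix.vecTail]
    have hQP : Q * P = 1 := by
      ext i j
      fin_cases i <;> fin_cases j <;>
        simp [hP, hQ, Matrix.mul_apply, Fin.sum_univ_three, Matrix.one_apply,
          Matrix.vecHead, Matrix.vecTail]
    have hunit : IsUnit P := ⟨⟨P, Q, hPQ, hQP⟩, rfl⟩
    have hPinv : P⁻¹ = Q := Matrix.inv_eq_right_inv hPQ
    have hD : Mm lam x0 x1 x2 = P * (Matrix.diagonal ![x2, lam*x2, 0]) * P⁻¹ := by
      rw [hPinv]
      ext i j
      fin_cases i <;> fin_cases j <;>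
        (simp [hP, hQ, Mm, Matrix.mul_apply, Fin.sum_univ_three, Matrix.diagonal,
          Matrix.vecHead, Matrix.vecTail]) <;> field_simp <;> ring
    rw [hD, Matrix.exp_conj P _ hunit, Matrix.exp_diagonal, hPinv]
    have hdiag : (exp ![x2, lam*x2, 0] : Fin 3 → ℝ) = ![Real.exp x2, Real.exp (lam*x2), 1] := by
      funext i
      fin_cases i <;> simp [← Real.exp_eq_exp_ℝ]
    rw [hdiag]
    have hp1 : phi x2 = (Real.exp x2 - 1)/x2 := if_neg h2
    have hp2 : phi (lam*x2) = (Real.exp (lam*x2) - 1)/(lam*x2) := if_neg hl2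
    ext i j
    fin_cases i <;> fin_cases j <;>
      (simp [hP, hQ, Em, hp1, hp2, Matrix.mul_apply, Fin.sum_univ_three,
        Matrix.diagonal, Matrix.vecHead, Matrix.vecTail]) <;> field_simp <;> ring

lemma ad_mat (lam : ℝ) (L : Type) [LieRing L] [LieAlgebra ℝ L] (b : Module.Basis (Fin 3) ℝ L)
    (h31 : ⁅b 2, b 0⁆ = b 0) (h32 : ⁅b 2, b 1⁆ = lam • b 1) (h12 : ⁅b 0, b 1⁆ = 0)
    (x0 x1 x2 : ℝ) :
    LinearMap.toMatrix b b (LieAlgebra.ad ℝ L (x0 • b 0 + x1 • b 1 + x2 • b 2))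
      = Mm lam x0 x1 x2 := by
  have h02 : ⁅b 0, b 2⁆ = -(b 0) := by rw [← lie_skew, h31]
  have h12' : ⁅b 1, b 2⁆ = -(lam • b 1) := by rw [← lie_skew, h32]
  have h21 : ⁅b 1, b 0⁆ = 0 := by rw [← lie_skew, h12, neg_zero]
  ext i j
  rw [LinearMap.toMatrix_apply, LieAlgebra.ad_apply]
  fin_cases j <;> fin_cases i <;>
    simp [add_lie, smul_lie, h31, h32, h12, h02, h12', h21, Mm,
      Finsupp.single_apply, Matrix.vecHead, Matrix.vecTail] <;> ring

lemma vecMul_Em (lam x0 x1 x2 : ℝ) (f : Fin 3 → ℝ) :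
    Matrix.vecMul f (Em lam x0 x1 x2) =
      ![f 0 * Real.exp x2, f 1 * Real.exp (lam*x2),
        f 2 - f 0 * (x0 * phi x2) - f 1 * (lam * x1 * phi (lam*x2))] := by
  funext j
  fin_cases j <;>
    simp [Em, Matrix.vecMul, dotProduct, Fin.sum_univ_three,
      Matrix.vecHead, Matrix.vecTail] <;> ring



/-- coadjoint orbit picture for `G_{3,1(λ)}`. -/
theorem stmt_8 (lam : ℝ) (hlam0 : 0 < |lam|) (hlam1 : |lam| ≤ 1)
    (L : Type) [LieRing L] [LieAlgebra ℝ L] (b : Module.Basis (Fin 3) ℝ L)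
    (h31 : ⁅b 2, b 0⁆ = b 0) (h32 : ⁅b 2, b 1⁆ = lam • b 1) (h12 : ⁅b 0, b 1⁆ = 0)
    (f : Fin 3 → ℝ) (Ω : Set (Fin 3 → ℝ))
    (hΩ : Ω = { y | ∃ X : L,
      y = Matrix.vecMul f (NormedSpace.exp ((LinearMap.toMatrix b b) (LieAlgebra.ad ℝ L X))) }) :
    (f 0 = 0 ∧ f 1 = 0 → Ω = {f}) ∧
    (¬ (f 0 = 0 ∧ f 1 = 0) →
      Ω = { y | ∃ s t : ℝ, 0 < s ∧
        y = ![f 0 * s, f 1 * Real.exp (lam * Real.log s), t] }) := by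
  have hlam : lam ≠ 0 := by
    intro h; rw [h, abs_zero] at hlam0; exact lt_irrefl 0 hlam0
  have key : ∀ X : L,
      Matrix.vecMul f (NormedSpace.exp ((LinearMap.toMatrix b b) (LieAlgebra.ad ℝ L X))) =
      ![f 0 * Real.exp (b.repr X 2), f 1 * Real.exp (lam * b.repr X 2),
        f 2 - f 0 * (b.repr X 0 * phi (b.repr X 2))
            - f 1 * (lam * b.repr X 1 * phi (lam * b.repr X 2))] := by
    intro X
    have hX : X = (b.repr X 0) • b 0 + (b.repr X 1) • b 1 + (b.repr X 2) • b 2 := by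
      have := b.sum_repr X
      rw [Fin.sum_univ_three] at this
      exact this.symm
    conv_lhs => rw [hX, ad_mat lam L b h31 h32 h12, exp_Mm _ _ _ _ hlam, vecMul_Em]
  subst hΩ
  constructor
  · rintro ⟨hf0, hf1⟩
    ext y
    simp only [Set.mem_setOf_eq, Set.mem_singleton_iff]
    constructor
    · rintro ⟨X, rfl⟩
      rw [key X]
      funext j
      fin_cases j <;> simp [hf0, hf1]
    · rintro rfl
      refine ⟨0, ?_⟩
      rw [map_zero, map_zero, NormedSpace.exp_zero, Matrix.vecMul_one]
  · intro hne
    have hor : f 0 ≠ 0 ∨ f 1 ≠ 0 := by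
      by_contra h
      push_neg at h
      exact hne ⟨h.1, h.2⟩
    ext y
    simp only [Set.mem_setOf_eq]
    constructor
    · rintro ⟨X, rfl⟩
      rw [key X]
      refine ⟨Real.exp (b.repr X 2),
        f 2 - f 0 * (b.repr X 0 * phi (b.repr X 2))
            - f 1 * (lam * b.repr X 1 * phi (lam * b.repr X 2)), Real.exp_pos _, ?_⟩
      rw [Real.log_exp]
    · rintro ⟨s, t, hs, rfl⟩
      set c := Real.log s with hc
      have hec : Real.exp c = s := Real.exp_log hs
      rcases hor with hf0 | hf1
      · refine ⟨((f 2 - t)/(f 0 * phi c)) • b 0 + (0:ℝ) • b 1 + c • b 2, ?_⟩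
        rw [ad_mat lam L b h31 h32 h12, exp_Mm _ _ _ _ hlam, vecMul_Em]
        funext j
        fin_cases j <;> simp [hec]
        field_simp [hf0, (phi_pos c).ne']
        ring
      · refine ⟨(0:ℝ) • b 0 + ((f 2 - t)/(f 1 * lam * phi (lam * c))) • b 1 + c • b 2, ?_⟩
        rw [ad_mat lam L b h31 h32 h12, exp_Mm _ _ _ _ hlam, vecMul_Em]
        funext j
        fin_cases j <;> simp [hec]
        field_simp [hf1, hlam, (phi_pos (lam*c)).ne']
        ring
end

section
/- Let G = G_{3,2} and let F = (f1,f2,f3) ∈ G* ≅ ℝ³. If f1 = f2 = 0 then Ω_F(G) = {F}. If (f1,f2) ≠ (0,0) then Ω_F(G) = { (f1·e^s, (f1·s + f2)·e^s, t) : s,t ∈ ℝ }. -/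
open NormedSpace Matrix

noncomputable def aA (s : ℝ) : ℝ := if s = 0 then 1 else (Real.exp s - 1)/s
noncomputable def bB (s : ℝ) : ℝ := Real.exp s - aA s

def mM (s p q : ℝ) : Matrix (Fin 3) (Fin 3) ℝ := !![s,s,p; 0,s,q; 0,0,0]
def nN (s q : ℝ) : Matrix (Fin 3) (Fin 3) ℝ := !![0,s,q; 0,0,0; 0,0,0]

lemma aA_mul (s : ℝ) : aA s * s = Real.exp s - 1 := by
  rcases eq_or_ne s 0 with hs | hs
  · simp [hs]
  · rw [aA, if_neg hs, div_mul_cancel₀ _ hs]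

lemma aA_ne_zero (s : ℝ) : aA s ≠ 0 := by
  rcases eq_or_ne s 0 with hs | hs
  · simp [aA, hs]
  · rw [aA, if_neg hs]
    exact div_ne_zero (sub_ne_zero.mpr
      (fun h => hs (by rwa [← Real.exp_zero, Real.exp_eq_exp] at h))) hs

lemma mM_mul_mM (s p q : ℝ) : mM s p q * mM s p q = s • mM s p q + s • nN s q := by
  ext i j
  fin_cases i <;> fin_cases j <;>
    simp [mM, nN, Matrix.mul_fin_three, Matrix.vecHead, Matrix.vecTail] <;> ring

lemma nN_mul_mM (s p q : ℝ) : nN s q * mM s p q = s • nN s q := by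
  ext i j
  fin_cases i <;> fin_cases j <;>
    simp [mM, nN, Matrix.mul_fin_three, Matrix.vecHead, Matrix.vecTail] <;> ring

lemma mM_pow (s p q : ℝ) (n : ℕ) :
    (mM s p q) ^ (n+1) = s ^ n • mM s p q + ((n : ℝ) * s ^ n) • nN s q := by
  induction n with
  | zero => simp
  | succ n ih =>
    rw [pow_succ, ih, add_mul, smul_mul_assoc, smul_mul_assoc, mM_mul_mM, nN_mul_mM,
      smul_add, smul_smul, smul_smul, smul_smul]
    match_scalars <;> push_cast <;> ring

noncomputable def αf (s : ℝ) : ℕ → ℝ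
  | 0 => 0
  | n+1 => s ^ n / (Nat.factorial (n+1) : ℝ)

noncomputable def βf (s : ℝ) : ℕ → ℝ
  | 0 => 0
  | n+1 => (n : ℝ) * s ^ n / (Nat.factorial (n+1) : ℝ)

lemma hasSum_exp_div (s : ℝ) :
    HasSum (fun n : ℕ => s ^ n / (Nat.factorial n : ℝ)) (Real.exp s) := by
  have := NormedSpace.expSeries_div_hasSum_exp s
  rwa [← Real.exp_eq_exp_ℝ] at this

lemma hasSum_shift (s : ℝ) :
    HasSum (fun n : ℕ => s ^ (n+1) / (Nat.factorial (n+1) : ℝ)) (Real.exp s - 1) := by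
  refine (hasSum_nat_add_iff (f := fun n : ℕ => s ^ n / (Nat.factorial n : ℝ)) 1).mpr ?_
  simpa using hasSum_exp_div s

lemma hasSum_αf_shift (s : ℝ) : HasSum (fun n : ℕ => αf s (n+1)) (aA s) := by
  rcases eq_or_ne s 0 with hs | hs
  · subst hs
    have : (fun n : ℕ => αf 0 (n+1)) = fun n => if n = 0 then 1 else 0 := by
      funext n
      cases n with
      | zero => simp [αf]
      | succ m => simp [αf]
    rw [this, aA]
    simpa using hasSum_ite_eq (0 : ℕ) (1 : ℝ)
  · have h := (hasSum_shift s).div_const s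
    have e : (fun n : ℕ => s ^ (n+1) / (Nat.factorial (n+1) : ℝ) / s) = fun n => αf s (n+1) := by
      funext n
      have : (Nat.factorial (n+1) : ℝ) ≠ 0 := Nat.cast_ne_zero.mpr (Nat.factorial_ne_zero _)
      simp only [αf]
      field_simp
      ring
    rw [e] at h
    rwa [aA, if_neg hs]

lemma hasSum_αf (s : ℝ) : HasSum (αf s) (aA s) := by
  have h2 := (hasSum_nat_add_iff (f := αf s) 1).mp (hasSum_αf_shift s)
  simpa [αf] using h2

lemma hasSum_βf_shift (s : ℝ) : HasSum (fun n : ℕ => βf s (n+1)) (bB s) := by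
  have h := (hasSum_exp_div s).sub (hasSum_αf_shift s)
  have e : (fun n : ℕ => s ^ n / (Nat.factorial n : ℝ) - αf s (n+1)) = fun n => βf s (n+1) := by
    funext n
    have h1 : (Nat.factorial n : ℝ) ≠ 0 := Nat.cast_ne_zero.mpr (Nat.factorial_ne_zero _)
    have h2 : (Nat.factorial (n+1) : ℝ) = ((n : ℝ) + 1) * (Nat.factorial n : ℝ) := by
      rw [Nat.factorial_succ]; push_cast; ring
    simp only [αf, βf, h2]
    have h3 : ((n : ℝ) + 1) ≠ 0 := by positivity
    field_simp
    ring
  rw [e] at h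
  exact h

lemma hasSum_βf (s : ℝ) : HasSum (βf s) (bB s) := by
  have h2 := (hasSum_nat_add_iff (f := βf s) 1).mp (hasSum_βf_shift s)
  simpa [βf] using h2

lemma exp_mM (s p q : ℝ) :
    NormedSpace.exp (mM s p q) = 1 + aA s • mM s p q + bB s • nN s q := by
  have hc : HasSum (fun n : ℕ => if n = 0 then (1:ℝ) else 0) 1 := by
    simpa using hasSum_ite_eq (0 : ℕ) (1 : ℝ)
  have H := ((hc.smul_const (1 : Matrix (Fin 3) (Fin 3) ℝ)).add
      ((hasSum_αf s).smul_const (mM s p q))).add ((hasSum_βf s).smul_const (nN s q))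
  have e : (fun n : ℕ => ((if n = 0 then (1:ℝ) else 0) • (1 : Matrix (Fin 3) (Fin 3) ℝ)
        + αf s n • mM s p q) + βf s n • nN s q)
      = fun n : ℕ => ((Nat.factorial n : ℝ))⁻¹ • (mM s p q) ^ n := by
    funext n
    cases n with
    | zero => simp [αf, βf]
    | succ m =>
      rw [mM_pow, smul_add, smul_smul, smul_smul]
      simp only [αf, βf, Nat.succ_ne_zero, if_false, zero_smul, zero_add]
      congr 1 <;> congr 1 <;> · rw [div_eq_mul_inv]; ring
  rw [e] at H
  rw [NormedSpace.exp_eq_tsum ℝ]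
  simpa [one_smul] using H.tsum_eq

lemma vecMul_formula (f : Fin 3 → ℝ) (s p q : ℝ) :
    Matrix.vecMul f (NormedSpace.exp (mM s p q)) =
      ![f 0 * Real.exp s, (f 0 * s + f 1) * Real.exp s,
        f 0 * (aA s * p + bB s * q) + f 1 * (aA s * q) + f 2] := by
  have ha := aA_mul s
  rw [exp_mM]
  funext j
  fin_cases j
  · simp [Matrix.vecMul, dotProduct, Fin.sum_univ_three, mM, nN,
      Matrix.one_apply, Matrix.vecHead, Matrix.vecTail, bB]
    exact Or.inl (by linarith)
  · simp [Matrix.vecMul, dotProduct, Fin.sum_univ_three, mM, nN,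
      Matrix.one_apply, Matrix.vecHead, Matrix.vecTail, bB]
    linear_combination f 1 * ha
  · simp [Matrix.vecMul, dotProduct, Fin.sum_univ_three, mM, nN,
      Matrix.one_apply, Matrix.vecHead, Matrix.vecTail, bB]


lemma ad_matrix (L : Type) [LieRing L] [LieAlgebra ℝ L] (b : Module.Basis (Fin 3) ℝ L)
    (h31 : ⁅b 2, b 0⁆ = b 0) (h32 : ⁅b 2, b 1⁆ = b 0 + b 1) (h12 : ⁅b 0, b 1⁆ = 0)
    (x0 x1 x2 : ℝ) :
    LinearMap.toMatrix b b (LieAlgebra.ad ℝ L (x0 • b 0 + x1 • b 1 + x2 • b 2)) =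
      mM x2 (-(x0+x1)) (-x1) := by
  have h21 : ⁅b 1, b 0⁆ = 0 := by rw [← lie_skew, h12, neg_zero]
  have h13 : ⁅b 0, b 2⁆ = -b 0 := by rw [← lie_skew, h31]
  have h23 : ⁅b 1, b 2⁆ = -(b 0 + b 1) := by rw [← lie_skew, h32]
  have c0 : ⁅x0 • b 0 + x1 • b 1 + x2 • b 2, b 0⁆ = x2 • b 0 := by
    simp [add_lie, smul_lie, h21, h31, lie_self]
  have c1 : ⁅x0 • b 0 + x1 • b 1 + x2 • b 2, b 1⁆ = x2 • b 0 + x2 • b 1 := by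
    simp [add_lie, smul_lie, h12, h32, lie_self, smul_add]
  have c2 : ⁅x0 • b 0 + x1 • b 1 + x2 • b 2, b 2⁆ = (-(x0+x1)) • b 0 + (-x1) • b 1 := by
    simp only [add_lie, smul_lie, h13, h23, lie_self, smul_zero, add_zero, smul_neg, smul_add]
    module
  ext i j
  rw [LinearMap.toMatrix_apply, LieAlgebra.ad_apply]
  fin_cases j <;> fin_cases i <;>
    simp [c0, c1, c2, mM, Module.Basis.repr_self, Finsupp.single_apply, Matrix.vecHead, Matrix.vecTail]

lemma repr_decomp (L : Type) [LieRing L] [LieAlgebra ℝ L] (b : Module.Basis (Fin 3) ℝ L) (X : L) :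
    X = b.repr X 0 • b 0 + b.repr X 1 • b 1 + b.repr X 2 • b 2 := by
  have h := b.sum_repr X
  rw [Fin.sum_univ_three] at h
  exact h.symm

/-- coadjoint orbit picture for `G_{3,2}` (`[X3,X1]=X1`, `[X3,X2]=X1+X2`).
`Ω_F(G) = {F ∘ exp(ad_X) : X ∈ G}` in the coordinates of the dual basis. -/
theorem stmt_9 (L : Type) [LieRing L] [LieAlgebra ℝ L] (b : Module.Basis (Fin 3) ℝ L)
    (h31 : ⁅b 2, b 0⁆ = b 0) (h32 : ⁅b 2, b 1⁆ = b 0 + b 1) (h12 : ⁅b 0, b 1⁆ = 0)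
    (f : Fin 3 → ℝ) (Ω : Set (Fin 3 → ℝ))
    (hΩ : Ω = { y | ∃ X : L,
      y = Matrix.vecMul f (NormedSpace.exp ((LinearMap.toMatrix b b) (LieAlgebra.ad ℝ L X))) }) :
    (f 0 = 0 ∧ f 1 = 0 → Ω = {f}) ∧
    (¬ (f 0 = 0 ∧ f 1 = 0) →
      Ω = { y | ∃ s t : ℝ,
        y = ![f 0 * Real.exp s, (f 0 * s + f 1) * Real.exp s, t] }) := by
  subst hΩ
  constructor
  · rintro ⟨h0, h1⟩
    ext y
    simp only [Set.mem_setOf_eq, Set.mem_singleton_iff]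
    constructor
    · rintro ⟨X, rfl⟩
      rw [repr_decomp L b X, ad_matrix L b h31 h32 h12, vecMul_formula]
      funext j
      fin_cases j <;> simp [h0, h1]
    · rintro rfl
      refine ⟨0, ?_⟩
      rw [show LieAlgebra.ad ℝ L 0 = 0 from map_zero _, map_zero, NormedSpace.exp_zero,
        Matrix.vecMul_one]
  · intro hne
    ext y
    simp only [Set.mem_setOf_eq]
    constructor
    · rintro ⟨X, rfl⟩
      rw [repr_decomp L b X, ad_matrix L b h31 h32 h12, vecMul_formula]
      exact ⟨b.repr X 2, _, rfl⟩
    · rintro ⟨s, t, rfl⟩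
      have ha := aA_ne_zero s
      rcases eq_or_ne (f 0) 0 with h0 | h0
      · have h1 : f 1 ≠ 0 := fun h1 => hne ⟨h0, h1⟩
        set q : ℝ := (t - f 2) / (aA s * f 1) with hq
        refine ⟨q • b 0 + (-q) • b 1 + s • b 2, ?_⟩
        rw [ad_matrix L b h31 h32 h12, vecMul_formula]
        funext j
        fin_cases j <;> simp [h0, hq]
        field_simp
        ring
      · set p : ℝ := (f 2 - t) / (aA s * f 0) with hp
        refine ⟨p • b 0 + (0:ℝ) • b 1 + s • b 2, ?_⟩
        rw [ad_matrix L b h31 h32 h12, vecMul_formula]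
        funext j
        fin_cases j <;> simp [hp]
        field_simp
        ring
end

section
/- Let G = G_{3,3(λ)} (λ ≥ 0) and let F = (f1,f2,f3) ∈ G* ≅ ℝ³. If f1 = f2 = 0 then Ω_F(G) = {F}. If (f1,f2) ≠ (0,0) then Ω_F(G) = { ( e^{λs}(f1 cos s − f2 sin s), e^{λs}(f1 sin s + f2 cos s), t ) : s,t ∈ ℝ }; equivalently, identifying ℝ³ with ℂ×ℝ via (x1,x2,x3) ↦ (x1+ix2, x3), Ω_F(G) = { ( (f1+if2)·e^{(λ+i)s}, t ) : s,t ∈ ℝ }. -/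
section Stmt10Aux
open Complex Nat


/-- the matrix `[[Re d, -Im d, Re w],[Im d, Re d, Im w],[0,0,0]]`
(multiplication by `d` on the complex part, for column vectors). -/
def N10 (d w : ℂ) : Matrix (Fin 3) (Fin 3) ℝ :=
  Matrix.of ![![d.re, -d.im, w.re], ![d.im, d.re, w.im], ![0, 0, 0]]

lemma N10_mul (a u d w : ℂ) : N10 a u * N10 d w = N10 (a * d) (a * w) := by
  ext i j
  rw [Matrix.mul_apply]
  fin_cases i <;> fin_cases j <;>
    simp [N10, Matrix.mul_apply, Fin.sum_univ_three, Complex.mul_re, Complex.mul_im] <;> ring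

lemma N10_pow (d w : ℂ) (k : ℕ) : N10 d w ^ (k + 1) = N10 (d ^ (k + 1)) (d ^ k * w) := by
  induction k with
  | zero => simp
  | succ k ih => rw [pow_succ, ih, N10_mul, ← pow_succ]


lemma g10_summable (d : ℂ) :
    Summable fun k : ℕ => ((Nat.factorial (k + 1) : ℝ))⁻¹ • d ^ k := by
  apply Summable.of_norm
  refine Summable.of_nonneg_of_le (fun k => norm_nonneg _) (fun k => ?_)
    (Real.summable_pow_div_factorial ‖d‖)
  rw [norm_smul]
  simp only [norm_inv, Real.norm_natCast, norm_pow]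
  rw [div_eq_inv_mul]
  gcongr
  exact Nat.le_succ k

noncomputable def g10 (d : ℂ) : ℂ := ∑' k : ℕ, ((Nat.factorial (k + 1) : ℝ))⁻¹ • d ^ k

lemma g10_hasSum (d : ℂ) :
    HasSum (fun k : ℕ => ((Nat.factorial (k + 1) : ℝ))⁻¹ • d ^ k) (g10 d) :=
  (g10_summable d).hasSum

lemma exp_hasSum10 (d : ℂ) :
    HasSum (fun n : ℕ => ((Nat.factorial n : ℝ))⁻¹ • d ^ n) (Complex.exp d) := by
  have h := NormedSpace.exp_series_hasSum_exp' (𝕂 := ℝ) d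
  rwa [← Complex.exp_eq_exp_ℂ] at h

lemma mul_g10 (d : ℂ) : d * g10 d = Complex.exp d - 1 := by
  have h1 : HasSum (fun k : ℕ => ((Nat.factorial (k + 1) : ℝ))⁻¹ • d ^ (k + 1)) (d * g10 d) := by
    have h := (g10_hasSum d).mul_left d
    convert h using 2 with k
    · rfl
    rw [mul_smul_comm]
    congr 1
    ring
  have h3 := (hasSum_nat_add_iff (f := fun n : ℕ => ((Nat.factorial n : ℝ))⁻¹ • d ^ n) 1).mp h1
  have h4 := h3.unique (exp_hasSum10 d)
  simp only [Finset.range_one, Finset.sum_singleton, Nat.factorial_zero, Nat.cast_one, inv_one,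
    pow_zero, one_smul] at h4
  linear_combination h4

lemma g10_zero : g10 0 = 1 := by
  rw [g10, tsum_eq_single 0]
  · norm_num
  · intro k hk
    cases k with
    | zero => exact absurd rfl hk
    | succ k => simp [pow_succ]

lemma exp_N10 (d w : ℂ) :
    NormedSpace.exp (N10 d w) =
      ![![(Complex.exp d).re, -(Complex.exp d).im, (g10 d * w).re],
        ![(Complex.exp d).im, (Complex.exp d).re, (g10 d * w).im],
        ![(0:ℝ), 0, 1]] := by
  rw [NormedSpace.exp_eq_tsum (𝕂 := ℝ)]
  refine HasSum.tsum_eq (Pi.hasSum.2 fun i => Pi.hasSum.2 fun j => ?_)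
  have hre := (exp_hasSum10 d).mapL Complex.reCLM
  have him := (exp_hasSum10 d).mapL Complex.imCLM
  have hgre := ((g10_hasSum d).mul_right w).mapL Complex.reCLM
  have hgim := ((g10_hasSum d).mul_right w).mapL Complex.imCLM
  simp only [Complex.reCLM_apply, Complex.imCLM_apply] at hre him hgre hgim
  fin_cases i <;> fin_cases j <;> simp only [Fin.zero_eta, Fin.mk_one, Fin.reduceFinMk, Matrix.cons_val]
  · -- (0,0)
    convert hre using 1
    funext n
    cases n with
    | zero => simp [N10]
    | succ k => rw [N10_pow]; simp [N10]
  · -- (0,1)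
    convert him.neg using 1
    · rfl
    funext n
    cases n with
    | zero => simp [N10]
    | succ k => rw [N10_pow]; simp [N10]
  · -- (0,2)
    have h := (hasSum_nat_add_iff
        (f := fun n : ℕ => (((n ! : ℝ))⁻¹ • N10 d w ^ n : Matrix (Fin 3) (Fin 3) ℝ) 0 2) 1).mp
      (by convert hgre using 1
          · rfl
          funext k
          rw [N10_pow]
          simp [N10, smul_mul_assoc]
          ring)
    simpa [N10] using h
  · -- (1,0)
    convert him using 1
    funext n
    cases n with
    | zero => simp [N10]
    | succ k => rw [N10_pow]; simp [N10]
  · -- (1,1)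
    convert hre using 1
    funext n
    cases n with
    | zero => simp [N10]
    | succ k => rw [N10_pow]; simp [N10]
  · -- (1,2)
    have h := (hasSum_nat_add_iff
        (f := fun n : ℕ => (((n ! : ℝ))⁻¹ • N10 d w ^ n : Matrix (Fin 3) (Fin 3) ℝ) 1 2) 1).mp
      (by convert hgim using 1
          · rfl
          funext k
          rw [N10_pow]
          simp [N10, smul_mul_assoc]
          ring)
    simpa [N10] using h
  · -- (2,0)
    have h : (fun n : ℕ => (((n ! : ℝ))⁻¹ • N10 d w ^ n : Matrix (Fin 3) (Fin 3) ℝ) 2 0)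
        = fun _ => 0 :=
      funext fun n => by cases n with
        | zero => simp
        | succ k => rw [N10_pow]; simp [N10]
    convert hasSum_zero using 1
  · -- (2,1)
    have h : (fun n : ℕ => (((n ! : ℝ))⁻¹ • N10 d w ^ n : Matrix (Fin 3) (Fin 3) ℝ) 2 1)
        = fun _ => 0 :=
      funext fun n => by cases n with
        | zero => simp
        | succ k => rw [N10_pow]; simp [N10]
    convert hasSum_zero using 1
  · -- (2,2)
    have h : (fun n : ℕ => (((n ! : ℝ))⁻¹ • N10 d w ^ n : Matrix (Fin 3) (Fin 3) ℝ) 2 2)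
        = fun n => if n = 0 then (1:ℝ) else 0 :=
      funext fun n => by cases n with
        | zero => simp
        | succ k => rw [N10_pow]; simp [N10]
    convert hasSum_ite_eq 0 (1:ℝ) using 1

lemma v_surj10 (lam : ℝ) (w : ℂ) : ∃ a0 a1 : ℝ,
    ((-(lam * a0) - a1 : ℝ) : ℂ) + ((a0 - lam * a1 : ℝ) : ℂ) * Complex.I = w := by
  have h : lam ^ 2 + 1 ≠ 0 := by positivity
  refine ⟨(w.im - lam * w.re) / (lam ^ 2 + 1), (-w.re - lam * w.im) / (lam ^ 2 + 1), ?_⟩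
  apply Complex.ext <;>
    simp only [Complex.add_re, Complex.ofReal_re, Complex.mul_re, Complex.I_re, Complex.I_im,
      Complex.ofReal_im, Complex.add_im, Complex.mul_im, mul_zero, mul_one, zero_mul, sub_zero,
      zero_sub, add_zero, zero_add, neg_zero, neg_neg] <;>
    field_simp <;> ring

lemma ad_matrix10 (lam : ℝ) {L : Type} [LieRing L] [LieAlgebra ℝ L] (b : Module.Basis (Fin 3) ℝ L)
    (h31 : ⁅b 2, b 0⁆ = lam • b 0 - b 1) (h32 : ⁅b 2, b 1⁆ = b 0 + lam • b 1)
    (h12 : ⁅b 0, b 1⁆ = 0) (x0 x1 s : ℝ) :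
    (LinearMap.toMatrix b b) (LieAlgebra.ad ℝ L (x0 • b 0 + x1 • b 1 + s • b 2)) =
      N10 (((lam * s : ℝ) : ℂ) - (s : ℝ) * Complex.I)
        (((-(lam * x0) - x1 : ℝ) : ℂ) + ((x0 - lam * x1 : ℝ) : ℂ) * Complex.I) := by
  have h10 : ⁅b 1, b 0⁆ = 0 := by rw [← lie_skew, h12]; simp
  have h02 : ⁅b 0, b 2⁆ = -(lam • b 0 - b 1) := by rw [← lie_skew, h31]
  have h12' : ⁅b 1, b 2⁆ = -(b 0 + lam • b 1) := by rw [← lie_skew, h32]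
  ext i j
  rw [LinearMap.toMatrix_apply]
  fin_cases j <;> fin_cases i <;>
    simp [LieAlgebra.ad_apply, add_lie, smul_lie, h31, h32, h12, h10, h02, h12', lie_self,
      N10, Finsupp.single_apply, sub_smul, smul_smul, smul_sub, smul_add] <;> ring

end Stmt10Aux

open Complex in
/-- coadjoint orbit picture for `G_{3,3(λ)}` (`λ ≥ 0`;
`[X3,X1]=λX1−X2`, `[X3,X2]=X1+λX2`). `Ω_F(G) = {F ∘ exp(ad_X) : X ∈ G}` in the
coordinates of the dual basis; the second description is the equivalent complex form
under the identification `ℝ³ ≅ ℂ × ℝ`, `(x1,x2,x3) ↦ (x1+ix2, x3)`. -/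
theorem stmt_10 (lam : ℝ) (hlam : 0 ≤ lam)
    (L : Type) [LieRing L] [LieAlgebra ℝ L] (b : Module.Basis (Fin 3) ℝ L)
    (h31 : ⁅b 2, b 0⁆ = lam • b 0 - b 1) (h32 : ⁅b 2, b 1⁆ = b 0 + lam • b 1)
    (h12 : ⁅b 0, b 1⁆ = 0)
    (f : Fin 3 → ℝ) (Ω : Set (Fin 3 → ℝ))
    (hΩ : Ω = { y | ∃ X : L,
      y = Matrix.vecMul f (NormedSpace.exp ((LinearMap.toMatrix b b) (LieAlgebra.ad ℝ L X))) }) :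
    (f 0 = 0 ∧ f 1 = 0 → Ω = {f}) ∧
    (¬ (f 0 = 0 ∧ f 1 = 0) →
      Ω = { y | ∃ s t : ℝ,
        y = ![Real.exp (lam * s) * (f 0 * Real.cos s - f 1 * Real.sin s),
              Real.exp (lam * s) * (f 0 * Real.sin s + f 1 * Real.cos s), t] } ∧
      Ω = { y | ∃ s t : ℝ,
        ((y 0 : ℂ) + y 1 * I = ((f 0 : ℂ) + f 1 * I) * Complex.exp ((lam + I) * s)) ∧
        y 2 = t }) := by

  subst hΩ
  have hvec : ∀ X : L, X = (b.repr X 0) • b 0 + (b.repr X 1) • b 1 + (b.repr X 2) • b 2 := by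
    intro X
    have h := b.sum_repr X
    rw [Fin.sum_univ_three] at h
    exact h.symm
  constructor
  · rintro ⟨hf0, hf1⟩
    ext y
    simp only [Set.mem_setOf_eq, Set.mem_singleton_iff]
    constructor
    · rintro ⟨X, rfl⟩
      rw [hvec X, ad_matrix10 lam b h31 h32 h12, exp_N10]
      funext j
      fin_cases j <;>
        simp [Matrix.vecMul, dotProduct, Fin.sum_univ_three, hf0, hf1]
    · rintro rfl
      exact ⟨0, by simp⟩
  · intro hf
    have hff : f 0 ^ 2 + f 1 ^ 2 ≠ 0 := by
      intro h
      exact hf ⟨by nlinarith [sq_nonneg (f 0), sq_nonneg (f 1)],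
        by nlinarith [sq_nonneg (f 0), sq_nonneg (f 1)]⟩
    have h1 : { y | ∃ X : L,
        y = Matrix.vecMul f (NormedSpace.exp ((LinearMap.toMatrix b b) (LieAlgebra.ad ℝ L X))) }
        = { y : Fin 3 → ℝ | ∃ s t : ℝ,
        y = ![Real.exp (lam * s) * (f 0 * Real.cos s - f 1 * Real.sin s),
              Real.exp (lam * s) * (f 0 * Real.sin s + f 1 * Real.cos s), t] } := by
      ext y
      simp only [Set.mem_setOf_eq]
      constructor
      · rintro ⟨X, rfl⟩
        rw [hvec X, ad_matrix10 lam b h31 h32 h12, exp_N10]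
        refine ⟨b.repr X 2,
          f 0 * (g10 (((lam * b.repr X 2 : ℝ) : ℂ) - ((b.repr X 2 : ℝ) : ℂ) * I) *
            (((-(lam * b.repr X 0) - b.repr X 1 : ℝ) : ℂ) +
              ((b.repr X 0 - lam * b.repr X 1 : ℝ) : ℂ) * I)).re +
          f 1 * (g10 (((lam * b.repr X 2 : ℝ) : ℂ) - ((b.repr X 2 : ℝ) : ℂ) * I) *
            (((-(lam * b.repr X 0) - b.repr X 1 : ℝ) : ℂ) +
              ((b.repr X 0 - lam * b.repr X 1 : ℝ) : ℂ) * I)).im + f 2, ?_⟩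
        funext j
        fin_cases j <;>
          simp [Matrix.vecMul, dotProduct, Fin.sum_univ_three, Complex.exp_re,
            Complex.exp_im, Real.cos_neg, Real.sin_neg] <;> ring
      · rintro ⟨s, t, rfl⟩
        by_cases hexp : Complex.exp (((lam * s : ℝ) : ℂ) - ((s : ℝ) : ℂ) * I) = 1
        · have he : Real.exp (lam * s) * Real.cos s = 1 ∧
              Real.exp (lam * s) * Real.sin s = 0 := by
            rw [Complex.ext_iff] at hexp
            simp only [Complex.exp_re, Complex.exp_im, Complex.sub_re, Complex.ofReal_re,
              Complex.mul_re, Complex.I_re, Complex.I_im, Complex.ofReal_im, Complex.sub_im,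
              Complex.mul_im, Complex.one_re, Complex.one_im, mul_zero, mul_one, zero_mul,
              sub_zero, zero_sub, add_zero, zero_add, neg_zero, Real.cos_neg, Real.sin_neg,
              mul_neg] at hexp
            exact ⟨hexp.1, by linarith [hexp.2]⟩
          obtain ⟨a0, a1, ha⟩ := v_surj10 lam
            (((((t - f 2) / (f 0 ^ 2 + f 1 ^ 2)) : ℝ) : ℂ) * ((f 0 : ℂ) + (f 1 : ℂ) * I))
          set u := (((t - f 2) / (f 0 ^ 2 + f 1 ^ 2) : ℝ) : ℂ) * ((f 0 : ℂ) + (f 1 : ℂ) * I)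
            with hu
          have hre : u.re = (t - f 2) / (f 0 ^ 2 + f 1 ^ 2) * f 0 := by
            rw [hu]
            simp only [Complex.mul_re, Complex.ofReal_re, Complex.ofReal_im, Complex.add_re,
              Complex.add_im, Complex.mul_im, Complex.I_re, Complex.I_im, mul_zero, mul_one,
              zero_mul, sub_zero, add_zero, zero_add]
          have him : u.im = (t - f 2) / (f 0 ^ 2 + f 1 ^ 2) * f 1 := by
            rw [hu]
            simp only [Complex.mul_re, Complex.ofReal_re, Complex.ofReal_im, Complex.add_re,
              Complex.add_im, Complex.mul_im, Complex.I_re, Complex.I_im, mul_zero, mul_one,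
              zero_mul, sub_zero, add_zero, zero_add]
          refine ⟨a0 • b 0 + a1 • b 1 + (0 : ℝ) • b 2, ?_⟩
          rw [ad_matrix10 lam b h31 h32 h12, ha]
          rw [show (((lam * (0:ℝ) : ℝ) : ℂ) - (((0:ℝ) : ℝ) : ℂ) * I) = 0 by norm_num]
          rw [exp_N10, g10_zero, one_mul]
          funext j
          fin_cases j
          · simp [Matrix.vecMul, dotProduct, Fin.sum_univ_three, Matrix.vecHead,
              Matrix.vecTail]
            linear_combination (f 0) * he.1 - (f 1) * he.2
          · simp [Matrix.vecMul, dotProduct, Fin.sum_univ_three, Matrix.vecHead,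
              Matrix.vecTail]
            linear_combination (f 1) * he.1 + (f 0) * he.2
          · simp [Matrix.vecMul, dotProduct, Fin.sum_univ_three, Matrix.vecHead,
              Matrix.vecTail]
            rw [hre, him]
            field_simp
            ring
        · have hg : g10 (((lam * s : ℝ) : ℂ) - ((s : ℝ) : ℂ) * I) ≠ 0 := by
            intro h0
            apply hexp
            have hm := mul_g10 (((lam * s : ℝ) : ℂ) - ((s : ℝ) : ℂ) * I)
            rw [h0, mul_zero] at hm
            exact (eq_of_sub_eq_zero hm.symm)
          obtain ⟨a0, a1, ha⟩ := v_surj10 lam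
            ((((((t - f 2) / (f 0 ^ 2 + f 1 ^ 2)) : ℝ) : ℂ) * ((f 0 : ℂ) + (f 1 : ℂ) * I)) /
              g10 (((lam * s : ℝ) : ℂ) - ((s : ℝ) : ℂ) * I))
          set u := (((t - f 2) / (f 0 ^ 2 + f 1 ^ 2) : ℝ) : ℂ) * ((f 0 : ℂ) + (f 1 : ℂ) * I)
            with hu
          have hre : u.re = (t - f 2) / (f 0 ^ 2 + f 1 ^ 2) * f 0 := by
            rw [hu]
            simp only [Complex.mul_re, Complex.ofReal_re, Complex.ofReal_im, Complex.add_re,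
              Complex.add_im, Complex.mul_im, Complex.I_re, Complex.I_im, mul_zero, mul_one,
              zero_mul, sub_zero, add_zero, zero_add]
          have him : u.im = (t - f 2) / (f 0 ^ 2 + f 1 ^ 2) * f 1 := by
            rw [hu]
            simp only [Complex.mul_re, Complex.ofReal_re, Complex.ofReal_im, Complex.add_re,
              Complex.add_im, Complex.mul_im, Complex.I_re, Complex.I_im, mul_zero, mul_one,
              zero_mul, sub_zero, add_zero, zero_add]
          refine ⟨a0 • b 0 + a1 • b 1 + s • b 2, ?_⟩
          rw [ad_matrix10 lam b h31 h32 h12, ha, exp_N10, mul_comm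
            (g10 (((lam * s : ℝ) : ℂ) - ((s : ℝ) : ℂ) * I)), div_mul_cancel₀ _ hg]
          funext j
          fin_cases j
          · simp [Matrix.vecMul, dotProduct, Fin.sum_univ_three, Complex.exp_re,
              Complex.exp_im, Real.cos_neg, Real.sin_neg, Matrix.vecHead, Matrix.vecTail]
            ring
          · simp [Matrix.vecMul, dotProduct, Fin.sum_univ_three, Complex.exp_re,
              Complex.exp_im, Real.cos_neg, Real.sin_neg, Matrix.vecHead, Matrix.vecTail]
            ring
          · simp [Matrix.vecMul, dotProduct, Fin.sum_univ_three, Complex.exp_re,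
              Complex.exp_im, Real.cos_neg, Real.sin_neg, Matrix.vecHead, Matrix.vecTail]
            rw [hre, him]
            field_simp
            ring
    refine ⟨h1, h1.trans ?_⟩
    ext y
    simp only [Set.mem_setOf_eq]
    constructor
    · rintro ⟨s, t, rfl⟩
      refine ⟨s, t, ?_, by simp⟩
      rw [Complex.ext_iff]
      constructor <;>
        simp [Complex.exp_re, Complex.exp_im, Complex.add_re, Complex.add_im, Complex.mul_re,
          Complex.mul_im, Complex.cos_ofReal_re, Complex.sin_ofReal_re] <;> ring
    · rintro ⟨s, t, h1c, h2c⟩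
      refine ⟨s, t, ?_⟩
      rw [Complex.ext_iff] at h1c
      simp only [Complex.add_re, Complex.ofReal_re, Complex.mul_re, Complex.I_re, Complex.I_im,
        Complex.ofReal_im, Complex.add_im, Complex.mul_im, Complex.exp_re, Complex.exp_im,
        mul_zero, mul_one, zero_mul, sub_zero, zero_sub, add_zero, zero_add, neg_zero, one_mul,
        Complex.cos_ofReal_re, Complex.sin_ofReal_re] at h1c
      have hy0 : y 0 = Real.exp (lam * s) * (f 0 * Real.cos s - f 1 * Real.sin s) := by
        linear_combination h1c.1
      have hy1 : y 1 = Real.exp (lam * s) * (f 0 * Real.sin s + f 1 * Real.cos s) := by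
        linear_combination h1c.2
      funext j
      fin_cases j <;> simp [hy0, hy1, h2c]
end

section
/- Let G = G_{4,1} and let F = (f1,f2,f3,f4) ∈ G* ≅ ℝ⁴. If f1 = f2 = 0 then Ω_F(G) = {F}. If (f1,f2) ≠ (0,0) then Ω_F(G) = { (f1·e^s, f2, t, f2·s + f4) : s,t ∈ ℝ }. In particular: if f1 ≠ 0 = f2 then Ω_F(G) = { x ∈ ℝ⁴ : x2 = 0, x4 = f4, f1·x1 > 0 }, and if f2 ≠ 0 then Ω_F(G) = { x ∈ ℝ⁴ : x2 = f2, x1·e^{−x4/x2} = f1·e^{−f4/f2} }. -/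
open scoped Nat

noncomputable def gg (c : ℝ) : ℝ := ∑' n : ℕ, c ^ n / ((n + 1)! : ℝ)

lemma gg_summable (c : ℝ) : Summable fun n : ℕ => c ^ n / ((n + 1)! : ℝ) := by
  apply Summable.of_norm
  apply (Real.summable_pow_div_factorial |c|).of_nonneg_of_le (fun n => norm_nonneg _)
  intro n
  rw [norm_div, norm_pow, Real.norm_eq_abs, Real.norm_natCast]
  apply div_le_div_of_nonneg_left ?_ ?_ ?_
  · positivity
  · positivity
  · exact_mod_cast Nat.factorial_le (Nat.le_succ n)

lemma gg_mul (c : ℝ) : c * gg c = Real.exp c - 1 := by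
  have h1 : Real.exp c = ∑' n : ℕ, c ^ n / (n ! : ℝ) := by
    rw [Real.exp_eq_exp_ℝ, NormedSpace.exp_eq_tsum_div]
  rw [h1, Summable.tsum_eq_zero_add (Real.summable_pow_div_factorial c)]
  simp only [pow_zero, Nat.factorial_zero, Nat.cast_one, div_one]
  rw [gg, ← tsum_mul_left]
  rw [add_sub_cancel_left]
  apply tsum_congr
  intro n
  rw [← mul_div_assoc, ← pow_succ']

lemma gg_zero : gg 0 = 1 := by
  rw [gg, tsum_eq_single 0 (by intro n hn; simp [zero_pow hn])]
  simp

lemma gg_pos (c : ℝ) : 0 < gg c := by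
  rcases lt_trichotomy c 0 with h | h | h
  · have := gg_mul c
    have hx : Real.exp c - 1 < 0 := by
      have := Real.exp_lt_one_iff.mpr h; linarith
    nlinarith
  · rw [h, gg_zero]; norm_num
  · have := gg_mul c
    have hx : 0 < Real.exp c - 1 := by
      have : 1 < Real.exp c := Real.one_lt_exp_iff.mpr h
      linarith
    nlinarith

lemma matexp_of_sq (S : Matrix (Fin 4) (Fin 4) ℝ) (c : ℝ) (h : S * S = c • S) :
    NormedSpace.exp S = 1 + gg c • S := by
  letI : SeminormedRing (Matrix (Fin 4) (Fin 4) ℝ) := Matrix.linftyOpSemiNormedRing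
  letI : NormedRing (Matrix (Fin 4) (Fin 4) ℝ) := Matrix.linftyOpNormedRing
  letI : NormedAlgebra ℝ (Matrix (Fin 4) (Fin 4) ℝ) := Matrix.linftyOpNormedAlgebra
  have hpow : ∀ n : ℕ, S ^ (n + 1) = c ^ n • S := by
    intro n
    induction n with
    | zero => simp
    | succ k ih =>
      rw [pow_succ, ih, Matrix.smul_mul, h, smul_smul, pow_succ]
  rw [NormedSpace.exp_eq_tsum ℝ]
  show (∑' n : ℕ, ((n ! : ℝ)⁻¹) • S ^ n) = _
  have hs : Summable (fun n : ℕ => ((n ! : ℝ)⁻¹) • S ^ n) :=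
    NormedSpace.expSeries_summable' (𝕂 := ℝ) S
  rw [Summable.tsum_eq_zero_add hs]
  congr 1
  · simp
  · have h2 : ∀ n : ℕ, (((n + 1)! : ℝ)⁻¹) • S ^ (n + 1) = (c ^ n / ((n + 1)! : ℝ)) • S := by
      intro n
      rw [hpow, smul_smul, div_eq_inv_mul]
    calc ∑' n : ℕ, (((n + 1)! : ℝ)⁻¹) • S ^ (n + 1)
        = ∑' n : ℕ, (c ^ n / ((n + 1)! : ℝ)) • S := tsum_congr h2
      _ = gg c • S := Summable.tsum_smul_const (gg_summable c) S

lemma key_exp (c0 c2 c3 : ℝ) :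
    NormedSpace.exp (!![c2, 0, -c0, 0; 0, 0, -c3, c2; 0, 0, 0, 0; 0, 0, 0, 0]) =
      !![Real.exp c2, 0, -(c0 * gg c2), 0; 0, 1, -c3, c2; 0, 0, 1, 0; 0, 0, 0, 1] := by
  set S : Matrix (Fin 4) (Fin 4) ℝ := !![c2, 0, -c0, 0; 0, 0, 0, 0; 0, 0, 0, 0; 0, 0, 0, 0] with hSdef
  set N : Matrix (Fin 4) (Fin 4) ℝ := !![0, 0, 0, 0; 0, 0, -c3, c2; 0, 0, 0, 0; 0, 0, 0, 0] with hNdef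
  have hsplit : (!![c2, 0, -c0, 0; 0, 0, -c3, c2; 0, 0, 0, 0; 0, 0, 0, 0]
      : Matrix (Fin 4) (Fin 4) ℝ) = S + N := by
    ext i j; fin_cases i <;> fin_cases j <;> simp [hSdef, hNdef, Matrix.vecHead, Matrix.vecTail]
  have hSS : S * S = c2 • S := by
    ext i j; fin_cases i <;> fin_cases j <;>
      simp [hSdef, Matrix.mul_apply, Fin.sum_univ_succ, Matrix.vecHead, Matrix.vecTail] <;> ring
  have hNN : N * N = (0 : ℝ) • N := by
    ext i j; fin_cases i <;> fin_cases j <;>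
      simp [hNdef, Matrix.mul_apply, Fin.sum_univ_succ, Matrix.vecHead, Matrix.vecTail]
  have hSN : S * N = 0 := by
    ext i j; fin_cases i <;> fin_cases j <;>
      simp [hSdef, hNdef, Matrix.mul_apply, Fin.sum_univ_succ, Matrix.vecHead, Matrix.vecTail]
  have hNS : N * S = 0 := by
    ext i j; fin_cases i <;> fin_cases j <;>
      simp [hSdef, hNdef, Matrix.mul_apply, Fin.sum_univ_succ, Matrix.vecHead, Matrix.vecTail]
  have hcomm : Commute S N := by unfold Commute SemiconjBy; rw [hSN, hNS]
  have hprod : ((1 : Matrix (Fin 4) (Fin 4) ℝ) + gg c2 • S) * (1 + N) = 1 + N + gg c2 • S := by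
    rw [mul_add, mul_one, add_mul, one_mul, Matrix.smul_mul, hSN, smul_zero, add_zero]
    abel
  rw [hsplit, Matrix.exp_add_of_commute S N hcomm, matexp_of_sq S c2 hSS,
    matexp_of_sq N 0 hNN, gg_zero, one_smul, hprod]
  ext i j
  fin_cases i <;> fin_cases j <;>
    simp [hSdef, hNdef, Matrix.one_apply, Matrix.vecHead, Matrix.vecTail] <;>
    nlinarith [gg_mul c2]

section Aux
variable (L : Type) [LieRing L] [LieAlgebra ℝ L] (b : Module.Basis (Fin 4) ℝ L)
    (h31 : ⁅b 2, b 0⁆ = b 0) (h34 : ⁅b 2, b 3⁆ = b 1) (h32 : ⁅b 2, b 1⁆ = 0)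
    (h12 : ⁅b 0, b 1⁆ = 0) (h14 : ⁅b 0, b 3⁆ = 0) (h24 : ⁅b 1, b 3⁆ = 0)

include h31 h34 h32 h12 h14 h24 in
lemma ad_mat_s11 (c0 c1 c2 c3 : ℝ) :
    (LinearMap.toMatrix b b) (LieAlgebra.ad ℝ L (c0 • b 0 + c1 • b 1 + c2 • b 2 + c3 • b 3)) =
      !![c2, 0, -c0, 0; 0, 0, -c3, c2; 0, 0, 0, 0; 0, 0, 0, 0] := by
  have h13 : ⁅b 0, b 2⁆ = -(b 0) := by rw [← lie_skew, h31]
  have h23 : ⁅b 1, b 2⁆ = 0 := by rw [← lie_skew, h32, neg_zero]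
  have h43 : ⁅b 3, b 2⁆ = -(b 1) := by rw [← lie_skew, h34]
  have h21 : ⁅b 1, b 0⁆ = 0 := by rw [← lie_skew, h12, neg_zero]
  have h41 : ⁅b 3, b 0⁆ = 0 := by rw [← lie_skew, h14, neg_zero]
  have h42 : ⁅b 3, b 1⁆ = 0 := by rw [← lie_skew, h24, neg_zero]
  ext i j
  rw [LinearMap.toMatrix_apply, LieAlgebra.ad_apply]
  fin_cases j <;> fin_cases i <;>
    simp [add_lie, smul_lie, lie_self, h31, h34, h32, h12, h14, h24, h13, h23, h43, h21,
      h41, h42, Finsupp.single_apply, Matrix.vecHead, Matrix.vecTail]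

include h31 h34 h32 h12 h14 h24 in
lemma orbit_pt (f : Fin 4 → ℝ) (c0 c1 c2 c3 : ℝ) :
    Matrix.vecMul f (NormedSpace.exp ((LinearMap.toMatrix b b) (LieAlgebra.ad ℝ L
        (c0 • b 0 + c1 • b 1 + c2 • b 2 + c3 • b 3)))) =
      ![f 0 * Real.exp c2, f 1, f 2 - f 0 * (c0 * gg c2) - f 1 * c3, f 1 * c2 + f 3] := by
  rw [ad_mat_s11 L b h31 h34 h32 h12 h14 h24 c0 c1 c2 c3, key_exp]
  funext j
  fin_cases j <;>
    simp [Matrix.vecMul, dotProduct, Fin.sum_univ_succ, Matrix.vecHead,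
      Matrix.vecTail, show (Fin.succ 2 : Fin 4) = 3 from rfl,
      show (Fin.succ 1 : Fin 4) = 2 from rfl, show (Fin.succ 0 : Fin 4) = 1 from rfl] <;> ring

end Aux

/-- coadjoint orbit picture for `G_{4,1}` (`[X3,X1]=X1`, `[X3,X4]=X2`).
`Ω_F(G) = {F ∘ exp(ad_X) : X ∈ G}` in the coordinates of the dual basis. -/
theorem stmt_11 (L : Type) [LieRing L] [LieAlgebra ℝ L] (b : Module.Basis (Fin 4) ℝ L)
    (h31 : ⁅b 2, b 0⁆ = b 0) (h34 : ⁅b 2, b 3⁆ = b 1) (h32 : ⁅b 2, b 1⁆ = 0)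
    (h12 : ⁅b 0, b 1⁆ = 0) (h14 : ⁅b 0, b 3⁆ = 0) (h24 : ⁅b 1, b 3⁆ = 0)
    (f : Fin 4 → ℝ) (Ω : Set (Fin 4 → ℝ))
    (hΩ : Ω = { y | ∃ X : L,
      y = Matrix.vecMul f (NormedSpace.exp ((LinearMap.toMatrix b b) (LieAlgebra.ad ℝ L X))) }) :
    (f 0 = 0 ∧ f 1 = 0 → Ω = {f}) ∧
    (¬ (f 0 = 0 ∧ f 1 = 0) →
      Ω = { y | ∃ s t : ℝ, y = ![f 0 * Real.exp s, f 1, t, f 1 * s + f 3] }) ∧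
    (f 0 ≠ 0 ∧ f 1 = 0 →
      Ω = { x | x 1 = 0 ∧ x 3 = f 3 ∧ f 0 * x 0 > 0 }) ∧
    (f 1 ≠ 0 →
      Ω = { x | x 1 = f 1 ∧ x 0 * Real.exp (-(x 3) / x 1) = f 0 * Real.exp (-(f 3) / f 1) }) := by
  have opt := orbit_pt L b h31 h34 h32 h12 h14 h24 f
  have key : Ω = { y | ∃ p q r : ℝ,
      y = ![f 0 * Real.exp q, f 1, f 2 - f 0 * (p * gg q) - f 1 * r, f 1 * q + f 3] } := by
    rw [hΩ]
    ext y
    simp only [Set.mem_setOf_eq]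
    constructor
    · rintro ⟨X, rfl⟩
      refine ⟨b.repr X 0, b.repr X 2, b.repr X 3, ?_⟩
      have hX : X = b.repr X 0 • b 0 + b.repr X 1 • b 1 + b.repr X 2 • b 2 + b.repr X 3 • b 3 := by
        have h := b.sum_repr X
        rw [Fin.sum_univ_four] at h
        exact h.symm
      conv_lhs => rw [hX]
      rw [opt]
    · rintro ⟨p, q, r, rfl⟩
      exact ⟨p • b 0 + (0 : ℝ) • b 1 + q • b 2 + r • b 3, (opt p 0 q r).symm⟩
  refine ⟨?_, ?_, ?_, ?_⟩
  · rintro ⟨h0, h1⟩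
    rw [key]
    ext y
    simp only [Set.mem_setOf_eq, Set.mem_singleton_iff]
    constructor
    · rintro ⟨p, q, r, rfl⟩
      funext i
      fin_cases i <;> simp [h0, h1]
    · rintro rfl
      refine ⟨0, 0, 0, ?_⟩
      funext i
      fin_cases i <;> simp [h0, h1]
  · intro hne
    rw [key]
    ext y
    simp only [Set.mem_setOf_eq]
    constructor
    · rintro ⟨p, q, r, rfl⟩
      exact ⟨q, f 2 - f 0 * (p * gg q) - f 1 * r, rfl⟩
    · rintro ⟨s, t, rfl⟩
      by_cases h1 : f 1 = 0
      · have h0 : f 0 ≠ 0 := fun h0 => hne ⟨h0, h1⟩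
        refine ⟨(f 2 - t) / (f 0 * gg s), s, 0, ?_⟩
        funext i
        have hg : gg s ≠ 0 := ne_of_gt (gg_pos s)
        fin_cases i <;> simp [h1] <;> field_simp <;> ring
      · refine ⟨0, s, (f 2 - t) / f 1, ?_⟩
        funext i
        fin_cases i <;> simp <;> field_simp <;> ring
  · rintro ⟨h0, h1⟩
    rw [key]
    ext x
    simp only [Set.mem_setOf_eq]
    constructor
    · rintro ⟨p, q, r, rfl⟩
      refine ⟨by simp [h1], by simp [h1], ?_⟩
      have he := Real.exp_pos q
      have h2 : 0 < f 0 ^ 2 := lt_of_le_of_ne (sq_nonneg _) (Ne.symm (pow_ne_zero 2 h0))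
      have : f 0 * (![f 0 * Real.exp q, f 1, f 2 - f 0 * (p * gg q) - f 1 * r, f 1 * q + f 3] 0)
          = f 0 ^ 2 * Real.exp q := by simp; ring
      rw [this]
      positivity
    · rintro ⟨hx1, hx3, hpos⟩
      have hdiv : 0 < x 0 / f 0 := by
        rcases lt_or_gt_of_ne h0 with hf | hf
        · have hx : x 0 < 0 := by nlinarith
          exact div_pos_of_neg_of_neg hx hf
        · have hx : 0 < x 0 := by nlinarith
          exact div_pos hx hf
      set q := Real.log (x 0 / f 0) with hq
      have hg : gg q ≠ 0 := ne_of_gt (gg_pos q)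
      refine ⟨(f 2 - x 2) / (f 0 * gg q), q, 0, ?_⟩
      funext i
      fin_cases i
      · show x 0 = _
        simp only [Fin.zero_eta, Matrix.cons_val_zero]
        rw [Real.exp_log hdiv]
        field_simp
      · simpa [h1] using hx1
      · show x 2 = _
        simp only [Fin.reduceFinMk, Matrix.cons_val_two, Matrix.head_cons, Matrix.tail_cons]
        rw [h1]
        field_simp
        ring
      · show x 3 = _
        simp [h1, hx3]
  · intro h1
    rw [key]
    ext x
    simp only [Set.mem_setOf_eq]
    constructor
    · rintro ⟨p, q, r, rfl⟩
      refine ⟨by simp, ?_⟩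
      show (f 0 * Real.exp q) * Real.exp (-(f 1 * q + f 3) / f 1) = _
      rw [mul_assoc, ← Real.exp_add]
      congr 2
      field_simp
      ring
    · rintro ⟨hx1, hx2⟩
      rw [hx1] at hx2
      refine ⟨0, (x 3 - f 3) / f 1, (f 2 - x 2) / f 1, ?_⟩
      funext i
      fin_cases i
      · show x 0 = _
        simp only [Fin.zero_eta, Matrix.cons_val_zero]
        have h2 : x 0 * Real.exp (-(x 3) / f 1) * Real.exp (x 3 / f 1)
            = f 0 * Real.exp (-(f 3) / f 1) * Real.exp (x 3 / f 1) := by rw [hx2]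
        rw [mul_assoc, ← Real.exp_add] at h2
        have e1 : -(x 3) / f 1 + x 3 / f 1 = 0 := by field_simp; ring
        rw [e1, Real.exp_zero, mul_one, mul_assoc, ← Real.exp_add] at h2
        have e2 : -(f 3) / f 1 + x 3 / f 1 = (x 3 - f 3) / f 1 := by
          field_simp
          ring
        rw [e2] at h2
        exact h2
      · simpa using hx1
      · show x 2 = _
        simp only [Fin.reduceFinMk, Matrix.cons_val_two, Matrix.head_cons, Matrix.tail_cons]
        field_simp
        ring
      · show x 3 = _
        simp only [Fin.reduceFinMk, Matrix.cons_val_three, Matrix.head_cons, Matrix.tail_cons]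
        field_simp
        ring
end

section
/- Let G = G_{4,2} and let F = (f1,f2,f3,f4) ∈ G* ≅ ℝ⁴. If f1 = f2 = 0 then Ω_F(G) = {F}. If f1 = 0 ≠ f2 then Ω_F(G) = { x ∈ ℝ⁴ : x1 = 0, x2 = f2 } (a 2-dimensional plane with x3, x4 free). If f1 ≠ 0 then Ω_F(G) = { x ∈ ℝ⁴ : x1 = f1, x2² − 2·x1·x4 = f2² − 2·f1·f4 } (a parabolic cylinder with x3 free). -/
def Mg (a : Fin 4 → ℝ) : Matrix (Fin 4) (Fin 4) ℝ :=
  !![0, a 2, -(a 1), 0;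
     0, 0, -(a 3), a 2;
     0, 0, 0, 0;
     0, 0, 0, 0]

lemma Mg_sq (a : Fin 4 → ℝ) : Mg a ^ 2 =
    !![0, 0, -(a 2 * a 3), a 2 * a 2;
       0, 0, 0, 0;
       0, 0, 0, 0;
       0, 0, 0, 0] := by
  ext i j
  fin_cases i <;> fin_cases j <;>
    simp [Mg, pow_two, Matrix.mul_apply, Fin.sum_univ_four, Matrix.vecHead, Matrix.vecTail]

lemma Mg_cube (a : Fin 4 → ℝ) : Mg a ^ 3 = 0 := by
  have : Mg a ^ 3 = Mg a ^ 2 * Mg a := by rw [pow_succ]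
  rw [this, Mg_sq]
  ext i j
  fin_cases i <;> fin_cases j <;>
    simp [Mg, Matrix.mul_apply, Fin.sum_univ_four, Matrix.vecHead, Matrix.vecTail]

lemma exp_cube_zero {A : Matrix (Fin 4) (Fin 4) ℝ} (h : A ^ 3 = 0) :
    NormedSpace.exp A = 1 + A + (2⁻¹ : ℝ) • A ^ 2 := by
  simp only [NormedSpace.exp_eq_tsum ℝ]
  have hz : ∀ n ∉ Finset.range 3, ((n.factorial : ℝ))⁻¹ • A ^ n = 0 := by
    intro n hn
    have h3 : 3 ≤ n := by simpa using hn
    have : A ^ n = A ^ 3 * A ^ (n - 3) := by rw [← pow_add]; congr 1; omega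
    rw [this, h, zero_mul, smul_zero]
  rw [tsum_eq_sum hz]
  simp [Finset.sum_range_succ]

lemma vecMul_expMg (f a : Fin 4 → ℝ) :
    Matrix.vecMul f (1 + Mg a + (2⁻¹ : ℝ) • Mg a ^ 2) =
      ![f 0, f 1 + a 2 * f 0,
        f 2 - a 1 * f 0 - a 3 * f 1 - a 2 * a 3 * f 0 / 2,
        f 3 + a 2 * f 1 + a 2 * a 2 * f 0 / 2] := by
  rw [Mg_sq]
  funext j
  fin_cases j <;>
    simp [Matrix.vecMul, dotProduct, Fin.sum_univ_four, Mg, Matrix.one_apply,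
      Matrix.vecHead, Matrix.vecTail] <;>
    ring

/-- coadjoint orbit picture for `G_{4,2}` (`[X3,X2]=X1`, `[X3,X4]=X2`).
`Ω_F(G) = {F ∘ exp(ad_X) : X ∈ G}` in the coordinates of the dual basis. -/
theorem stmt_12 (L : Type) [LieRing L] [LieAlgebra ℝ L] (b : Module.Basis (Fin 4) ℝ L)
    (h32 : ⁅b 2, b 1⁆ = b 0) (h34 : ⁅b 2, b 3⁆ = b 1) (h31 : ⁅b 2, b 0⁆ = 0)
    (h12 : ⁅b 0, b 1⁆ = 0) (h14 : ⁅b 0, b 3⁆ = 0) (h24 : ⁅b 1, b 3⁆ = 0)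
    (f : Fin 4 → ℝ) (Ω : Set (Fin 4 → ℝ))
    (hΩ : Ω = { y | ∃ X : L,
      y = Matrix.vecMul f (NormedSpace.exp ((LinearMap.toMatrix b b) (LieAlgebra.ad ℝ L X))) }) :
    (f 0 = 0 ∧ f 1 = 0 → Ω = {f}) ∧
    (f 0 = 0 ∧ f 1 ≠ 0 → Ω = { x | x 0 = 0 ∧ x 1 = f 1 }) ∧
    (f 0 ≠ 0 →
      Ω = { x | x 0 = f 0 ∧ (x 1)^2 - 2 * x 0 * x 3 = (f 1)^2 - 2 * f 0 * f 3 }) := by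
  -- the matrix of `ad X`
  have hM : ∀ X : L, (LinearMap.toMatrix b b) (LieAlgebra.ad ℝ L X) = Mg (b.equivFun X) := by
    intro X
    have s10 : ⁅b 1, b 0⁆ = 0 := by rw [← lie_skew, h12, neg_zero]
    have s30 : ⁅b 3, b 0⁆ = 0 := by rw [← lie_skew, h14, neg_zero]
    have s31 : ⁅b 3, b 1⁆ = 0 := by rw [← lie_skew, h24, neg_zero]
    have s02 : ⁅b 0, b 2⁆ = 0 := by rw [← lie_skew, h31, neg_zero]
    have s12 : ⁅b 1, b 2⁆ = -b 0 := by rw [← lie_skew, h32]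
    have s32 : ⁅b 3, b 2⁆ = -b 1 := by rw [← lie_skew, h34]
    have hX : X = b.equivFun X 0 • b 0 + b.equivFun X 1 • b 1 + b.equivFun X 2 • b 2 +
        b.equivFun X 3 • b 3 := by
      have h := b.sum_equivFun X
      rw [Fin.sum_univ_four] at h
      exact h.symm
    set a := b.equivFun X with ha
    have l0 : ⁅X, b 0⁆ = 0 := by
      rw [hX]; simp [add_lie, smul_lie, s10, s30, h31]
    have l1 : ⁅X, b 1⁆ = a 2 • b 0 := by
      rw [hX]; simp [add_lie, smul_lie, h12, h32, s31]
    have l2 : ⁅X, b 2⁆ = -(a 1) • b 0 + -(a 3) • b 1 := by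
      rw [hX]
      simp only [add_lie, smul_lie, s02, s12, s32, lie_self, smul_zero, smul_neg, zero_add,
        add_zero, neg_smul]
    have l3 : ⁅X, b 3⁆ = a 2 • b 1 := by
      rw [hX]; simp [add_lie, smul_lie, h14, h24, h34]
    ext i j
    rw [LinearMap.toMatrix_apply]
    fin_cases i <;> fin_cases j <;>
      simp [LieAlgebra.ad_apply, l0, l1, l2, l3, Mg, Finsupp.single_apply,
        Matrix.vecHead, Matrix.vecTail]
  -- parametrized description of the orbit
  have hΩ' : Ω = { y | ∃ a : Fin 4 → ℝ,
      y = ![f 0, f 1 + a 2 * f 0,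
        f 2 - a 1 * f 0 - a 3 * f 1 - a 2 * a 3 * f 0 / 2,
        f 3 + a 2 * f 1 + a 2 * a 2 * f 0 / 2] } := by
    rw [hΩ]
    ext y
    simp only [Set.mem_setOf_eq]
    constructor
    · rintro ⟨X, rfl⟩
      exact ⟨b.equivFun X, by
        rw [hM X, exp_cube_zero (Mg_cube _), vecMul_expMg]⟩
    · rintro ⟨a, rfl⟩
      refine ⟨b.equivFun.symm a, ?_⟩
      rw [hM _, exp_cube_zero (Mg_cube _), vecMul_expMg, b.equivFun.apply_symm_apply]
  rw [hΩ']
  refine ⟨?_, ?_, ?_⟩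
  · rintro ⟨h0, h1⟩
    ext x
    simp only [Set.mem_setOf_eq, Set.mem_singleton_iff]
    constructor
    · rintro ⟨a, rfl⟩
      funext j
      fin_cases j <;> simp [h0, h1]
    · rintro rfl
      refine ⟨0, ?_⟩
      funext j
      fin_cases j <;> simp [h0, h1]
  · rintro ⟨h0, h1⟩
    ext x
    simp only [Set.mem_setOf_eq]
    constructor
    · rintro ⟨a, rfl⟩
      constructor <;> simp [h0]
    · rintro ⟨hx0, hx1⟩
      refine ⟨![0, 0, (x 3 - f 3) / f 1, (f 2 - x 2) / f 1], ?_⟩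
      funext j
      fin_cases j <;>
        simp [h0, hx0, hx1, Matrix.vecHead, Matrix.vecTail] <;>
        field_simp <;>
        ring
  · intro h0
    ext x
    simp only [Set.mem_setOf_eq]
    constructor
    · rintro ⟨a, rfl⟩
      constructor
      · simp
      · simp [Matrix.vecHead, Matrix.vecTail]
        ring
    · rintro ⟨hx0, hx1⟩
      rw [hx0] at hx1
      refine ⟨![0, (f 2 - x 2) / f 0, (x 1 - f 1) / f 0, 0], ?_⟩
      funext j
      fin_cases j <;>
        simp [hx0, Matrix.vecHead, Matrix.vecTail] <;>
        field_simp <;>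
        ring_nf <;>
        linear_combination (-1) * hx1
end

section
/- Let k ≥ 0, n = 5+2k, G = G_{5+2k}, and let F = (f1,…,f_n) ∈ G* ≅ ℝⁿ. If f1 = f2 = 0 then Ω_F(G) = {F}. If f2 = 0 ≠ f1 then Ω_F(G) = { x ∈ ℝⁿ : x1 = f1, x2 = 0, x_j = f_j for all j = 5,…,5+2k } (a 2-dimensional plane with x3, x4 free). If f2 ≠ 0 then Ω_F(G) = { x ∈ ℝⁿ : x2 = f2 } (a (4+2k)-dimensional hyperplane). -/
def rfun (c : ℕ → ℝ) (j : ℕ) : ℝ :=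
  if j = 2 then -c 3 else if j = 3 then c 2 else 0
def sfun (c : ℕ → ℝ) (j : ℕ) : ℝ :=
  if j = 0 then c 2 else if j = 2 then -c 0 else if j = 3 then -c 4 else
  if 4 ≤ j ∧ j % 2 = 0 then c (j-1) else
  if 5 ≤ j ∧ j % 2 = 1 then -c (j+1) else 0
def Mmat (n : ℕ) (c : ℕ → ℝ) : Matrix (Fin n) (Fin n) ℝ :=
  Matrix.of fun i j => if i.val = 0 then rfun c j.val else if i.val = 1 then sfun c j.val else 0

lemma sum_ite_val {n : ℕ} (v : ℕ) (w : ℝ) (h : v < n ∨ w = 0) :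
    ∑ i : Fin n, (if i.val = v then w else 0) = w := by
  rcases h with h | h
  · rw [Finset.sum_eq_single ⟨v, h⟩]
    · simp
    · intro i _ hi; rw [if_neg]; intro hv; exact hi (Fin.ext hv)
    · intro h'; exact absurd (Finset.mem_univ _) h'
  · subst h; simp

lemma sum_alpha (k : ℕ) (c : ℕ → ℝ) (j : Fin (2*k+5)) :
    ∑ i : Fin (2*k+5), c i.val * (if i.val = 2 ∧ j.val = 3 then (1:ℝ) else
      if i.val = 3 ∧ j.val = 2 then -1 else 0) = rfun c j.val := by
  have he : ∀ i : Fin (2*k+5), c i.val * (if i.val = 2 ∧ j.val = 3 then (1:ℝ) else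
      if i.val = 3 ∧ j.val = 2 then -1 else 0) =
      (if i.val = 2 then (if j.val = 3 then c 2 else 0) else 0)
      + (if i.val = 3 then (if j.val = 2 then -c 3 else 0) else 0) := by
    intro i
    split_ifs <;> simp_all
  rw [Finset.sum_congr rfl fun i _ => he i, Finset.sum_add_distrib,
    sum_ite_val 2 _ (Or.inl (by omega)), sum_ite_val 3 _ (Or.inl (by omega))]
  unfold rfun
  split_ifs <;> simp_all

lemma sum_beta (k : ℕ) (c : ℕ → ℝ) (j : Fin (2*k+5)) :
    ∑ i : Fin (2*k+5), c i.val * (if i.val = 2 ∧ j.val = 0 then (1:ℝ) else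
       if i.val = 0 ∧ j.val = 2 then -1 else
       if 3 ≤ i.val ∧ i.val % 2 = 1 ∧ j.val = i.val + 1 then 1 else
       if 3 ≤ j.val ∧ j.val % 2 = 1 ∧ i.val = j.val + 1 then -1 else 0) = sfun c j.val := by
  rcases (show j.val = 0 ∨ j.val = 1 ∨ j.val = 2 ∨ j.val = 3 ∨ (4 ≤ j.val ∧ j.val % 2 = 0)
      ∨ (5 ≤ j.val ∧ j.val % 2 = 1) by omega) with hj | hj | hj | hj | hj | hj
  · have he : ∀ i : Fin (2*k+5), c i.val * (if i.val = 2 ∧ j.val = 0 then (1:ℝ) else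
       if i.val = 0 ∧ j.val = 2 then -1 else
       if 3 ≤ i.val ∧ i.val % 2 = 1 ∧ j.val = i.val + 1 then 1 else
       if 3 ≤ j.val ∧ j.val % 2 = 1 ∧ i.val = j.val + 1 then -1 else 0) =
        if i.val = 2 then c 2 else 0 := by
      intro i
      split_ifs <;> first | (exfalso; omega) | (rw [show i.val = 2 from by omega]; ring) | ring
    rw [Finset.sum_congr rfl fun i _ => he i, sum_ite_val 2 _ (Or.inl (by omega)), hj]
    simp [sfun]
  · have he : ∀ i : Fin (2*k+5), c i.val * (if i.val = 2 ∧ j.val = 0 then (1:ℝ) else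
       if i.val = 0 ∧ j.val = 2 then -1 else
       if 3 ≤ i.val ∧ i.val % 2 = 1 ∧ j.val = i.val + 1 then 1 else
       if 3 ≤ j.val ∧ j.val % 2 = 1 ∧ i.val = j.val + 1 then -1 else 0) = 0 := by
      intro i
      split_ifs <;> first | (exfalso; omega) | ring
    rw [Finset.sum_congr rfl fun i _ => he i, Finset.sum_const, hj]
    simp [sfun]
  · have he : ∀ i : Fin (2*k+5), c i.val * (if i.val = 2 ∧ j.val = 0 then (1:ℝ) else
       if i.val = 0 ∧ j.val = 2 then -1 else
       if 3 ≤ i.val ∧ i.val % 2 = 1 ∧ j.val = i.val + 1 then 1 else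
       if 3 ≤ j.val ∧ j.val % 2 = 1 ∧ i.val = j.val + 1 then -1 else 0) =
        if i.val = 0 then -c 0 else 0 := by
      intro i
      split_ifs <;> first | (exfalso; omega) | (rw [show i.val = 0 from by omega]; ring) | ring
    rw [Finset.sum_congr rfl fun i _ => he i, sum_ite_val 0 _ (Or.inl (by omega)), hj]
    simp [sfun]
  · have he : ∀ i : Fin (2*k+5), c i.val * (if i.val = 2 ∧ j.val = 0 then (1:ℝ) else
       if i.val = 0 ∧ j.val = 2 then -1 else
       if 3 ≤ i.val ∧ i.val % 2 = 1 ∧ j.val = i.val + 1 then 1 else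
       if 3 ≤ j.val ∧ j.val % 2 = 1 ∧ i.val = j.val + 1 then -1 else 0) =
        if i.val = 4 then -c 4 else 0 := by
      intro i
      split_ifs <;> first | (exfalso; omega) | (rw [show i.val = 4 from by omega]; ring) | ring
    rw [Finset.sum_congr rfl fun i _ => he i, sum_ite_val 4 _ (Or.inl (by omega)), hj]
    simp [sfun]
  · have he : ∀ i : Fin (2*k+5), c i.val * (if i.val = 2 ∧ j.val = 0 then (1:ℝ) else
       if i.val = 0 ∧ j.val = 2 then -1 else
       if 3 ≤ i.val ∧ i.val % 2 = 1 ∧ j.val = i.val + 1 then 1 else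
       if 3 ≤ j.val ∧ j.val % 2 = 1 ∧ i.val = j.val + 1 then -1 else 0) =
        if i.val = j.val - 1 then c (j.val - 1) else 0 := by
      intro i
      split_ifs <;> first | (exfalso; omega) | (rw [show i.val = j.val - 1 from by omega]; ring) | ring
    rw [Finset.sum_congr rfl fun i _ => he i, sum_ite_val (j.val - 1) _ (Or.inl (by omega))]
    unfold sfun
    rw [if_neg (by omega), if_neg (by omega), if_neg (by omega), if_pos hj]
  · have he : ∀ i : Fin (2*k+5), c i.val * (if i.val = 2 ∧ j.val = 0 then (1:ℝ) else
       if i.val = 0 ∧ j.val = 2 then -1 else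
       if 3 ≤ i.val ∧ i.val % 2 = 1 ∧ j.val = i.val + 1 then 1 else
       if 3 ≤ j.val ∧ j.val % 2 = 1 ∧ i.val = j.val + 1 then -1 else 0) =
        if i.val = j.val + 1 then -c (j.val + 1) else 0 := by
      intro i
      split_ifs <;> first | (exfalso; omega) | (rw [show i.val = j.val + 1 from by omega]; ring) | ring
    rw [Finset.sum_congr rfl fun i _ => he i,
      sum_ite_val (j.val + 1) _ (Or.inl (by have := j.isLt; omega))]
    unfold sfun
    rw [if_neg (by omega), if_neg (by omega), if_neg (by omega), if_neg (by omega),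
      if_pos (by omega)]

variable {k : ℕ} {L : Type} [LieRing L] [LieAlgebra ℝ L]

lemma bracket_eq (b : Module.Basis (Fin (2*k+5)) ℝ L)
    (hbracket : ∀ i j : Fin (2*k+5), ⁅b i, b j⁆ =
      (if i.val = 2 ∧ j.val = 3 then (1:ℝ) else
       if i.val = 3 ∧ j.val = 2 then -1 else 0) • b 0 +
      (if i.val = 2 ∧ j.val = 0 then (1:ℝ) else
       if i.val = 0 ∧ j.val = 2 then -1 else
       if 3 ≤ i.val ∧ i.val % 2 = 1 ∧ j.val = i.val + 1 then 1 else
       if 3 ≤ j.val ∧ j.val % 2 = 1 ∧ i.val = j.val + 1 then -1 else 0) • b 1)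
    (c : ℕ → ℝ) (j : Fin (2*k+5)) :
    ⁅∑ i : Fin (2*k+5), c i.val • b i, b j⁆ = rfun c j.val • b 0 + sfun c j.val • b 1 := by
  rw [show (⁅∑ i : Fin (2*k+5), c i.val • b i, b j⁆ : L)
      = ∑ i : Fin (2*k+5), ⁅c i.val • b i, b j⁆ from by
    exact sum_lie _ _ _]
  simp_rw [smul_lie, hbracket, smul_add, smul_smul]
  rw [Finset.sum_add_distrib, ← Finset.sum_smul, ← Finset.sum_smul, sum_alpha, sum_beta]

lemma toMatrix_ad (b : Module.Basis (Fin (2*k+5)) ℝ L)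
    (hbracket : ∀ i j : Fin (2*k+5), ⁅b i, b j⁆ =
      (if i.val = 2 ∧ j.val = 3 then (1:ℝ) else
       if i.val = 3 ∧ j.val = 2 then -1 else 0) • b 0 +
      (if i.val = 2 ∧ j.val = 0 then (1:ℝ) else
       if i.val = 0 ∧ j.val = 2 then -1 else
       if 3 ≤ i.val ∧ i.val % 2 = 1 ∧ j.val = i.val + 1 then 1 else
       if 3 ≤ j.val ∧ j.val % 2 = 1 ∧ i.val = j.val + 1 then -1 else 0) • b 1)
    (c : ℕ → ℝ) :
    LinearMap.toMatrix b b (LieAlgebra.ad ℝ L (∑ i : Fin (2*k+5), c i.val • b i))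
      = Mmat (2*k+5) c := by
  ext i j
  rw [LinearMap.toMatrix_apply, LieAlgebra.ad_apply, bracket_eq b hbracket c j]
  rw [map_add, map_smul, map_smul, b.repr_self, b.repr_self]
  show rfun c j.val • (Finsupp.single (0 : Fin (2*k+5)) (1:ℝ)) i
      + sfun c j.val • (Finsupp.single (1 : Fin (2*k+5)) (1:ℝ)) i = _
  rw [show (0 : Fin (2*k+5)) = ⟨0, by omega⟩ from rfl, show (1 : Fin (2*k+5)) = ⟨1, by omega⟩ from rfl]
  simp only [Finsupp.single_apply, smul_eq_mul, Mmat, Matrix.of_apply, Fin.ext_iff]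
  rcases (show i.val = 0 ∨ i.val = 1 ∨ (i.val ≠ 0 ∧ i.val ≠ 1) by omega) with hi | hi | hi
  · simp [hi]
  · simp [hi]
  · simp [Ne.symm hi.1, Ne.symm hi.2, hi.1, hi.2]

lemma Mmat_sq (k : ℕ) (c : ℕ → ℝ) :
    (Mmat (2*k+5) c) ^ 2 = Matrix.of (fun i j : Fin (2*k+5) =>
      if i.val = 1 then c 2 * rfun c j.val else 0) := by
  ext i j
  rw [pow_two, Matrix.mul_apply]
  have he : ∀ l : Fin (2*k+5), Mmat (2*k+5) c i l * Mmat (2*k+5) c l j =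
      if l.val = 0 then (if i.val = 1 then c 2 * rfun c j.val else 0) else 0 := by
    intro l
    simp only [Mmat, Matrix.of_apply]
    rcases (show l.val = 0 ∨ l.val = 1 ∨ (l.val ≠ 0 ∧ l.val ≠ 1) by omega) with hl | hl | hl <;>
      rcases (show i.val = 0 ∨ i.val = 1 ∨ (i.val ≠ 0 ∧ i.val ≠ 1) by omega) with hi | hi | hi <;>
        simp [hl, hi, rfun, sfun] <;> first | ring | omega
  rw [Finset.sum_congr rfl fun l _ => he l, sum_ite_val 0 _ (Or.inl (by omega))]
  rfl

lemma Mmat_cube (k : ℕ) (c : ℕ → ℝ) : (Mmat (2*k+5) c) ^ 3 = 0 := by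
  ext i j
  rw [pow_succ, Mmat_sq, Matrix.mul_apply]
  rw [Finset.sum_eq_zero, Matrix.zero_apply]
  intro l _
  simp only [Mmat, Matrix.of_apply]
  rcases (show l.val = 0 ∨ l.val = 1 ∨ (l.val ≠ 0 ∧ l.val ≠ 1) by omega) with hl | hl | hl <;>
    simp [hl, rfun, sfun]

lemma exp_of_cube_zero {N : ℕ} (A : Matrix (Fin N) (Fin N) ℝ) (h : A ^ 3 = 0) :
    NormedSpace.exp A = 1 + A + (2:ℝ)⁻¹ • A ^ 2 := by
  rw [show NormedSpace.exp A = ∑' n : ℕ, ((n.factorial : ℝ))⁻¹ • A ^ n from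
    congrFun (NormedSpace.exp_eq_tsum ℝ) A]
  have h4 : ∀ m : ℕ, 3 ≤ m → ((m.factorial :ℝ)⁻¹) • A ^ m = 0 := by
    intro m hm
    have : A ^ m = A ^ 3 * A ^ (m - 3) := by rw [← pow_add]; congr 1; omega
    rw [this, h, zero_mul, smul_zero]
  rw [tsum_eq_sum (s := Finset.range 3) (by intro m hm; exact h4 m (by simpa using hm))]
  rw [Finset.sum_range_succ, Finset.sum_range_succ, Finset.sum_range_one]
  norm_num [Nat.factorial]

noncomputable def Gfun (k : ℕ) (f : Fin (2*k+5) → ℝ) (c : ℕ → ℝ) : Fin (2*k+5) → ℝ :=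
  fun j => f j + (f 0 + 2⁻¹ * (f 1 * c 2)) * rfun c j.val + f 1 * sfun c j.val

lemma vecMul_eval (k : ℕ) (f : Fin (2*k+5) → ℝ) (c : ℕ → ℝ) :
    Matrix.vecMul f (1 + Mmat (2*k+5) c + (2:ℝ)⁻¹ • (Mmat (2*k+5) c) ^ 2) = Gfun k f c := by
  funext j
  rw [Mmat_sq]
  simp only [Matrix.vecMul, dotProduct, Matrix.add_apply, Matrix.smul_apply,
    Matrix.one_apply, Matrix.of_apply, smul_eq_mul]
  have he : ∀ i : Fin (2*k+5), f i * ((if i = j then (1:ℝ) else 0) + Mmat (2*k+5) c i j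
      + 2⁻¹ * (if i.val = 1 then c 2 * rfun c j.val else 0)) =
      (if i = j then f i else 0)
      + ((if i.val = 0 then f 0 * rfun c j.val else 0)
      + (if i.val = 1 then f 1 * sfun c j.val else 0))
      + (if i.val = 1 then f 1 * (2⁻¹ * (c 2 * rfun c j.val)) else 0) := by
    intro i
    simp only [Mmat, Matrix.of_apply]
    rcases (show i.val = 0 ∨ i.val = 1 ∨ (i.val ≠ 0 ∧ i.val ≠ 1) by omega) with hi | hi | hi
    · have hi0 : i = 0 := Fin.ext (by simpa using hi)
      subst hi0
      have h1 : ((0:Fin (2*k+5))).val = 0 := rfl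
      by_cases h : (0:Fin (2*k+5)) = j
      · subst h; simp [h1]; try ring
      · rw [if_neg h, if_neg h]; simp [h1]; try ring
    · have hi1 : i = 1 := Fin.ext (by simpa using hi)
      subst hi1
      have h1 : ((1:Fin (2*k+5))).val = 1 := rfl
      by_cases h : (1:Fin (2*k+5)) = j
      · subst h; simp [h1]; try ring
      · rw [if_neg h, if_neg h]; simp [h1]; try ring
    · by_cases h : i = j
      · subst h; simp [hi.1, hi.2]
      · simp [h, hi.1, hi.2]
  rw [Finset.sum_congr rfl fun i _ => he i, Finset.sum_add_distrib, Finset.sum_add_distrib,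
    Finset.sum_add_distrib, Finset.sum_ite_eq' Finset.univ j f,
    sum_ite_val 0 _ (Or.inl (by omega)),
    sum_ite_val 1 _ (Or.inl (by omega)), sum_ite_val 1 _ (Or.inl (by omega))]
  unfold Gfun
  simp only [Finset.mem_univ, if_pos]
  ring

lemma main_eval (b : Module.Basis (Fin (2*k+5)) ℝ L)
    (hbracket : ∀ i j : Fin (2*k+5), ⁅b i, b j⁆ =
      (if i.val = 2 ∧ j.val = 3 then (1:ℝ) else
       if i.val = 3 ∧ j.val = 2 then -1 else 0) • b 0 +
      (if i.val = 2 ∧ j.val = 0 then (1:ℝ) else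
       if i.val = 0 ∧ j.val = 2 then -1 else
       if 3 ≤ i.val ∧ i.val % 2 = 1 ∧ j.val = i.val + 1 then 1 else
       if 3 ≤ j.val ∧ j.val % 2 = 1 ∧ i.val = j.val + 1 then -1 else 0) • b 1)
    (f : Fin (2*k+5) → ℝ) (c : ℕ → ℝ) :
    Matrix.vecMul f (NormedSpace.exp ((LinearMap.toMatrix b b) (LieAlgebra.ad ℝ L
      (∑ i : Fin (2*k+5), c i.val • b i)))) = Gfun k f c := by
  rw [toMatrix_ad b hbracket c, exp_of_cube_zero _ (Mmat_cube k c), vecMul_eval]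

set_option maxHeartbeats 1000000 in
theorem key_lemma (b : Module.Basis (Fin (2*k+5)) ℝ L)
    (hbracket : ∀ i j : Fin (2*k+5), ⁅b i, b j⁆ =
      (if i.val = 2 ∧ j.val = 3 then (1:ℝ) else
       if i.val = 3 ∧ j.val = 2 then -1 else 0) • b 0 +
      (if i.val = 2 ∧ j.val = 0 then (1:ℝ) else
       if i.val = 0 ∧ j.val = 2 then -1 else
       if 3 ≤ i.val ∧ i.val % 2 = 1 ∧ j.val = i.val + 1 then 1 else
       if 3 ≤ j.val ∧ j.val % 2 = 1 ∧ i.val = j.val + 1 then -1 else 0) • b 1)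
    (f : Fin (2*k+5) → ℝ) :
    { y | ∃ X : L, y = Matrix.vecMul f (NormedSpace.exp
        ((LinearMap.toMatrix b b) (LieAlgebra.ad ℝ L X))) }
      = { y | ∃ c : ℕ → ℝ, y = Gfun k f c } := by
  ext y
  simp only [Set.mem_setOf_eq]
  constructor
  · rintro ⟨X, rfl⟩
    set c : ℕ → ℝ := fun m => if h : m < 2*k+5 then b.repr X ⟨m, h⟩ else 0 with hc
    refine ⟨c, ?_⟩
    have hX : ∑ i : Fin (2*k+5), c i.val • b i = X := by
      rw [Finset.sum_congr rfl (fun i _ => by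
        rw [show c i.val = b.repr X i from by rw [hc]; simp [i.isLt]]), b.sum_repr]
    rw [← hX]
    exact main_eval b hbracket f c
  · rintro ⟨c, rfl⟩
    exact ⟨∑ i : Fin (2*k+5), c i.val • b i, (main_eval b hbracket f c).symm⟩

/-- coadjoint orbit picture for `G_{5+2k}` (`k ≥ 0`; `[X3,X4]=X1`,
`[X3,X1]=[X4,X5]=[X6,X7]=⋯=[X_{4+2k},X_{5+2k}]=X2`).
`Ω_F(G) = {F ∘ exp(ad_X) : X ∈ G}` in the coordinates of the dual basis. -/
theorem stmt_14 (k : ℕ) (L : Type) [LieRing L] [LieAlgebra ℝ L]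
    (b : Module.Basis (Fin (2*k+5)) ℝ L)
    (hbracket : ∀ i j : Fin (2*k+5), ⁅b i, b j⁆ =
      (if i.val = 2 ∧ j.val = 3 then (1:ℝ) else
       if i.val = 3 ∧ j.val = 2 then -1 else 0) • b 0 +
      (if i.val = 2 ∧ j.val = 0 then (1:ℝ) else
       if i.val = 0 ∧ j.val = 2 then -1 else
       if 3 ≤ i.val ∧ i.val % 2 = 1 ∧ j.val = i.val + 1 then 1 else
       if 3 ≤ j.val ∧ j.val % 2 = 1 ∧ i.val = j.val + 1 then -1 else 0) • b 1)
    (f : Fin (2*k+5) → ℝ) (Ω : Set (Fin (2*k+5) → ℝ))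
    (hΩ : Ω = { y | ∃ X : L,
      y = Matrix.vecMul f (NormedSpace.exp ((LinearMap.toMatrix b b) (LieAlgebra.ad ℝ L X))) }) :
    (f 0 = 0 ∧ f 1 = 0 → Ω = {f}) ∧
    (f 1 = 0 ∧ f 0 ≠ 0 →
      Ω = { x | x 0 = f 0 ∧ x 1 = 0 ∧ ∀ j : Fin (2*k+5), 4 ≤ j.val → x j = f j }) ∧
    (f 1 ≠ 0 → Ω = { x | x 1 = f 1 }) := by
  have key : Ω = { y | ∃ c : ℕ → ℝ, y = Gfun k f c } := hΩ.trans (key_lemma b hbracket f)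
  have lt2 : 2 < 2*k+5 := Nat.lt_of_lt_of_le (by norm_num) (Nat.le_add_left 5 (2*k))
  have lt3 : 3 < 2*k+5 := Nat.lt_of_lt_of_le (by norm_num) (Nat.le_add_left 5 (2*k))
  have lt4 : 4 < 2*k+5 := Nat.lt_of_lt_of_le (by norm_num) (Nat.le_add_left 5 (2*k))
  have hv0 : ((0 : Fin (2*k+5))).val = 0 := rfl
  have hv1 : ((1 : Fin (2*k+5))).val = 1 := rfl
  have hr0 : ∀ c : ℕ → ℝ, rfun c ((0 : Fin (2*k+5)).val) = 0 := by
    intro c; rw [hv0]; norm_num [rfun]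
  have hr1 : ∀ c : ℕ → ℝ, rfun c ((1 : Fin (2*k+5)).val) = 0 := by
    intro c; rw [hv1]; norm_num [rfun]
  have hs0 : ∀ c : ℕ → ℝ, sfun c ((0 : Fin (2*k+5)).val) = c 2 := by
    intro c; rw [hv0]; norm_num [sfun]
  have hs1 : ∀ c : ℕ → ℝ, sfun c ((1 : Fin (2*k+5)).val) = 0 := by
    intro c; rw [hv1]; norm_num [sfun]
  have hr2 : ∀ c : ℕ → ℝ, rfun c ((⟨2, lt2⟩ : Fin (2*k+5))).val = -c 3 := by
    intro c; norm_num [rfun]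
  have hr3 : ∀ c : ℕ → ℝ, rfun c ((⟨3, lt3⟩ : Fin (2*k+5))).val = c 2 := by
    intro c; norm_num [rfun]
  have hr4 : ∀ c : ℕ → ℝ, rfun c ((⟨4, lt4⟩ : Fin (2*k+5))).val = 0 := by
    intro c; norm_num [rfun]
  have hs2 : ∀ c : ℕ → ℝ, sfun c ((⟨2, lt2⟩ : Fin (2*k+5))).val = -c 0 := by
    intro c; norm_num [sfun]
  have hs3 : ∀ c : ℕ → ℝ, sfun c ((⟨3, lt3⟩ : Fin (2*k+5))).val = -c 4 := by
    intro c; norm_num [sfun]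
  have hs4 : ∀ c : ℕ → ℝ, sfun c ((⟨4, lt4⟩ : Fin (2*k+5))).val = c 3 := by
    intro c; norm_num [sfun]
  refine ⟨?_, ?_, ?_⟩
  · rintro ⟨h0, h1⟩
    have hG : ∀ c : ℕ → ℝ, Gfun k f c = f := by
      intro c; funext j; unfold Gfun; rw [h0, h1]; ring
    rw [key]
    ext y
    simp only [Set.mem_setOf_eq, Set.mem_singleton_iff]
    constructor
    · rintro ⟨c, rfl⟩; exact hG c
    · rintro rfl; exact ⟨fun _ => 0, (hG _).symm⟩
  · rintro ⟨h1, h0⟩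
    have hG : ∀ (c : ℕ → ℝ) (j : Fin (2*k+5)), Gfun k f c j = f j + f 0 * rfun c j.val := by
      intro c j; unfold Gfun; rw [h1]; ring
    rw [key]
    ext x
    simp only [Set.mem_setOf_eq]
    constructor
    · rintro ⟨c, rfl⟩
      refine ⟨?_, ?_, ?_⟩
      · rw [hG, hr0]; ring
      · rw [hG, hr1, h1]; ring
      · intro j hj
        rw [hG, show rfun c j.val = 0 from by
          unfold rfun; rw [if_neg (by omega), if_neg (by omega)]]
        ring
    · rintro ⟨hx0, hx1, hrest⟩
      set d : ℕ → ℝ := fun m => if m = 3 then (f ⟨2, lt2⟩ - x ⟨2, lt2⟩)/f 0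
        else if m = 2 then (x ⟨3, lt3⟩ - f ⟨3, lt3⟩)/f 0 else 0 with hd
      have hd3 : d 3 = (f ⟨2, lt2⟩ - x ⟨2, lt2⟩)/f 0 := by simp only [hd]; norm_num
      have hd2 : d 2 = (x ⟨3, lt3⟩ - f ⟨3, lt3⟩)/f 0 := by simp only [hd]; norm_num
      refine ⟨d, ?_⟩
      funext j
      rw [hG]
      rcases (show j.val = 0 ∨ j.val = 1 ∨ j.val = 2 ∨ j.val = 3 ∨ 4 ≤ j.val by omega)
        with hj | hj | hj | hj | hj
      · have : j = 0 := Fin.ext hj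
        subst this; rw [hx0, hr0]; ring
      · have : j = 1 := Fin.ext hj
        subst this; rw [hx1, hr1, h1]; ring
      · have : j = ⟨2, lt2⟩ := Fin.ext hj
        subst this
        rw [hr2, hd3]
        field_simp
        ring
      · have : j = ⟨3, lt3⟩ := Fin.ext hj
        subst this
        rw [hr3, hd2]
        field_simp
        ring
      · rw [show rfun d j.val = 0 from by
          unfold rfun; rw [if_neg (by omega), if_neg (by omega)], hrest j hj]
        ring
  · intro h1
    rw [key]
    ext x
    simp only [Set.mem_setOf_eq]
    constructor
    · rintro ⟨c, rfl⟩
      show Gfun k f c 1 = f 1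
      unfold Gfun; rw [hr1, hs1]; ring
    · intro hx
      set c2 : ℝ := (x 0 - f 0)/f 1 with hc2
      set P : ℝ := f 0 + 2⁻¹ * (f 1 * c2) with hP
      set c3 : ℝ := (x ⟨4, lt4⟩ - f ⟨4, lt4⟩)/f 1 with hc3
      set c : ℕ → ℝ := fun m =>
        if h5 : 5 ≤ m ∧ m % 2 = 1 ∧ m + 1 < 2*k+5 then (x ⟨m+1, h5.2.2⟩ - f ⟨m+1, h5.2.2⟩)/f 1
        else if h6 : 6 ≤ m ∧ m % 2 = 0 ∧ m - 1 < 2*k+5 then (f ⟨m-1, h6.2.2⟩ - x ⟨m-1, h6.2.2⟩)/f 1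
        else if m = 2 then c2
        else if m = 3 then c3
        else if m = 4 then (f ⟨3, lt3⟩ + P * c2 - x ⟨3, lt3⟩)/f 1
        else if m = 0 then (f ⟨2, lt2⟩ - x ⟨2, lt2⟩ - P * c3)/f 1
        else 0 with hc
      have hcv0 : c 0 = (f ⟨2, lt2⟩ - x ⟨2, lt2⟩ - P * c3)/f 1 := by
        simp only [hc]; norm_num
      have hcv2 : c 2 = c2 := by simp only [hc]; norm_num
      have hcv3 : c 3 = c3 := by simp only [hc]; norm_num
      have hcv4 : c 4 = (f ⟨3, lt3⟩ + P * c2 - x ⟨3, lt3⟩)/f 1 := by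
        simp only [hc]; norm_num
      have hPget : f 0 + 2⁻¹ * (f 1 * c 2) = P := by rw [hcv2, hP]
      refine ⟨c, ?_⟩
      funext j
      rcases (show j.val = 0 ∨ j.val = 1 ∨ j.val = 2 ∨ j.val = 3 ∨ j.val = 4
          ∨ (6 ≤ j.val ∧ j.val % 2 = 0) ∨ (5 ≤ j.val ∧ j.val % 2 = 1) by omega)
        with hj | hj | hj | hj | hj | hj | hj
      · have : j = 0 := Fin.ext hj
        subst this
        show x 0 = Gfun k f c 0
        unfold Gfun; rw [hr0, hs0, hcv2, hc2]
        field_simp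
        ring
      · have : j = 1 := Fin.ext hj
        subst this
        show x 1 = Gfun k f c 1
        unfold Gfun; rw [hr1, hs1, hx]; ring
      · have : j = ⟨2, lt2⟩ := Fin.ext hj
        subst this
        show x _ = Gfun k f c ⟨2, lt2⟩
        unfold Gfun
        rw [hr2, hs2, hPget, hcv0, hcv3]
        field_simp
        try ring
      · have : j = ⟨3, lt3⟩ := Fin.ext hj
        subst this
        show x _ = Gfun k f c ⟨3, lt3⟩
        unfold Gfun
        rw [hr3, hs3, hPget, hcv2, hcv4]
        field_simp
        try ring
      · have : j = ⟨4, lt4⟩ := Fin.ext hj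
        subst this
        show x _ = Gfun k f c ⟨4, lt4⟩
        unfold Gfun
        rw [hr4, hs4, hcv3, hc3]
        field_simp
        ring
      · -- j even, ≥ 6
        have hrj : rfun c j.val = 0 := by
          unfold rfun; rw [if_neg (by omega), if_neg (by omega)]
        have hsj : sfun c j.val = c (j.val - 1) := by
          unfold sfun
          rw [if_neg (by omega), if_neg (by omega), if_neg (by omega), if_pos (by omega)]
        have hb : j.val - 1 + 1 < 2*k+5 := by have := j.isLt; omega
        have hcj : c (j.val - 1) = (x j - f j)/f 1 := by
          simp only [hc]
          rw [dif_pos (show 5 ≤ j.val - 1 ∧ (j.val - 1) % 2 = 1 ∧ j.val - 1 + 1 < 2*k+5 from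
            ⟨by omega, by omega, hb⟩)]
          have hjj : (⟨j.val - 1 + 1, hb⟩ : Fin (2*k+5)) = j := Fin.ext (by simp; omega)
          rw [hjj]
        unfold Gfun
        rw [hrj, hsj, hcj]
        field_simp
        ring
      · -- j odd, ≥ 5
        have hrj : rfun c j.val = 0 := by
          unfold rfun; rw [if_neg (by omega), if_neg (by omega)]
        have hsj : sfun c j.val = -c (j.val + 1) := by
          unfold sfun
          rw [if_neg (by omega), if_neg (by omega), if_neg (by omega), if_neg (by omega),
            if_pos (by omega)]
        have hb : j.val + 1 - 1 < 2*k+5 := by have := j.isLt; omega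
        have hcj : c (j.val + 1) = (f j - x j)/f 1 := by
          simp only [hc]
          rw [dif_neg (by omega),
            dif_pos (show 6 ≤ j.val + 1 ∧ (j.val + 1) % 2 = 0 ∧ j.val + 1 - 1 < 2*k+5 from
            ⟨by omega, by omega, hb⟩)]
          have hjj : (⟨j.val + 1 - 1, hb⟩ : Fin (2*k+5)) = j := Fin.ext (by simp)
          rw [hjj]
        unfold Gfun
        rw [hrj, hsj, hcj]
        field_simp
        ring
end

section
/- Let k ≥ 0, n = 6+2k, G = G_{6+2k,2}, and let F = (f1,…,f_n) ∈ G* ≅ ℝⁿ. If f1 = f2 = 0 then Ω_F(G) = {F}. If f2 = 0 ≠ f1 then Ω_F(G) = { x ∈ ℝⁿ : x1 = f1, x2 = 0, x_j = f_j for all j = 5,…,6+2k } (a 2-dimensional plane with x3, x4 free). If f2 ≠ 0 then Ω_F(G) = { x ∈ ℝⁿ : x2 = f2, x1² − 2·x2·x4 = f1² − 2·f2·f4 } (a (4+2k)-dimensional parabolic cylinder with x3, x5,…,x_{6+2k} free). -/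
open scoped Matrix Nat

namespace Stmt16Aux

/-- coefficient of `b 0` in `⁅X, b q⁆` when `X` has coordinates `x`. -/
def aa (k : ℕ) (x : Fin (2*k+6) → ℝ) (q : Fin (2*k+6)) : ℝ :=
  if q.val = 3 then x ⟨2, by omega⟩ else if q.val = 2 then -x ⟨3, by omega⟩ else 0

/-- coefficient of `b 1` in `⁅X, b q⁆` when `X` has coordinates `x`. -/
def cc (k : ℕ) (x : Fin (2*k+6) → ℝ) (q : Fin (2*k+6)) : ℝ :=
  if q.val = 0 then x ⟨2, by omega⟩
  else if q.val = 2 then -x ⟨0, by omega⟩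
  else if h : 4 ≤ q.val ∧ q.val % 2 = 0 then -x ⟨q.val + 1, by have := q.isLt; omega⟩
  else if h' : 5 ≤ q.val ∧ q.val % 2 = 1 then x ⟨q.val - 1, by have := q.isLt; omega⟩
  else 0

lemma sumA (k : ℕ) (x : Fin (2*k+6) → ℝ) (q : Fin (2*k+6)) :
    ∑ i : Fin (2*k+6), x i * (if i.val = 2 ∧ q.val = 3 then (1:ℝ) else
      if i.val = 3 ∧ q.val = 2 then -1 else 0) = aa k x q := by
  unfold aa
  by_cases h3 : q.val = 3
  · rw [Finset.sum_eq_single_of_mem (⟨2, by omega⟩ : Fin (2*k+6)) (Finset.mem_univ _)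
      (fun i _ hne => by
        have hi : i.val ≠ 2 := fun hc => hne (Fin.ext hc)
        (try simp only [Fin.val_mk, true_and, and_true, false_and, and_false]); split_ifs <;> first | (exfalso; omega) | ring)]
    (try simp only [Fin.val_mk, true_and, and_true, false_and, and_false]); split_ifs <;> first | (exfalso; omega) | ring
  · by_cases h2 : q.val = 2
    · rw [Finset.sum_eq_single_of_mem (⟨3, by omega⟩ : Fin (2*k+6)) (Finset.mem_univ _)
        (fun i _ hne => by
          have hi : i.val ≠ 3 := fun hc => hne (Fin.ext hc)
          (try simp only [Fin.val_mk, true_and, and_true, false_and, and_false]); split_ifs <;> first | (exfalso; omega) | ring)]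
      (try simp only [Fin.val_mk, true_and, and_true, false_and, and_false]); split_ifs <;> first | (exfalso; omega) | ring
    · rw [Finset.sum_eq_zero (fun i _ => by
        (try simp only [Fin.val_mk, true_and, and_true, false_and, and_false]); split_ifs <;> first | (exfalso; omega) | ring)]
      (try simp only [Fin.val_mk, true_and, and_true, false_and, and_false]); split_ifs <;> first | (exfalso; omega) | ring

lemma sumC (k : ℕ) (x : Fin (2*k+6) → ℝ) (q : Fin (2*k+6)) :
    ∑ i : Fin (2*k+6), x i * (if i.val = 2 ∧ q.val = 0 then (1:ℝ) else
       if i.val = 0 ∧ q.val = 2 then -1 else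
       if 4 ≤ i.val ∧ i.val % 2 = 0 ∧ q.val = i.val + 1 then 1 else
       if 4 ≤ q.val ∧ q.val % 2 = 0 ∧ i.val = q.val + 1 then -1 else 0) = cc k x q := by
  unfold cc
  by_cases h0 : q.val = 0
  · rw [Finset.sum_eq_single_of_mem (⟨2, by omega⟩ : Fin (2*k+6)) (Finset.mem_univ _)
      (fun i _ hne => by
        have hi : i.val ≠ 2 := fun hc => hne (Fin.ext hc)
        (try simp only [Fin.val_mk, true_and, and_true, false_and, and_false]); split_ifs <;> first | (exfalso; omega) | ring)]
    (try simp only [Fin.val_mk, true_and, and_true, false_and, and_false]); split_ifs <;> first | (exfalso; omega) | ring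
  · by_cases h2 : q.val = 2
    · rw [Finset.sum_eq_single_of_mem (⟨0, by omega⟩ : Fin (2*k+6)) (Finset.mem_univ _)
        (fun i _ hne => by
          have hi : i.val ≠ 0 := fun hc => hne (Fin.ext hc)
          (try simp only [Fin.val_mk, true_and, and_true, false_and, and_false]); split_ifs <;> first | (exfalso; omega) | ring)]
      (try simp only [Fin.val_mk, true_and, and_true, false_and, and_false]); split_ifs <;> first | (exfalso; omega) | ring
    · by_cases he : 4 ≤ q.val ∧ q.val % 2 = 0
      · rw [Finset.sum_eq_single_of_mem (⟨q.val + 1, by have := q.isLt; omega⟩ : Fin (2*k+6))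
          (Finset.mem_univ _)
          (fun i _ hne => by
            have hi : i.val ≠ q.val + 1 := fun hc => hne (Fin.ext hc)
            (try simp only [Fin.val_mk, true_and, and_true, false_and, and_false]); split_ifs <;> first | (exfalso; omega) | ring)]
        (try simp only [Fin.val_mk, true_and, and_true, false_and, and_false]); split_ifs <;> first | (exfalso; omega) | ring
      · by_cases ho : 5 ≤ q.val ∧ q.val % 2 = 1
        · rw [Finset.sum_eq_single_of_mem (⟨q.val - 1, by have := q.isLt; omega⟩ : Fin (2*k+6))
            (Finset.mem_univ _)
            (fun i _ hne => by
              have hi : i.val ≠ q.val - 1 := fun hc => hne (Fin.ext hc)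
              (try simp only [Fin.val_mk, true_and, and_true, false_and, and_false]); split_ifs <;> first | (exfalso; omega) | ring)]
          (try simp only [Fin.val_mk, true_and, and_true, false_and, and_false]); split_ifs <;> first | (exfalso; omega) | ring
        · rw [Finset.sum_eq_zero (fun i _ => by
            (try simp only [Fin.val_mk, true_and, and_true, false_and, and_false]); split_ifs <;> first | (exfalso; omega) | ring)]
          (try simp only [Fin.val_mk, true_and, and_true, false_and, and_false]); split_ifs <;> first | (exfalso; omega) | ring


lemma vmv_mul {n : ℕ} (u v u' v' : Fin n → ℝ) :
    Matrix.vecMulVec u v * Matrix.vecMulVec u' v' =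
      (v ⬝ᵥ u') • Matrix.vecMulVec u v' := by
  ext p q
  simp only [Matrix.mul_apply, Matrix.vecMulVec_apply, Matrix.smul_apply, dotProduct,
    smul_eq_mul, Finset.sum_mul]
  exact Finset.sum_congr rfl fun r _ => by ring

lemma vecMul_vmv {n : ℕ} (v u w : Fin n → ℝ) :
    v ᵥ* Matrix.vecMulVec u w = (v ⬝ᵥ u) • w := by
  funext j
  simp only [Matrix.vecMul, dotProduct, Matrix.vecMulVec_apply, Pi.smul_apply,
    smul_eq_mul, Finset.sum_mul]
  exact Finset.sum_congr rfl fun r _ => by ring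

lemma vecMul_smul_right {n : ℕ} (v : Fin n → ℝ) (c : ℝ) (A : Matrix (Fin n) (Fin n) ℝ) :
    v ᵥ* (c • A) = c • (v ᵥ* A) := by
  funext j
  simp only [Matrix.vecMul, dotProduct, Matrix.smul_apply, Pi.smul_apply,
    smul_eq_mul, Finset.mul_sum]
  exact Finset.sum_congr rfl fun r _ => by ring

lemma exp_cube {n : ℕ} (A : Matrix (Fin n) (Fin n) ℝ) (h : A ^ 3 = 0) :
    NormedSpace.exp A = 1 + A + (2:ℝ)⁻¹ • A ^ 2 := by
  rw [NormedSpace.exp_eq_tsum ℝ]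
  have hz : ∀ m ∉ Finset.range 3, ((m ! : ℝ)⁻¹) • A ^ m = 0 := by
    intro m hm
    rw [Finset.mem_range, not_lt] at hm
    have hA : A ^ m = 0 := by
      calc A ^ m = A ^ 3 * A ^ (m - 3) := by rw [← pow_add]; congr 1; omega
        _ = 0 := by rw [h, zero_mul]
    rw [hA, smul_zero]
  show ∑' m : ℕ, ((m ! : ℝ)⁻¹) • A ^ m = _
  rw [tsum_eq_sum hz, Finset.sum_range_succ, Finset.sum_range_succ, Finset.sum_range_one]
  norm_num [Nat.factorial]

variable {k : ℕ} {L : Type} [LieRing L] [LieAlgebra ℝ L]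

lemma matrix_ad (b : Module.Basis (Fin (2*k+6)) ℝ L)
    (hbracket : ∀ i j : Fin (2*k+6), ⁅b i, b j⁆ =
      (if i.val = 2 ∧ j.val = 3 then (1:ℝ) else
       if i.val = 3 ∧ j.val = 2 then -1 else 0) • b 0 +
      (if i.val = 2 ∧ j.val = 0 then (1:ℝ) else
       if i.val = 0 ∧ j.val = 2 then -1 else
       if 4 ≤ i.val ∧ i.val % 2 = 0 ∧ j.val = i.val + 1 then 1 else
       if 4 ≤ j.val ∧ j.val % 2 = 0 ∧ i.val = j.val + 1 then -1 else 0) • b 1)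
    (X : L) :
    (LinearMap.toMatrix b b) (LieAlgebra.ad ℝ L X) =
      Matrix.vecMulVec (Pi.single 0 1) (aa k (fun i => b.repr X i)) +
      Matrix.vecMulVec (Pi.single 1 1) (cc k (fun i => b.repr X i)) := by
  have hXq : ∀ q, ⁅X, b q⁆ =
      aa k (fun i => b.repr X i) q • b 0 + cc k (fun i => b.repr X i) q • b 1 := by
    intro q
    have had : ⁅X, b q⁆ = (LieAlgebra.ad ℝ L X) (b q) := rfl
    rw [had]
    conv_lhs => rw [← b.sum_repr X]
    rw [map_sum]
    simp only [map_smul]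
    rw [LinearMap.sum_apply]
    simp only [LinearMap.smul_apply, LieHom.coe_toLinearMap, LieAlgebra.ad_apply, hbracket,
      smul_add, smul_smul]
    rw [Finset.sum_add_distrib, ← Finset.sum_smul, ← Finset.sum_smul, sumA, sumC]
  ext p q
  rw [LinearMap.toMatrix_apply, LieAlgebra.ad_apply, hXq, map_add, map_smul, map_smul,
    b.repr_self, b.repr_self]
  have h01 : (0 : Fin (2*k+6)) ≠ 1 := by
    intro hc
    have := congrArg Fin.val hc
    change (0:ℕ) = 1 at this
    exact absurd this (by norm_num)
  simp only [Matrix.add_apply, Matrix.vecMulVec_apply, Finsupp.coe_add, Finsupp.coe_smul,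
    Pi.add_apply, Pi.smul_apply, Finsupp.single_apply, smul_eq_mul]
  rcases eq_or_ne p 0 with hp | hp
  · subst hp
    rw [Pi.single_eq_same, Pi.single_eq_of_ne h01, if_pos rfl, if_neg h01.symm]
    ring
  · rcases eq_or_ne p 1 with hp1 | hp1
    · subst hp1
      rw [Pi.single_eq_of_ne h01.symm, Pi.single_eq_same, if_neg h01, if_pos rfl]
      ring
    · rw [Pi.single_eq_of_ne hp, Pi.single_eq_of_ne hp1, if_neg (Ne.symm hp),
        if_neg (Ne.symm hp1)]
      ring

lemma v0 {k : ℕ} : ((0 : Fin (2*k+6)) : ℕ) = 0 := rfl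
lemma v1 {k : ℕ} : ((1 : Fin (2*k+6)) : ℕ) = 1 := rfl
lemma v2 {k : ℕ} : ((2 : Fin (2*k+6)) : ℕ) = 2 := rfl
lemma v3 {k : ℕ} : ((3 : Fin (2*k+6)) : ℕ) = 3 := rfl

variable {x : Fin (2*k+6) → ℝ} {q : Fin (2*k+6)}

lemma aa_3 (h : q.val = 3) : aa k x q = x ⟨2, by omega⟩ := by unfold aa; rw [if_pos h]

lemma aa_2 (h : q.val = 2) : aa k x q = -x ⟨3, by omega⟩ := by
  unfold aa; rw [if_neg (by omega), if_pos h]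

lemma aa_of_ne (h3 : q.val ≠ 3) (h2 : q.val ≠ 2) : aa k x q = 0 := by
  unfold aa; rw [if_neg h3, if_neg h2]

lemma cc_0 (h : q.val = 0) : cc k x q = x ⟨2, by omega⟩ := by unfold cc; rw [if_pos h]

lemma cc_2 (h : q.val = 2) : cc k x q = -x ⟨0, by omega⟩ := by
  unfold cc; rw [if_neg (by omega), if_pos h]

lemma cc_even (h4 : 4 ≤ q.val) (he : q.val % 2 = 0) :
    cc k x q = -x ⟨q.val + 1, by have := q.isLt; omega⟩ := by
  unfold cc; rw [if_neg (by omega), if_neg (by omega), dif_pos ⟨h4, he⟩]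

lemma cc_odd (h5 : 5 ≤ q.val) (ho : q.val % 2 = 1) :
    cc k x q = x ⟨q.val - 1, by have := q.isLt; omega⟩ := by
  unfold cc
  rw [if_neg (by omega), if_neg (by omega), dif_neg (by omega), dif_pos ⟨h5, ho⟩]

lemma cc_1 (h : q.val = 1) : cc k x q = 0 := by
  unfold cc; rw [if_neg (by omega), if_neg (by omega), dif_neg (by omega), dif_neg (by omega)]

lemma cc_3 (h : q.val = 3) : cc k x q = 0 := by
  unfold cc; rw [if_neg (by omega), if_neg (by omega), dif_neg (by omega), dif_neg (by omega)]

/-- the orbit formula -/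
noncomputable def yy (k : ℕ) (f x : Fin (2*k+6) → ℝ) : Fin (2*k+6) → ℝ := fun q =>
  f q + (f 0 + (2:ℝ)⁻¹ * f 1 * x ⟨2, by omega⟩) * aa k x q + f 1 * cc k x q

lemma key (b : Module.Basis (Fin (2*k+6)) ℝ L)
    (hbracket : ∀ i j : Fin (2*k+6), ⁅b i, b j⁆ =
      (if i.val = 2 ∧ j.val = 3 then (1:ℝ) else
       if i.val = 3 ∧ j.val = 2 then -1 else 0) • b 0 +
      (if i.val = 2 ∧ j.val = 0 then (1:ℝ) else
       if i.val = 0 ∧ j.val = 2 then -1 else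
       if 4 ≤ i.val ∧ i.val % 2 = 0 ∧ j.val = i.val + 1 then 1 else
       if 4 ≤ j.val ∧ j.val % 2 = 0 ∧ i.val = j.val + 1 then -1 else 0) • b 1)
    (f : Fin (2*k+6) → ℝ) (X : L) (x : Fin (2*k+6) → ℝ) (hx : ∀ i, b.repr X i = x i) :
    Matrix.vecMul f (NormedSpace.exp ((LinearMap.toMatrix b b) (LieAlgebra.ad ℝ L X))) =
      yy k f x := by
  have hxx : (fun i => b.repr X i) = x := funext hx
  have hma := matrix_ad b hbracket X
  rw [hxx] at hma
  set u0 : Fin (2*k+6) → ℝ := Pi.single 0 1 with hu0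
  set u1 : Fin (2*k+6) → ℝ := Pi.single 1 1 with hu1
  set a : Fin (2*k+6) → ℝ := aa k x with ha
  set c : Fin (2*k+6) → ℝ := cc k x with hc
  have ha0 : a 0 = 0 := aa_of_ne (by rw [v0]; omega) (by rw [v0]; omega)
  have ha1 : a 1 = 0 := aa_of_ne (by rw [v1]; omega) (by rw [v1]; omega)
  have hc1 : c 1 = 0 := cc_1 v1
  have hc0 : c 0 = x ⟨2, by omega⟩ := cc_0 v0
  have hda0 : a ⬝ᵥ u0 = 0 := by rw [hu0, dotProduct_single, ha0, zero_mul]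
  have hda1 : a ⬝ᵥ u1 = 0 := by rw [hu1, dotProduct_single, ha1, zero_mul]
  have hdc1 : c ⬝ᵥ u1 = 0 := by rw [hu1, dotProduct_single, hc1, zero_mul]
  have hdc0 : c ⬝ᵥ u0 = c 0 := by rw [hu0, dotProduct_single, mul_one]
  have hM2 : (Matrix.vecMulVec u0 a + Matrix.vecMulVec u1 c) ^ 2
      = c 0 • Matrix.vecMulVec u1 a := by
    rw [sq, add_mul, mul_add, mul_add, vmv_mul, vmv_mul, vmv_mul, vmv_mul,
      hda0, hda1, hdc1, hdc0]
    simp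
  have hM3 : (Matrix.vecMulVec u0 a + Matrix.vecMulVec u1 c) ^ 3 = 0 := by
    have h3 : (3:ℕ) = 2 + 1 := rfl
    rw [h3, pow_succ, hM2, smul_mul_assoc, mul_add, vmv_mul, vmv_mul, hda0, hda1]
    simp
  rw [hma, exp_cube _ hM3, hM2]
  rw [Matrix.vecMul_add, Matrix.vecMul_add, Matrix.vecMul_one, Matrix.vecMul_add,
    vecMul_smul_right, vecMul_smul_right, vecMul_vmv, vecMul_vmv, vecMul_vmv]
  rw [hu0, hu1, dotProduct_single, dotProduct_single, hc0]
  funext q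
  simp only [Pi.add_apply, Pi.smul_apply, smul_eq_mul, yy]
  ring

lemma yy_0 (f : Fin (2*k+6) → ℝ) : yy k f x 0 = f 0 + f 1 * x ⟨2, by omega⟩ := by
  unfold yy; rw [aa_of_ne (by rw [v0]; omega) (by rw [v0]; omega), cc_0 v0]; ring

lemma yy_1 (f : Fin (2*k+6) → ℝ) : yy k f x 1 = f 1 := by
  unfold yy; rw [aa_of_ne (by rw [v1]; omega) (by rw [v1]; omega), cc_1 v1]; ring

lemma yy_2 (f : Fin (2*k+6) → ℝ) : yy k f x 2 =
    f 2 - (f 0 + (2:ℝ)⁻¹ * f 1 * x ⟨2, by omega⟩) * x ⟨3, by omega⟩ - f 1 * x ⟨0, by omega⟩ := by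
  unfold yy; rw [aa_2 v2, cc_2 v2]; ring

lemma yy_3 (f : Fin (2*k+6) → ℝ) : yy k f x 3 =
    f 3 + (f 0 + (2:ℝ)⁻¹ * f 1 * x ⟨2, by omega⟩) * x ⟨2, by omega⟩ := by
  unfold yy; rw [aa_3 v3, cc_3 v3]; ring

lemma yy_even (f : Fin (2*k+6) → ℝ) (h4 : 4 ≤ q.val) (he : q.val % 2 = 0) :
    yy k f x q = f q - f 1 * x ⟨q.val + 1, by have := q.isLt; omega⟩ := by
  unfold yy; rw [aa_of_ne (by omega) (by omega), cc_even h4 he]; ring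

lemma yy_odd (f : Fin (2*k+6) → ℝ) (h5 : 5 ≤ q.val) (ho : q.val % 2 = 1) :
    yy k f x q = f q + f 1 * x ⟨q.val - 1, by have := q.isLt; omega⟩ := by
  unfold yy; rw [aa_of_ne (by omega) (by omega), cc_odd h5 ho]; ring

lemma fin_cases6 (q : Fin (2*k+6)) :
    q = 0 ∨ q = 1 ∨ q = 2 ∨ q = 3 ∨ (4 ≤ q.val ∧ q.val % 2 = 0) ∨ (5 ≤ q.val ∧ q.val % 2 = 1) := by
  by_cases h0 : q.val = 0
  · exact Or.inl (Fin.ext (by rw [v0]; exact h0))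
  by_cases h1 : q.val = 1
  · exact Or.inr (Or.inl (Fin.ext (by rw [v1]; exact h1)))
  by_cases h2 : q.val = 2
  · exact Or.inr (Or.inr (Or.inl (Fin.ext (by rw [v2]; exact h2))))
  by_cases h3 : q.val = 3
  · exact Or.inr (Or.inr (Or.inr (Or.inl (Fin.ext (by rw [v3]; exact h3)))))
  by_cases he : q.val % 2 = 0
  · exact Or.inr (Or.inr (Or.inr (Or.inr (Or.inl ⟨by omega, he⟩))))
  · exact Or.inr (Or.inr (Or.inr (Or.inr (Or.inr ⟨by omega, by omega⟩))))

end Stmt16Aux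

/-- coadjoint orbit picture for `G_{6+2k,2}` (`k ≥ 0`; `[X3,X4]=X1`,
`[X3,X1]=[X5,X6]=⋯=[X_{5+2k},X_{6+2k}]=X2`).
`Ω_F(G) = {F ∘ exp(ad_X) : X ∈ G}` in the coordinates of the dual basis. -/
theorem stmt_16 (k : ℕ) (L : Type) [LieRing L] [LieAlgebra ℝ L]
    (b : Module.Basis (Fin (2*k+6)) ℝ L)
    (hbracket : ∀ i j : Fin (2*k+6), ⁅b i, b j⁆ =
      (if i.val = 2 ∧ j.val = 3 then (1:ℝ) else
       if i.val = 3 ∧ j.val = 2 then -1 else 0) • b 0 +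
      (if i.val = 2 ∧ j.val = 0 then (1:ℝ) else
       if i.val = 0 ∧ j.val = 2 then -1 else
       if 4 ≤ i.val ∧ i.val % 2 = 0 ∧ j.val = i.val + 1 then 1 else
       if 4 ≤ j.val ∧ j.val % 2 = 0 ∧ i.val = j.val + 1 then -1 else 0) • b 1)
    (f : Fin (2*k+6) → ℝ) (Ω : Set (Fin (2*k+6) → ℝ))
    (hΩ : Ω = { y | ∃ X : L,
      y = Matrix.vecMul f (NormedSpace.exp ((LinearMap.toMatrix b b) (LieAlgebra.ad ℝ L X))) }) :
    (f 0 = 0 ∧ f 1 = 0 → Ω = {f}) ∧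
    (f 1 = 0 ∧ f 0 ≠ 0 →
      Ω = { x | x 0 = f 0 ∧ x 1 = 0 ∧ ∀ j : Fin (2*k+6), 4 ≤ j.val → x j = f j }) ∧
    (f 1 ≠ 0 →
      Ω = { x | x 1 = f 1 ∧ (x 0)^2 - 2 * x 1 * x 3 = (f 0)^2 - 2 * f 1 * f 3 }) := by
  have hmem : ∀ y : Fin (2*k+6) → ℝ, y ∈ Ω ↔
      ∃ x : Fin (2*k+6) → ℝ, y = Stmt16Aux.yy k f x := by
    intro y
    rw [hΩ]
    constructor
    · rintro ⟨X, rfl⟩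
      exact ⟨fun i => b.repr X i, Stmt16Aux.key b hbracket f X _ (fun i => rfl)⟩
    · rintro ⟨x, rfl⟩
      refine ⟨b.equivFun.symm x, ?_⟩
      have hx : ∀ i, b.repr (b.equivFun.symm x) i = x i := by
        intro i
        rw [← Module.Basis.equivFun_apply, b.equivFun.apply_symm_apply]
      exact (Stmt16Aux.key b hbracket f _ x hx).symm
  refine ⟨?_, ?_, ?_⟩
  · rintro ⟨hf0, hf1⟩
    ext t
    rw [hmem t, Set.mem_singleton_iff]
    constructor
    · rintro ⟨x, rfl⟩
      funext q
      rcases Stmt16Aux.fin_cases6 q with rfl | rfl | rfl | rfl | ⟨h4, he⟩ | ⟨h5, ho⟩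
      · rw [Stmt16Aux.yy_0, hf1]; ring
      · rw [Stmt16Aux.yy_1]
      · rw [Stmt16Aux.yy_2, hf0, hf1]; ring
      · rw [Stmt16Aux.yy_3, hf0, hf1]; ring
      · rw [Stmt16Aux.yy_even _ h4 he, hf1]; ring
      · rw [Stmt16Aux.yy_odd _ h5 ho, hf1]; ring
    · rintro rfl
      refine ⟨0, ?_⟩
      funext q
      rcases Stmt16Aux.fin_cases6 q with rfl | rfl | rfl | rfl | ⟨h4, he⟩ | ⟨h5, ho⟩
      · rw [Stmt16Aux.yy_0]; simp
      · rw [Stmt16Aux.yy_1]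
      · rw [Stmt16Aux.yy_2]; simp
      · rw [Stmt16Aux.yy_3]; simp
      · rw [Stmt16Aux.yy_even _ h4 he]; simp
      · rw [Stmt16Aux.yy_odd _ h5 ho]; simp
  · rintro ⟨hf1, hf0⟩
    ext t
    rw [hmem t, Set.mem_setOf_eq]
    constructor
    · rintro ⟨x, rfl⟩
      refine ⟨?_, ?_, ?_⟩
      · rw [Stmt16Aux.yy_0, hf1]; ring
      · rw [Stmt16Aux.yy_1, hf1]
      · intro j hj
        by_cases he : j.val % 2 = 0
        · rw [Stmt16Aux.yy_even _ hj he, hf1]; ring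
        · rw [Stmt16Aux.yy_odd _ (by omega) (by omega), hf1]; ring
    · rintro ⟨ht0, ht1, htj⟩
      refine ⟨fun i => if i.val = 2 then (t 3 - f 3)/f 0
        else if i.val = 3 then (f 2 - t 2)/f 0 else 0, ?_⟩
      funext q
      rcases Stmt16Aux.fin_cases6 q with rfl | rfl | rfl | rfl | ⟨h4, he⟩ | ⟨h5, ho⟩
      · rw [Stmt16Aux.yy_0, hf1, ht0]; ring
      · rw [Stmt16Aux.yy_1, hf1, ht1]
      · rw [Stmt16Aux.yy_2, hf1]
        simp only [Fin.val_mk]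
        norm_num
        field_simp
        ring
      · rw [Stmt16Aux.yy_3, hf1]
        simp only [Fin.val_mk]
        norm_num
        field_simp
        ring
      · rw [Stmt16Aux.yy_even _ h4 he, hf1, htj q h4]; ring
      · rw [Stmt16Aux.yy_odd _ h5 ho, hf1, htj q (by omega)]; ring
  · intro hf1
    ext t
    rw [hmem t, Set.mem_setOf_eq]
    constructor
    · rintro ⟨x, rfl⟩
      constructor
      · rw [Stmt16Aux.yy_1]
      · rw [Stmt16Aux.yy_0, Stmt16Aux.yy_1, Stmt16Aux.yy_3]; ring
    · rintro ⟨ht1, hinv⟩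
      rw [ht1] at hinv
      refine ⟨fun i => if i.val = 0 then (f 2 - t 2)/f 1
        else if i.val = 2 then (t 0 - f 0)/f 1
        else if h : 4 ≤ i.val ∧ i.val % 2 = 0 then
          (t ⟨i.val+1, by have := i.isLt; omega⟩ - f ⟨i.val+1, by have := i.isLt; omega⟩)/f 1
        else if h' : 5 ≤ i.val ∧ i.val % 2 = 1 then
          (f ⟨i.val-1, by have := i.isLt; omega⟩ - t ⟨i.val-1, by have := i.isLt; omega⟩)/f 1
        else 0, ?_⟩
      funext q
      rcases Stmt16Aux.fin_cases6 q with rfl | rfl | rfl | rfl | ⟨h4, he⟩ | ⟨h5, ho⟩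
      · rw [Stmt16Aux.yy_0]
        simp only [Fin.val_mk]
        norm_num
        field_simp
        ring
      · rw [Stmt16Aux.yy_1, ht1]
      · rw [Stmt16Aux.yy_2]
        simp only [Fin.val_mk]
        norm_num
        field_simp
        ring
      · rw [Stmt16Aux.yy_3]
        simp only [Fin.val_mk]
        norm_num
        field_simp
        linear_combination (-1 : ℝ) * hinv
      · rw [Stmt16Aux.yy_even _ h4 he]
        simp only [Fin.val_mk]
        rw [if_neg (by omega), if_neg (by omega), dif_neg (by omega), dif_pos ⟨by omega, by omega⟩]
        have hqq : (⟨q.val + 1 - 1, by have := q.isLt; omega⟩ : Fin (2*k+6)) = q :=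
          Fin.ext (by simp)
        rw [hqq]
        field_simp
        ring
      · rw [Stmt16Aux.yy_odd _ h5 ho]
        simp only [Fin.val_mk]
        rw [if_neg (by omega), if_neg (by omega), dif_pos ⟨by omega, by omega⟩]
        have hqq : (⟨q.val - 1 + 1, by have := q.isLt; omega⟩ : Fin (2*k+6)) = q :=
          Fin.ext (by simp; omega)
        rw [hqq]
        field_simp
        ring
end

section
/- Let k ≥ 0 and let V = { x ∈ ℝ^{6+2k} : x2 ≠ 0 }. Then V is open in ℝ^{6+2k}, and each of the two families of subsets L¹_{c1,c2} := { x ∈ V : x2 = c2, x1·e^{−x4/x2} = c1 } and L²_{c1,c2} := { x ∈ V : x2 = c2, x1² − 2·x2·x4 = c1 }, indexed by (c1,c2) ∈ ℝ × (ℝ∖{0}), is a partition of V into pairwise disjoint nonempty sets; moreover every L¹_{c1,c2} and every L²_{c1,c2} is homeomorphic to ℝ^{4+2k} (in particular connected and simply connected). These sets are precisely the maximal dimensional coadjoint orbits of G_{6+2k,1} and G_{6+2k,2}, respectively, which therefore form the leaves of a (4+2k)-dimensional foliation of V. -/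
private lemma fin_cast1 (k : ℕ) : (1 : Fin (2*k+6)) = ⟨1, by omega⟩ := by
  ext; show 1 % (2*k+6) = 1; exact Nat.mod_eq_of_lt (by omega)

private lemma fin_cast3 (k : ℕ) : (3 : Fin (2*k+6)) = ⟨3, by omega⟩ := by
  ext; show 3 % (2*k+6) = 3; exact Nat.mod_eq_of_lt (by omega)

private lemma fin_cast0 (k : ℕ) : (0 : Fin (2*k+6)) = ⟨0, by omega⟩ := rfl

/-- inverse map for the L1 leaf: free coordinates are indices 2..2k+5. -/
noncomputable def L1fwd (k : ℕ) (c1 c2 : ℝ) (y : Fin (2*k+4) → ℝ) : Fin (2*k+6) → ℝ :=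
  fun j => if (j : ℕ) = 0 then c1 * Real.exp (y ⟨1, by omega⟩ / c2)
    else if (j : ℕ) = 1 then c2
    else y ⟨(j : ℕ) - 2, by have := j.isLt; omega⟩

/-- projection for the L1 leaf. -/
def proj1 (k : ℕ) (x : Fin (2*k+6) → ℝ) : Fin (2*k+4) → ℝ :=
  fun i => x ⟨(i : ℕ) + 2, by have := i.isLt; omega⟩

/-- inverse map for the L2 leaf: free coordinates are indices 0,2,4..2k+5. -/
noncomputable def L2fwd (k : ℕ) (c1 c2 : ℝ) (y : Fin (2*k+4) → ℝ) : Fin (2*k+6) → ℝ :=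
  fun j => if (j : ℕ) = 0 then y ⟨0, by omega⟩
    else if (j : ℕ) = 1 then c2
    else if (j : ℕ) = 2 then y ⟨1, by omega⟩
    else if (j : ℕ) = 3 then ((y ⟨0, by omega⟩)^2 - c1) / (2*c2)
    else y ⟨(j : ℕ) - 2, by have := j.isLt; omega⟩

/-- projection for the L2 leaf. -/
def proj2 (k : ℕ) (x : Fin (2*k+6) → ℝ) : Fin (2*k+4) → ℝ :=
  fun i => if (i : ℕ) = 0 then x ⟨0, by omega⟩
    else if (i : ℕ) = 1 then x ⟨2, by omega⟩
    else x ⟨(i : ℕ) + 2, by have := i.isLt; omega⟩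

private lemma mem_L1fwd (k : ℕ) (c1 c2 : ℝ) (hc2 : c2 ≠ 0) (y : Fin (2*k+4) → ℝ) :
    (L1fwd k c1 c2 y) 1 = c2 ∧
    (L1fwd k c1 c2 y) 0 * Real.exp (-(L1fwd k c1 c2 y 3) / (L1fwd k c1 c2 y 1)) = c1 := by
  rw [fin_cast0, fin_cast1, fin_cast3]
  simp only [L1fwd]
  norm_num
  rw [neg_div, Real.exp_neg, mul_assoc, mul_inv_cancel₀ (Real.exp_ne_zero _), mul_one]

private lemma mem_L2fwd (k : ℕ) (c1 c2 : ℝ) (hc2 : c2 ≠ 0) (y : Fin (2*k+4) → ℝ) :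
    (L2fwd k c1 c2 y) 1 = c2 ∧
    ((L2fwd k c1 c2 y) 0)^2 - 2 * (L2fwd k c1 c2 y 1) * (L2fwd k c1 c2 y 3) = c1 := by
  rw [fin_cast0, fin_cast1, fin_cast3]
  simp only [L2fwd]
  norm_num
  field_simp
  ring

/-- each L1 leaf is homeomorphic to ℝ^{2k+4} -/
noncomputable def homeo1 (k : ℕ) (c1 c2 : ℝ) (hc2 : c2 ≠ 0) :
    {x : Fin (2*k+6) → ℝ | x 1 = c2 ∧ x 0 * Real.exp (-(x 3) / x 1) = c1}
      ≃ₜ (Fin (2*k+4) → ℝ) where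
  toFun x := proj1 k x.1
  invFun y := ⟨L1fwd k c1 c2 y, mem_L1fwd k c1 c2 hc2 y⟩
  left_inv := by
    rintro ⟨x, hx1, hx2⟩
    have hx1' : x ⟨1, by omega⟩ = c2 := by rw [← fin_cast1 k]; exact hx1
    have hx2' : x ⟨0, by omega⟩ * Real.exp (-(x ⟨3, by omega⟩) / c2) = c1 := by
      rw [fin_cast0 k, fin_cast1 k, fin_cast3 k] at hx2
      rw [hx1'] at hx2; exact hx2
    apply Subtype.ext
    funext j
    rcases j with ⟨j, hj⟩
    simp only [L1fwd, proj1]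
    by_cases h0 : j = 0
    · rw [if_pos h0]
      subst h0
      rw [← hx2', mul_assoc, ← Real.exp_add, neg_div, neg_add_cancel, Real.exp_zero, mul_one]
    rw [if_neg h0]
    by_cases h1 : j = 1
    · rw [if_pos h1]; subst h1; exact hx1'.symm
    rw [if_neg h1]
    exact congrArg x (Fin.ext (by show j - 2 + 2 = j; omega))
  right_inv := by
    intro y
    funext i
    rcases i with ⟨i, hi⟩
    simp only [L1fwd, proj1]
    rw [if_neg (by show ¬(i + 2 = 0); omega), if_neg (by show ¬(i + 2 = 1); omega)]
    exact congrArg y (Fin.ext (by show i + 2 - 2 = i; omega))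
  continuous_toFun := by
    show Continuous fun x : {x : Fin (2*k+6) → ℝ | x 1 = c2 ∧
      x 0 * Real.exp (-(x 3) / x 1) = c1} => proj1 k x.1
    exact continuous_pi fun i => (continuous_apply _).comp continuous_subtype_val
  continuous_invFun := by
    apply Continuous.subtype_mk
    apply continuous_pi
    intro j
    by_cases h0 : (j : ℕ) = 0
    · simp only [L1fwd, if_pos h0]; fun_prop
    by_cases h1 : (j : ℕ) = 1
    · simp only [L1fwd, if_neg h0, if_pos h1]; exact continuous_const
    · simp only [L1fwd, if_neg h0, if_neg h1]; exact continuous_apply _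

/-- each L2 leaf is homeomorphic to ℝ^{2k+4} -/
noncomputable def homeo2 (k : ℕ) (c1 c2 : ℝ) (hc2 : c2 ≠ 0) :
    {x : Fin (2*k+6) → ℝ | x 1 = c2 ∧ (x 0)^2 - 2 * x 1 * x 3 = c1}
      ≃ₜ (Fin (2*k+4) → ℝ) where
  toFun x := proj2 k x.1
  invFun y := ⟨L2fwd k c1 c2 y, mem_L2fwd k c1 c2 hc2 y⟩
  left_inv := by
    rintro ⟨x, hx1, hx2⟩
    have hx1' : x ⟨1, by omega⟩ = c2 := by rw [← fin_cast1 k]; exact hx1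
    have hx2' : (x ⟨0, by omega⟩)^2 - 2 * c2 * x ⟨3, by omega⟩ = c1 := by
      rw [fin_cast0 k, fin_cast1 k, fin_cast3 k] at hx2
      rw [hx1'] at hx2; exact hx2
    apply Subtype.ext
    funext j
    rcases j with ⟨j, hj⟩
    simp only [L2fwd, proj2]
    by_cases h0 : j = 0
    · rw [if_pos h0]; subst h0; norm_num
    rw [if_neg h0]
    by_cases h1 : j = 1
    · rw [if_pos h1]; subst h1; exact hx1'.symm
    rw [if_neg h1]
    by_cases h2 : j = 2
    · rw [if_pos h2]; subst h2; norm_num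
    rw [if_neg h2]
    by_cases h3 : j = 3
    · rw [if_pos h3]; subst h3
      rw [if_pos trivial, div_eq_iff (mul_ne_zero two_ne_zero hc2)]
      linarith [hx2']
    rw [if_neg h3]
    rw [if_neg (by show ¬(j - 2 = 0); omega), if_neg (by show ¬(j - 2 = 1); omega)]
    exact congrArg x (Fin.ext (by show j - 2 + 2 = j; omega))
  right_inv := by
    intro y
    funext i
    rcases i with ⟨i, hi⟩
    simp only [L2fwd, proj2]
    by_cases h0 : i = 0
    · rw [if_pos h0]; subst h0; norm_num
    rw [if_neg h0]
    by_cases h1 : i = 1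
    · rw [if_pos h1]; subst h1; norm_num
    rw [if_neg h1]
    rw [if_neg (by show ¬(i + 2 = 0); omega), if_neg (by show ¬(i + 2 = 1); omega),
      if_neg (by show ¬(i + 2 = 2); omega), if_neg (by show ¬(i + 2 = 3); omega)]
    exact congrArg y (Fin.ext (by show i + 2 - 2 = i; omega))
  continuous_toFun := by
    show Continuous fun x : {x : Fin (2*k+6) → ℝ | x 1 = c2 ∧
      (x 0)^2 - 2 * x 1 * x 3 = c1} => proj2 k x.1
    apply continuous_pi
    intro i
    by_cases h0 : (i : ℕ) = 0
    · simp only [proj2, if_pos h0]; exact (continuous_apply _).comp continuous_subtype_val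
    by_cases h1 : (i : ℕ) = 1
    · simp only [proj2, if_neg h0, if_pos h1]
      exact (continuous_apply _).comp continuous_subtype_val
    · simp only [proj2, if_neg h0, if_neg h1]
      exact (continuous_apply _).comp continuous_subtype_val
  continuous_invFun := by
    apply Continuous.subtype_mk
    apply continuous_pi
    intro j
    by_cases h0 : (j : ℕ) = 0
    · simp only [L2fwd, if_pos h0]; exact continuous_apply _
    by_cases h1 : (j : ℕ) = 1
    · simp only [L2fwd, if_neg h0, if_pos h1]; exact continuous_const
    by_cases h2 : (j : ℕ) = 2
    · simp only [L2fwd, if_neg h0, if_neg h1, if_pos h2]; exact continuous_apply _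
    by_cases h3 : (j : ℕ) = 3
    · simp only [L2fwd, if_neg h0, if_neg h1, if_neg h2, if_pos h3]; fun_prop
    · simp only [L2fwd, if_neg h0, if_neg h1, if_neg h2, if_neg h3]; exact continuous_apply _

/-- `V = {x ∈ ℝ^{6+2k} : x2 ≠ 0}` is open, each of the two families
`L¹_{c1,c2} = {x ∈ V : x2 = c2, x1·e^{−x4/x2} = c1}` and
`L²_{c1,c2} = {x ∈ V : x2 = c2, x1² − 2x2x4 = c1}` (for `(c1,c2) ∈ ℝ × (ℝ∖{0})`) is a
partition of `V` into pairwise disjoint nonempty sets, and each `L¹_{c1,c2}` and each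
`L²_{c1,c2}` is homeomorphic to `ℝ^{4+2k}` (the leaves of the maximal-dimensional
coadjoint-orbit foliations of `G_{6+2k,1}` and `G_{6+2k,2}`). -/
theorem stmt_17 (k : ℕ) (V : Set (Fin (2*k+6) → ℝ)) (hV : V = { x | x 1 ≠ 0 })
    (L1 L2 : ℝ → ℝ → Set (Fin (2*k+6) → ℝ))
    (hL1 : ∀ c1 c2 : ℝ, L1 c1 c2 =
      { x ∈ V | x 1 = c2 ∧ x 0 * Real.exp (-(x 3) / x 1) = c1 })
    (hL2 : ∀ c1 c2 : ℝ, L2 c1 c2 =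
      { x ∈ V | x 1 = c2 ∧ (x 0)^2 - 2 * x 1 * x 3 = c1 }) :
    IsOpen V ∧
    -- the family L¹ is a partition of V into pairwise disjoint nonempty sets
    (∀ c1 c2 : ℝ, c2 ≠ 0 → (L1 c1 c2).Nonempty) ∧
    (∀ c1 c2 c1' c2' : ℝ, c2 ≠ 0 → c2' ≠ 0 → (c1, c2) ≠ (c1', c2') →
      Disjoint (L1 c1 c2) (L1 c1' c2')) ∧
    (∀ x ∈ V, ∃ c1 c2 : ℝ, c2 ≠ 0 ∧ x ∈ L1 c1 c2) ∧
    -- the family L² is a partition of V into pairwise disjoint nonempty sets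
    (∀ c1 c2 : ℝ, c2 ≠ 0 → (L2 c1 c2).Nonempty) ∧
    (∀ c1 c2 c1' c2' : ℝ, c2 ≠ 0 → c2' ≠ 0 → (c1, c2) ≠ (c1', c2') →
      Disjoint (L2 c1 c2) (L2 c1' c2')) ∧
    (∀ x ∈ V, ∃ c1 c2 : ℝ, c2 ≠ 0 ∧ x ∈ L2 c1 c2) ∧
    -- every leaf is homeomorphic to ℝ^{4+2k}
    (∀ c1 c2 : ℝ, c2 ≠ 0 → Nonempty (↥(L1 c1 c2) ≃ₜ (Fin (2*k+4) → ℝ))) ∧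
    (∀ c1 c2 : ℝ, c2 ≠ 0 → Nonempty (↥(L2 c1 c2) ≃ₜ (Fin (2*k+4) → ℝ))) := by
  subst hV
  have hL1set : ∀ c1 c2 : ℝ, c2 ≠ 0 → L1 c1 c2 =
      {x : Fin (2*k+6) → ℝ | x 1 = c2 ∧ x 0 * Real.exp (-(x 3) / x 1) = c1} := by
    intro c1 c2 hc2
    rw [hL1]
    ext x
    constructor
    · rintro ⟨_, h⟩; exact h
    · rintro ⟨h1, h2⟩; exact ⟨by rw [Set.mem_setOf_eq, h1]; exact hc2, h1, h2⟩
  have hL2set : ∀ c1 c2 : ℝ, c2 ≠ 0 → L2 c1 c2 =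
      {x : Fin (2*k+6) → ℝ | x 1 = c2 ∧ (x 0)^2 - 2 * x 1 * x 3 = c1} := by
    intro c1 c2 hc2
    rw [hL2]
    ext x
    constructor
    · rintro ⟨_, h⟩; exact h
    · rintro ⟨h1, h2⟩; exact ⟨by rw [Set.mem_setOf_eq, h1]; exact hc2, h1, h2⟩
  refine ⟨?_, ?_, ?_, ?_, ?_, ?_, ?_, ?_, ?_⟩
  · have h : Continuous (fun x : Fin (2*k+6) → ℝ => x 1) := continuous_apply 1
    exact IsOpen.preimage h isOpen_ne
  · intro c1 c2 hc2
    rw [hL1set c1 c2 hc2]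
    exact ⟨L1fwd k c1 c2 0, mem_L1fwd k c1 c2 hc2 0⟩
  · intro c1 c2 c1' c2' hc2 hc2' hne
    rw [Set.disjoint_left]
    intro x hx hx'
    rw [hL1set c1 c2 hc2] at hx
    rw [hL1set c1' c2' hc2'] at hx'
    exact hne (by rw [Prod.ext_iff]; exact ⟨by rw [← hx.2, ← hx'.2], by rw [← hx.1, ← hx'.1]⟩)
  · intro x hx
    exact ⟨x 0 * Real.exp (-(x 3) / x 1), x 1, hx,
      by rw [hL1set _ _ hx]; exact ⟨rfl, rfl⟩⟩
  · intro c1 c2 hc2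
    rw [hL2set c1 c2 hc2]
    exact ⟨L2fwd k c1 c2 0, mem_L2fwd k c1 c2 hc2 0⟩
  · intro c1 c2 c1' c2' hc2 hc2' hne
    rw [Set.disjoint_left]
    intro x hx hx'
    rw [hL2set c1 c2 hc2] at hx
    rw [hL2set c1' c2' hc2'] at hx'
    exact hne (by rw [Prod.ext_iff]; exact ⟨by rw [← hx.2, ← hx'.2], by rw [← hx.1, ← hx'.1]⟩)
  · intro x hx
    exact ⟨(x 0)^2 - 2 * x 1 * x 3, x 1, hx,
      by rw [hL2set _ _ hx]; exact ⟨rfl, rfl⟩⟩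
  · intro c1 c2 hc2
    exact ⟨(Homeomorph.setCongr (hL1set c1 c2 hc2)).trans (homeo1 k c1 c2 hc2)⟩
  · intro c1 c2 hc2
    exact ⟨(Homeomorph.setCongr (hL2set c1 c2 hc2)).trans (homeo2 k c1 c2 hc2)⟩
end
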